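/- arXiv:1903.11170 — 2 statements merged into one kernel-verified Lean document; each statement's English description precedes it below -/
import Mathlib

section
/- The only minimal braces of order at most eight are K₂, C₄, K_{3,3} and the cube B₈. -/
namespace MinimalBraces

open SimpleGraph

/-- The degree of a vertex, via the cardinality of its neighbor set. -/
noncomputable def mdeg {V : Type*} (G : SimpleGraph V) (v : V) : ℕ :=
  (G.neighborSet v).ncard

/-- `G` has a perfect matching. -/
def HasPerfectMatching {V : Type*} (G : SimpleGraph V) : Prop :=
  ∃ M : G.Subgraph, M.IsPerfectMatching

/-- A connected graph with at least one edge is matching covered if every edge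
lies in some perfect matching. -/
def IsMatchingCovered {V : Type*} (G : SimpleGraph V) : Prop :=
  G.Connected ∧ G.edgeSet.Nonempty ∧
    ∀ e ∈ G.edgeSet, ∃ M : G.Subgraph, M.IsPerfectMatching ∧ e ∈ M.edgeSet

/-- `A`, `B` are the color classes of a bipartition of `G`. -/
def IsBipartition {V : Type*} (G : SimpleGraph V) (A B : Set V) : Prop :=
  A ∪ B = Set.univ ∧ A ∩ B = ∅ ∧
    ∀ u v : V, G.Adj u v → (u ∈ A ∧ v ∈ B) ∨ (u ∈ B ∧ v ∈ A)

/-- `G` is bipartite (admits a bipartition into two color classes). -/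
def IsBipartite' {V : Type*} (G : SimpleGraph V) : Prop :=
  ∃ A B : Set V, IsBipartition G A B

/-- The cut `∂(X)`: the set of edges of `G` with exactly one end in `X`. -/
def cutEdges {V : Type*} (G : SimpleGraph V) (X : Set V) : Set (Sym2 V) :=
  {e | e ∈ G.edgeSet ∧ ∃ u v : V, e = s(u, v) ∧ u ∈ X ∧ v ∉ X}

/-- The cut `∂(X)` is tight: every perfect matching has exactly one edge in it. -/
def IsTightCut {V : Type*} (G : SimpleGraph V) (X : Set V) : Prop :=
  ∀ M : G.Subgraph, M.IsPerfectMatching → (M.edgeSet ∩ cutEdges G X).ncard = 1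

/-- A shore is trivial if it or its complement is a singleton. -/
def IsTrivialShore {V : Type*} (X : Set V) : Prop :=
  (∃ v, X = ({v} : Set V)) ∨ (∃ v, Xᶜ = ({v} : Set V))

/-- A brace: a bipartite matching covered graph free of nontrivial tight cuts. -/
def IsBrace {V : Type*} (G : SimpleGraph V) : Prop :=
  IsBipartite' G ∧ IsMatchingCovered G ∧ ∀ X : Set V, IsTightCut G X → IsTrivialShore X

/-- A minimal brace: deleting any edge results in a graph that is not a brace. -/
def IsMinimalBrace {V : Type*} (G : SimpleGraph V) : Prop :=
  IsBrace G ∧ ∀ e ∈ G.edgeSet, ¬ IsBrace (G.deleteEdges {e})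

/-- The neighborhood of a set of vertices. -/
def setNbhd {V : Type*} (G : SimpleGraph V) (Z : Set V) : Set V :=
  {v | ∃ z ∈ Z, G.Adj z v}

/-- An edge of a (simple) brace is superfluous if deleting it leaves a brace. -/
def IsSuperfluous {V : Type*} (G : SimpleGraph V) (e : Sym2 V) : Prop :=
  e ∈ G.edgeSet ∧ IsBrace (G.deleteEdges {e})

/-- A set of edges of `G` forming a matching. -/
def IsMatchingSet {V : Type*} (G : SimpleGraph V) (M : Set (Sym2 V)) : Prop :=
  M ⊆ G.edgeSet ∧ ∀ e₁ ∈ M, ∀ e₂ ∈ M, e₁ ≠ e₂ → ∀ v : V, ¬ (v ∈ e₁ ∧ v ∈ e₂)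

/-- `G` is 2-extendable: it has a matching of size two, and every matching of
size two extends to a perfect matching. -/
def IsTwoExtendable {V : Type*} (G : SimpleGraph V) : Prop :=
  (∃ M : Set (Sym2 V), IsMatchingSet G M ∧ M.ncard = 2) ∧
  ∀ M : Set (Sym2 V), IsMatchingSet G M → M.ncard = 2 →
    ∃ N : G.Subgraph, N.IsPerfectMatching ∧ M ⊆ N.edgeSet

/-- `G` is 3-connected: more than three vertices, and removing any at most two
vertices leaves a connected graph. -/
def IsThreeConnected {V : Type*} [Fintype V] (G : SimpleGraph V) : Prop :=
  4 ≤ Fintype.card V ∧ ∀ S : Set V, S.ncard ≤ 2 → (G.induce Sᶜ).Connected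

/-! ### Retracts (bicontraction of all degree-two vertices) -/

/-- `f : V → W` realizes `H` as the retract of `G`: the fibers of `f` are exactly
the closed neighborhoods of the degree-two vertices of `G` (and singletons
otherwise), and adjacency in `H` is induced by `G`. -/
def IsRetractMap {V W : Type*} (G : SimpleGraph V) (H : SimpleGraph W) (f : V → W) : Prop :=
  Function.Surjective f ∧
  (∀ u v : V, f u = f v ↔ (u = v ∨ ∃ v₀ : V, mdeg G v₀ = 2 ∧
      u ∈ insert v₀ (G.neighborSet v₀) ∧ v ∈ insert v₀ (G.neighborSet v₀))) ∧
  (∀ x y : W, H.Adj x y ↔ (x ≠ y ∧ ∃ u v : V, G.Adj u v ∧ f u = x ∧ f v = y))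

/-- The retract obtained via `f` is a simple graph, i.e. no two distinct edges of `G`
become parallel after the bicontractions. -/
def RetractMapSimple {V W : Type*} (G : SimpleGraph V) (f : V → W) : Prop :=
  ∀ e₁ ∈ G.edgeSet, ∀ e₂ ∈ G.edgeSet,
    Sym2.map f e₁ = Sym2.map f e₂ → ¬ (Sym2.map f e₁).IsDiag → e₁ = e₂

/-- An edge `e` of a brace `G` is thin if the retract of `G − e` is also a brace. -/
def IsThinEdge {V : Type*} (G : SimpleGraph V) (e : Sym2 V) : Prop :=
  e ∈ G.edgeSet ∧ ∃ (sH : Set V) (H : SimpleGraph sH) (f : V → sH),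
    IsRetractMap (G.deleteEdges {e}) H f ∧ IsBrace H

/-- `e` is a strictly thin edge of `G`, with retract `H` realized by the map `f`:
the retract of `G − e` is a brace and is simple. -/
def IsStrictlyThinVia {V W : Type*} (G : SimpleGraph V) (e : Sym2 V)
    (H : SimpleGraph W) (f : V → W) : Prop :=
  e ∈ G.edgeSet ∧ IsRetractMap (G.deleteEdges {e}) H f ∧ IsBrace H ∧
    RetractMapSimple (G.deleteEdges {e}) f

/-- `e` is a strictly thin edge of the simple brace `G`. -/
def IsStrictlyThinEdge {V : Type*} (G : SimpleGraph V) (e : Sym2 V) : Prop :=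
  ∃ (sH : Set V) (H : SimpleGraph sH) (f : V → sH), IsStrictlyThinVia G e H f

/-- The index of a (strictly thin) edge `e`, computed from `G' = G − e`:
the number of vertices of degree two in `G'`. -/
noncomputable def thinIndex {V : Type*} (G' : SimpleGraph V) : ℕ :=
  {v : V | mdeg G' v = 2}.ncard

/-- An inner vertex of `G' = G − e`: a vertex of degree two. -/
def IsInnerVertex {V : Type*} (G' : SimpleGraph V) (v : V) : Prop := mdeg G' v = 2

/-- An outer vertex of `G' = G − e`: a neighbor of an inner vertex. -/
def IsOuterVertex {V : Type*} (G' : SimpleGraph V) (v : V) : Prop :=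
  ∃ u : V, IsInnerVertex G' u ∧ G'.Adj u v

/-- `(e, F)` is a minimality-preserving pair of the minimal brace `G`, where the
retract `H` of `G − e` is realized by `f`: the edge `e` is strictly thin and
`H − F` is a minimal brace. -/
def IsMPPVia {V W : Type*} (G : SimpleGraph V) (H : SimpleGraph W) (f : V → W)
    (e : Sym2 V) (F : Set (Sym2 W)) : Prop :=
  IsMinimalBrace G ∧ IsStrictlyThinVia G e H f ∧ F ⊆ H.edgeSet ∧
    IsMinimalBrace (H.deleteEdges F)

/-! ### Stable extensions -/

/-- The `S`-extension of `J` with respect to `S = {a₁, a₂, b₁, b₂}`: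
two new vertices `a₀ = inr 0` and `b₀ = inr 1` and five new edges
`a₀b₁, a₀b₂, b₀a₁, b₀a₂, a₀b₀`. -/
def stableExtGraph {U : Type*} (J : SimpleGraph U) (a₁ a₂ b₁ b₂ : U) :
    SimpleGraph (U ⊕ Fin 2) :=
  SimpleGraph.fromRel (fun x y =>
    match x, y with
    | Sum.inl u, Sum.inl v => J.Adj u v
    | Sum.inl u, Sum.inr k => (k = 0 ∧ (u = b₁ ∨ u = b₂)) ∨ (k = 1 ∧ (u = a₁ ∨ u = a₂))
    | Sum.inr j, Sum.inr k => j ≠ k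
    | Sum.inr _, Sum.inl _ => False)

/-- `G` is (isomorphic to) a stable-extension of the connected bipartite graph `J`,
with respect to some stable set meeting each color class in exactly two vertices. -/
def IsStableExtensionOf {V U : Type*} (G : SimpleGraph V) (J : SimpleGraph U) : Prop :=
  ∃ (A B : Set U) (a₁ a₂ b₁ b₂ : U), J.Connected ∧ IsBipartition J A B ∧
    a₁ ∈ A ∧ a₂ ∈ A ∧ b₁ ∈ B ∧ b₂ ∈ B ∧ a₁ ≠ a₂ ∧ b₁ ≠ b₂ ∧
    ¬ J.Adj a₁ b₁ ∧ ¬ J.Adj a₁ b₂ ∧ ¬ J.Adj a₂ b₁ ∧ ¬ J.Adj a₂ b₂ ∧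
    Nonempty (G ≃g stableExtGraph J a₁ a₂ b₁ b₂)

/-! ### Concrete families of graphs -/

/-- The complete graph on two vertices. -/
def K2graph : SimpleGraph (Fin 2) := ⊤

/-- The cycle graph `Cₙ` on `ZMod n`. -/
def cycleGraph (n : ℕ) : SimpleGraph (ZMod n) :=
  SimpleGraph.fromRel (fun x y => x - y = 1)

/-- The Möbius ladder `M_{2m}`: the cycle `C_{2m}` plus the long chords. -/
def mobiusLadder (m : ℕ) : SimpleGraph (ZMod (2 * m)) :=
  SimpleGraph.fromRel (fun x y => x - y = 1 ∨ x - y = (m : ZMod (2 * m)))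

/-- The prism (ladder) over the cycle `Cₘ`. -/
def prismGraph (m : ℕ) : SimpleGraph (ZMod m × Bool) :=
  SimpleGraph.fromRel (fun p q => (p.2 = q.2 ∧ p.1 - q.1 = 1) ∨ (p.1 = q.1 ∧ p.2 ≠ q.2))

/-- The biwheel `B_{2m+2}`: the cycle `C_{2m}` plus two nonadjacent hubs, one joined to
all even rim vertices, the other to all odd rim vertices. `B_{2n} = biwheel (n-1)`. -/
def biwheel (m : ℕ) : SimpleGraph (ZMod (2 * m) ⊕ Fin 2) :=
  SimpleGraph.fromRel (fun x y =>
    match x, y with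
    | Sum.inl a, Sum.inl b => a - b = 1
    | Sum.inl a, Sum.inr k => (k = 0 ∧ Even a) ∨ (k = 1 ∧ ¬ Even a)
    | Sum.inr _, _ => False)

/-- The complete bipartite graph `K_{3,3}`. -/
def K33graph : SimpleGraph (Fin 3 ⊕ Fin 3) := completeBipartiteGraph (Fin 3) (Fin 3)

/-- The family `𝒢` : `K₂`, `C₄` and the McCuaig braces
(prisms, Möbius ladders and biwheels). -/
def InMcCuaigFamily {V : Type*} (G : SimpleGraph V) : Prop :=
  Nonempty (G ≃g K2graph) ∨ Nonempty (G ≃g cycleGraph 4) ∨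
  (∃ m : ℕ, 3 ≤ m ∧ Nonempty (G ≃g prismGraph m)) ∨
  (∃ m : ℕ, 3 ≤ m ∧ Nonempty (G ≃g mobiusLadder m)) ∨
  (∃ m : ℕ, 3 ≤ m ∧ Nonempty (G ≃g biwheel m))

/-- The graph `Q_{2n}` (for `n ≥ 5`): color classes `{0, …, n-1}` on each side; the
hubs `0, 1` of each side are joined to all vertices `2, …, n-1` of the other side,
and the vertices `2, …, n-1` form a perfect matching between the two sides.
`Qgraph 5 = Q₁₀`, `Qgraph 6 = Q₁₂`, and `Qgraph n = Q_{2n}` of the family `𝒬` for `n ≥ 6`. -/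
def Qgraph (n : ℕ) : SimpleGraph (Fin n ⊕ Fin n) :=
  SimpleGraph.fromRel (fun x y =>
    match x, y with
    | Sum.inl i, Sum.inr j =>
        ((i : ℕ) < 2 ∧ 2 ≤ (j : ℕ)) ∨ ((j : ℕ) < 2 ∧ 2 ≤ (i : ℕ)) ∨
          ((i : ℕ) = (j : ℕ) ∧ 2 ≤ (i : ℕ))
    | _, _ => False)

/-- `Q₁₀⁺`: the graph `Q₁₀` plus an edge joining two noncubic vertices that lie in
distinct color classes (and in distinct `K_{3,3}`-pieces of the tight cut
decomposition of `Q₁₀`). -/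
def Q10plus : SimpleGraph (Fin 5 ⊕ Fin 5) :=
  Qgraph 5 ⊔ SimpleGraph.fromEdgeSet {s((Sum.inl 0 : Fin 5 ⊕ Fin 5), (Sum.inr 0 : Fin 5 ⊕ Fin 5))}

/-- The bipartite complement of `G` with respect to the color classes `A`, `B`. -/
def bipComplement {V : Type*} (G : SimpleGraph V) (A B : Set V) : SimpleGraph V :=
  SimpleGraph.fromRel (fun u v => u ∈ A ∧ v ∈ B ∧ ¬ G.Adj u v)

/-! ### Bi-splitting and expansion operations -/

/-- `G` is obtained from `H` by bi-splitting the noncubic vertex `b` into `b₁ a₀ b₂`,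
as witnessed by the projection `f : W → V` (which sends `b₁, a₀, b₂` to `b` and is a
bijection elsewhere). The edges of `H` at `b` are distributed between `b₁` and `b₂`,
each receiving at least two, and `a₀` is a new vertex adjacent precisely to `b₁, b₂`. -/
def IsBisplitMap {V W : Type*} (H : SimpleGraph V) (b : V) (G : SimpleGraph W)
    (b₁ a₀ b₂ : W) (f : W → V) : Prop :=
  4 ≤ mdeg H b ∧
  Function.Surjective f ∧ f b₁ = b ∧ f a₀ = b ∧ f b₂ = b ∧
  b₁ ≠ b₂ ∧ a₀ ≠ b₁ ∧ a₀ ≠ b₂ ∧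
  (∀ u v : W, f u = f v → u = v ∨
      (u ∈ ({b₁, a₀, b₂} : Set W) ∧ v ∈ ({b₁, a₀, b₂} : Set W))) ∧
  G.neighborSet a₀ = {b₁, b₂} ∧
  3 ≤ mdeg G b₁ ∧ 3 ≤ mdeg G b₂ ∧ ¬ G.Adj b₁ b₂ ∧
  (∀ x : W, x ≠ a₀ → ¬ (G.Adj b₁ x ∧ G.Adj b₂ x)) ∧
  (∀ x y : V, H.Adj x y ↔ (x ≠ y ∧ ∃ u v : W, G.Adj u v ∧ f u = x ∧ f v = y))

/-- Expansion of index zero: adding an edge joining two nonadjacent vertices in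
distinct color classes. -/
def ExpansionZero {W V : Type*} (G : SimpleGraph W) (H : SimpleGraph V) : Prop :=
  ∃ (A B : Set V) (a b : V), IsBipartition H A B ∧ a ∈ A ∧ b ∈ B ∧ ¬ H.Adj a b ∧ a ≠ b ∧
    Nonempty (G ≃g (H ⊔ SimpleGraph.fromEdgeSet {s(a, b)}))

/-- Expansion of index one: `G = H{a → a₁b₀a₂} + b₀w`, where `a, w` are in the same
color class of `H` and `a` is noncubic. -/
def ExpansionOne {W V : Type*} (G : SimpleGraph W) (H : SimpleGraph V) : Prop :=
  ∃ (A B : Set V) (a w : V), IsBipartition H A B ∧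
    ((a ∈ A ∧ w ∈ A) ∨ (a ∈ B ∧ w ∈ B)) ∧ a ≠ w ∧ 4 ≤ mdeg H a ∧
    ∃ (G₁ : SimpleGraph W) (a₁ b₀ a₂ : W) (f : W → V) (w' : W),
      IsBisplitMap H a G₁ a₁ b₀ a₂ f ∧ f w' = w ∧
      G = G₁ ⊔ SimpleGraph.fromEdgeSet {s(b₀, w')}

/-- Expansion of index two: `G = H{a → a₁b₀a₂}{b → b₁a₀b₂} + a₀b₀`, where `a, b` are
noncubic vertices of `H` in distinct color classes. -/
def ExpansionTwo {W V : Type*} (G : SimpleGraph W) (H : SimpleGraph V) : Prop :=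
  ∃ (A B : Set V) (a b : V), IsBipartition H A B ∧ a ∈ A ∧ b ∈ B ∧
    4 ≤ mdeg H a ∧ 4 ≤ mdeg H b ∧
    ∃ (sm : Set W) (G₁ : SimpleGraph sm) (a₁ b₀ a₂ : sm) (g : sm → V),
      IsBisplitMap H a G₁ a₁ b₀ a₂ g ∧
      ∃ (b' : sm) (G₂ : SimpleGraph W) (b₁ a₀ b₂ : W) (f : W → sm) (b₀' : W),
        g b' = b ∧ IsBisplitMap G₁ b' G₂ b₁ a₀ b₂ f ∧ f b₀' = b₀ ∧
        G = G₂ ⊔ SimpleGraph.fromEdgeSet {s(a₀, b₀')}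

/-- `G` is obtained from `H` by an expansion operation (of index zero, one or two). -/
def IsExpansionOf {W V : Type*} (G : SimpleGraph W) (H : SimpleGraph V) : Prop :=
  ExpansionZero G H ∨ ExpansionOne G H ∨ ExpansionTwo G H

/-! ### Narrow minimality-preserving pairs -/

/-- The properties of `F` (viewed in `G − e` via the retract map `fm`) required by the
Main Theorem: (i) if `index(e) = 1` then some outer vertex `v` has `F ⊆ ∂(v)`;
(ii) if `index(e) = 2` then some adjacent outer vertices `u, w` have `F ⊆ ∂({u,w})`;
(iii) for each `f ∈ F`, an end of `f` is cubic iff it is an outer vertex. -/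
def NarrowProps {V W : Type*} (G : SimpleGraph V) (fm : V → W) (e : Sym2 V)
    (F : Set (Sym2 W)) : Prop :=
  (thinIndex (G.deleteEdges {e}) = 1 →
      ∃ v : V, IsOuterVertex (G.deleteEdges {e}) v ∧
        ∀ g ∈ (G.deleteEdges {e}).edgeSet, Sym2.map fm g ∈ F → v ∈ g) ∧
  (thinIndex (G.deleteEdges {e}) = 2 →
      ∃ u w : V, IsOuterVertex (G.deleteEdges {e}) u ∧ IsOuterVertex (G.deleteEdges {e}) w ∧
        (G.deleteEdges {e}).Adj u w ∧
        ∀ g ∈ (G.deleteEdges {e}).edgeSet, Sym2.map fm g ∈ F →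
          ((u ∈ g ∧ w ∉ g) ∨ (w ∈ g ∧ u ∉ g))) ∧
  (∀ g ∈ (G.deleteEdges {e}).edgeSet, Sym2.map fm g ∈ F →
      ∀ x : V, x ∈ g → (mdeg G x = 3 ↔ IsOuterVertex (G.deleteEdges {e}) x))

/-- A narrow minimality-preserving pair, as in the Main Theorem. -/
def IsNarrowMPP {V W : Type*} (G : SimpleGraph V) (H : SimpleGraph W) (fm : V → W)
    (e : Sym2 V) (F : Set (Sym2 W)) : Prop :=
  IsMPPVia G H fm e F ∧
  (F = ∅ ∨ NarrowProps G fm e F) ∧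
  F.ncard ≤ thinIndex (G.deleteEdges {e}) + 1 ∧
  (thinIndex (G.deleteEdges {e}) = 1 ∧ F.ncard = 2 →
    IsStableExtensionOf G (H.deleteEdges F))


/-! ### Auxiliary development -/




section PM
variable {V : Type*} {G : SimpleGraph V} {M : G.Subgraph}

noncomputable def pmFun (M : G.Subgraph) (hM : M.IsPerfectMatching) (v : V) : V :=
  (Subgraph.isPerfectMatching_iff.1 hM v).choose

variable (hM : M.IsPerfectMatching)

lemma pm_adj (v : V) : M.Adj v (pmFun M hM v) :=
  (Subgraph.isPerfectMatching_iff.1 hM v).choose_spec.1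

lemma pm_eq {v w : V} (h : M.Adj v w) : w = pmFun M hM v :=
  (Subgraph.isPerfectMatching_iff.1 hM v).choose_spec.2 w h ▸ rfl

lemma pm_invol (v : V) : pmFun M hM (pmFun M hM v) = v :=
  (pm_eq hM ((pm_adj hM v).symm)).symm

lemma pm_gadj (v : V) : G.Adj v (pmFun M hM v) := M.adj_sub (pm_adj hM v)

lemma pm_ne (v : V) : pmFun M hM v ≠ v := (pm_gadj hM v).ne'

lemma pm_inj {u v : V} (h : pmFun M hM u = pmFun M hM v) : u = v := by
  have h1 := pm_invol hM u
  rw [h, pm_invol hM v] at h1; exact h1.symm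

lemma pm_edge_mem (v : V) : s(v, pmFun M hM v) ∈ M.edgeSet := (pm_adj hM v)

end PM

/-- A finite set admitting a fixed-point-free involution has even cardinality. -/
lemma even_ncard_of_invol {V : Type*} (σ : V → V)
    (hinv : ∀ v, σ (σ v) = v) : ∀ (n : ℕ) (S : Set V), S.Finite →
    (∀ v ∈ S, σ v ∈ S) → (∀ v ∈ S, σ v ≠ v) → S.ncard = n → Even n := by
  intro n
  induction n using Nat.strong_induction_on with
  | _ n ih =>
    intro S hfin hcl hne hcard
    rcases Set.eq_empty_or_nonempty S with rfl | ⟨v, hv⟩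
    · rw [← hcard, Set.ncard_empty]; exact Even.zero
    · have hσv : σ v ∈ S := hcl v hv
      set S' := S \ {v, σ v} with hS'
      have hsub : S' ⊆ S := Set.diff_subset
      have hcl' : ∀ w ∈ S', σ w ∈ S' := by
        rintro w ⟨hwS, hw⟩
        simp only [Set.mem_insert_iff, Set.mem_singleton_iff] at hw
        push_neg at hw
        refine ⟨hcl w hwS, ?_⟩
        simp only [Set.mem_insert_iff, Set.mem_singleton_iff]
        push_neg
        constructor
        · intro h; exact hw.2 (by rw [← h, hinv])
        · intro h
          have : w = v := by have := congrArg σ h; rwa [hinv, hinv] at this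
          exact hw.1 this
      have hpair : ({v, σ v} : Set V) ⊆ S := by
        rintro x (rfl | rfl); exacts [hv, hσv]
      have h2 : ({v, σ v} : Set V).ncard = 2 := Set.ncard_pair (Ne.symm (hne v hv))
      have hdiff := Set.ncard_diff_add_ncard_of_subset hpair hfin
      rw [h2, ← hS'] at hdiff
      have hcards : S'.ncard + 2 = S.ncard := hdiff
      have hn' : S'.ncard < n := by omega
      have hev := ih S'.ncard hn' S' (hfin.subset hsub) hcl'
        (fun w hw => hne w (hsub hw)) rfl
      have : n = S'.ncard + 2 := by omega
      rw [this]
      exact hev.add (Even.add_self 1)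

section Cuts
variable {V : Type*} {G : SimpleGraph V}

lemma ncard_ne_one_of_two {α : Type*} {S : Set α} {e₁ e₂ : α}
    (h1 : e₁ ∈ S) (h2 : e₂ ∈ S) (hne : e₁ ≠ e₂) : S.ncard ≠ 1 := by
  intro h
  obtain ⟨a, rfl⟩ := Set.ncard_eq_one.1 h
  rw [Set.mem_singleton_iff] at h1 h2
  exact hne (h1.trans h2.symm)

lemma cutEdges_compl (X : Set V) : cutEdges G Xᶜ = cutEdges G X := by
  ext e
  constructor
  · rintro ⟨hG, u, v, rfl, hu, hv⟩
    exact ⟨hG, v, u, Sym2.eq_swap, not_not.1 (fun h => hv h), hu⟩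
  · rintro ⟨hG, u, v, rfl, hu, hv⟩
    exact ⟨hG, v, u, Sym2.eq_swap, hv, fun h => h hu⟩

lemma pm_cut_ncard [Fintype V] {M : G.Subgraph}
    (hM : M.IsPerfectMatching) (X : Set V) :
    ∃ k, Even k ∧ X.ncard = k + (M.edgeSet ∩ cutEdges G X).ncard := by
  classical
  set m := pmFun M hM with hm
  set inS : Set V := {v | v ∈ X ∧ m v ∈ X} with hinS
  set crossS : Set V := {v | v ∈ X ∧ m v ∉ X} with hcrossS
  have himg : (fun v => s(v, m v)) '' crossS = M.edgeSet ∩ cutEdges G X := by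
    ext e
    constructor
    · rintro ⟨v, ⟨hvX, hmv⟩, rfl⟩
      exact ⟨pm_edge_mem hM v, ⟨(pm_gadj hM v), v, m v, rfl, hvX, hmv⟩⟩
    · rintro ⟨heM, hG, u, v, rfl, hu, hv⟩
      have hadj : M.Adj u v := SimpleGraph.Subgraph.mem_edgeSet.1 heM
      have hv' : v = m u := pm_eq hM hadj
      exact ⟨u, ⟨hu, hv' ▸ hv⟩, by show s(u, m u) = s(u, v); rw [hv']⟩
  have hinj : Set.InjOn (fun v => s(v, m v)) crossS := by
    rintro v₁ ⟨hv1, hm1⟩ v₂ ⟨hv2, hm2⟩ h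
    simp only [Sym2.eq, Sym2.rel_iff', Prod.mk.injEq, Prod.swap_prod_mk] at h
    rcases h with ⟨h, -⟩ | ⟨h1, h2⟩
    · exact h
    · exact absurd (h2 ▸ hv2) hm1
  have hcount : crossS.ncard = (M.edgeSet ∩ cutEdges G X).ncard := by
    rw [← himg, Set.ncard_image_of_injOn hinj]
  have heven : Even inS.ncard := by
    refine even_ncard_of_invol m (pm_invol hM) inS.ncard inS (Set.toFinite _) ?_ ?_ rfl
    · rintro v ⟨hv, hmv⟩; exact ⟨hmv, by rw [hm, pm_invol hM v]; exact hv⟩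
    · rintro v _; exact pm_ne hM v
  have hunion : inS ∪ crossS = X := by
    ext v
    constructor
    · rintro (⟨h, -⟩ | ⟨h, -⟩) <;> exact h
    · intro hv
      by_cases h : m v ∈ X
      exacts [Or.inl ⟨hv, h⟩, Or.inr ⟨hv, h⟩]
  have hdisj : Disjoint inS crossS := by
    rw [Set.disjoint_left]
    rintro v ⟨-, h1⟩ ⟨-, h2⟩
    exact h2 h1
  refine ⟨inS.ncard, heven, ?_⟩
  rw [← hcount, ← hunion, Set.ncard_union_eq hdisj (Set.toFinite _) (Set.toFinite _)]

lemma tight_compl [Fintype V] {X : Set V} (ht : IsTightCut G X) : IsTightCut G Xᶜ :=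
  fun M hM => by rw [cutEdges_compl]; exact ht M hM

lemma tight_odd [Fintype V] {X : Set V}
    (hPM : ∃ M : G.Subgraph, M.IsPerfectMatching) (ht : IsTightCut G X) :
    Odd X.ncard := by
  obtain ⟨M, hM⟩ := hPM
  obtain ⟨k, hk, heq⟩ := pm_cut_ncard hM X
  rw [ht M hM] at heq
  rw [heq]
  exact hk.add_one

end Cuts


section Bip
variable {V : Type*} {G : SimpleGraph V} {A B : Set V}

lemma IsBipartition.symm (h : IsBipartition G A B) : IsBipartition G B A :=
  ⟨by rw [Set.union_comm]; exact h.1, by rw [Set.inter_comm]; exact h.2.1,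
   fun u v huv => (h.2.2 u v huv).symm⟩

lemma IsBipartition.mem_or (h : IsBipartition G A B) (v : V) : v ∈ A ∨ v ∈ B := by
  have hv : v ∈ A ∪ B := h.1 ▸ Set.mem_univ v
  exact hv

lemma IsBipartition.not_both (h : IsBipartition G A B) {v : V} (hA : v ∈ A) (hB : v ∈ B) :
    False := by
  have hv : v ∈ A ∩ B := ⟨hA, hB⟩
  rw [h.2.1] at hv; exact hv

lemma IsBipartition.adj_right (h : IsBipartition G A B) {a v : V} (ha : a ∈ A)
    (hadj : G.Adj a v) : v ∈ B := by
  rcases h.2.2 a v hadj with ⟨-, hv⟩ | ⟨ha', -⟩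
  · exact hv
  · exact (h.not_both ha ha').elim

lemma IsBipartition.nbr_subset (h : IsBipartition G A B) {a : V} (ha : a ∈ A) :
    G.neighborSet a ⊆ B := fun _ hv => h.adj_right ha hv

lemma IsBipartition.not_adj (h : IsBipartition G A B) {u v : V} (hu : u ∈ A) (hv : v ∈ A) :
    ¬ G.Adj u v := fun hadj => h.not_both hv (h.adj_right hu hadj)

lemma IsBipartition.ncard_split [Fintype V] (h : IsBipartition G A B) (X : Set V) :
    X.ncard = (X ∩ A).ncard + (X ∩ B).ncard := by
  have hunion : (X ∩ A) ∪ (X ∩ B) = X := by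
    ext v
    constructor
    · rintro (⟨hv, -⟩ | ⟨hv, -⟩) <;> exact hv
    · intro hv
      rcases h.mem_or v with hA | hB
      exacts [Or.inl ⟨hv, hA⟩, Or.inr ⟨hv, hB⟩]
  have hdisj : Disjoint (X ∩ A) (X ∩ B) := by
    rw [Set.disjoint_left]
    rintro v ⟨-, hA⟩ ⟨-, hB⟩
    exact h.not_both hA hB
  conv_lhs => rw [← hunion]
  rw [Set.ncard_union_eq hdisj (Set.toFinite _) (Set.toFinite _)]

end Bip

section D2
variable {V : Type*} {G : SimpleGraph V}

lemma tight_of_two_nbrs {x u w : V}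
    (hN : G.neighborSet x = {u, w}) (huw : u ≠ w) (hadj : ¬ G.Adj u w) :
    IsTightCut G {x, u, w} := by
  have main : ∀ (u' w' : V), u' ≠ w' → G.neighborSet x = {u', w'} → ¬ G.Adj u' w' →
      ∀ (M : G.Subgraph) (hM : M.IsPerfectMatching), pmFun M hM x = u' →
      (M.edgeSet ∩ cutEdges G ({x, u', w'} : Set V)).ncard = 1 := by
    intro u' w' huw' hN' hadj' M hM hmx
    set m := pmFun M hM with hmdef
    have hxu : G.Adj x u' := by
      have : u' ∈ G.neighborSet x := by rw [hN']; exact Or.inl rfl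
      exact this
    have hxw : G.Adj x w' := by
      have : w' ∈ G.neighborSet x := by rw [hN']; exact Or.inr rfl
      exact this
    have hux : u' ≠ x := hxu.ne'
    have hwx : w' ≠ x := hxw.ne'
    have hinvx : m (m x) = x := pm_invol hM x
    have hinvu : m (m u') = u' := pm_invol hM u'
    have hinvw : m (m w') = w' := pm_invol hM w'
    have hmu : m u' = x := by rw [← hmx]; exact hinvx
    have hmw1 : m w' ≠ x := by
      intro h
      have h2 : m (m w') = m x := congrArg m h
      rw [hinvw, hmx] at h2
      exact huw'.symm h2
    have hmw2 : m w' ≠ u' := by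
      intro h
      have h2 : m (m w') = m u' := congrArg m h
      rw [hinvw, hmu] at h2
      exact hwx h2
    have hmw3 : m w' ≠ w' := pm_ne hM w'
    have hset : M.edgeSet ∩ cutEdges G ({x, u', w'} : Set V) = {s(w', m w')} := by
      ext e
      constructor
      · rintro ⟨heM, -, p, q, rfl, hp, hq⟩
        have hadjM : M.Adj p q := SimpleGraph.Subgraph.mem_edgeSet.1 heM
        have hq' : q = m p := pm_eq hM hadjM
        rcases hp with rfl | rfl | rfl
        · exfalso; apply hq; rw [hq', hmx]; exact Or.inr (Or.inl rfl)
        · exfalso; apply hq; rw [hq', hmu]; exact Or.inl rfl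
        · rw [Set.mem_singleton_iff, hq']
      · rintro rfl
        refine ⟨pm_edge_mem hM w', (SimpleGraph.mem_edgeSet G).2 (pm_gadj hM w'), w', m w', rfl,
          Or.inr (Or.inr rfl), ?_⟩
        rintro (h | h | h)
        exacts [hmw1 h, hmw2 h, hmw3 h]
    rw [hset, Set.ncard_singleton]
  intro M hM
  have hmem : pmFun M hM x ∈ G.neighborSet x := pm_gadj hM x
  rw [hN] at hmem
  rcases hmem with h | h
  · exact main u w huw hN hadj M hM h
  · have hres := main w u huw.symm (by rw [hN, Set.pair_comm]) (fun hh => hadj hh.symm) M hM h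
    have hsets : ({x, u, w} : Set V) = {x, w, u} := by rw [Set.pair_comm u w]
    rw [hsets]
    exact hres

end D2

section Master
variable {V : Type*} {G : SimpleGraph V} {A B : Set V}

lemma tight3_aux [Fintype V] (hbip : IsBipartition G A B) (hMC : IsMatchingCovered G)
    (hδ : ∀ v, 3 ≤ mdeg G v) {X : Set V} (h3 : X.ncard = 3)
    (hXB : (X ∩ B).ncard ≤ 1) (ht : IsTightCut G X) : False := by
  obtain ⟨-, ⟨e₀, he₀⟩, hcov⟩ := hMC
  interval_cases hB : (X ∩ B).ncard
  · -- X ⊆ A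
    have hBempty : X ∩ B = ∅ := (Set.ncard_eq_zero (Set.toFinite _)).1 hB
    have hXA : X ⊆ A := by
      intro v hv
      rcases hbip.mem_or v with hA | hBm
      · exact hA
      · exfalso
        have hmem : v ∈ X ∩ B := ⟨hv, hBm⟩
        rw [hBempty] at hmem
        exact hmem
    obtain ⟨a₁, a₂, a₃, h12, h13, h23, hXeq⟩ := Set.ncard_eq_three.1 h3
    obtain ⟨M, hM, -⟩ := hcov e₀ he₀
    set m := pmFun M hM with hmdef
    have ha₁X : a₁ ∈ X := by rw [hXeq]; exact Or.inl rfl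
    have ha₂X : a₂ ∈ X := by rw [hXeq]; exact Or.inr (Or.inl rfl)
    have hcross : ∀ a ∈ X, s(a, m a) ∈ M.edgeSet ∩ cutEdges G X := by
      intro a haX
      have hmB : m a ∈ B := hbip.adj_right (hXA haX) (pm_gadj hM a)
      have hmnX : m a ∉ X := by
        intro hmm
        have hmem : m a ∈ X ∩ B := ⟨hmm, hmB⟩
        rw [hBempty] at hmem
        exact hmem
      exact ⟨pm_edge_mem hM a, (SimpleGraph.mem_edgeSet G).2 (pm_gadj hM a), a, m a, rfl, haX, hmnX⟩
    have hne : s(a₁, m a₁) ≠ s(a₂, m a₂) := by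
      intro hEq
      rw [Sym2.eq_iff] at hEq
      rcases hEq with ⟨h, -⟩ | ⟨h, -⟩
      · exact h12 h
      · exact hbip.not_both (hXA ha₁X)
          (h ▸ hbip.adj_right (hXA ha₂X) (pm_gadj hM a₂))
    exact ncard_ne_one_of_two (hcross a₁ ha₁X) (hcross a₂ ha₂X) hne (ht M hM)
  · -- X ∩ B = {b}
    obtain ⟨b, hbeq⟩ := Set.ncard_eq_one.1 hB
    have hA2 : (X ∩ A).ncard = 2 := by
      have := hbip.ncard_split X; omega
    obtain ⟨a₁, a₂, h12, haeq⟩ := Set.ncard_eq_two.1 hA2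
    have hbX : b ∈ X := by
      have : b ∈ X ∩ B := by rw [hbeq]; rfl
      exact this.1
    have hbB : b ∈ B := by
      have : b ∈ X ∩ B := by rw [hbeq]; rfl
      exact this.2
    have ha₁X : a₁ ∈ X := by
      have : a₁ ∈ X ∩ A := by rw [haeq]; exact Or.inl rfl
      exact this.1
    have ha₁A : a₁ ∈ A := by
      have : a₁ ∈ X ∩ A := by rw [haeq]; exact Or.inl rfl
      exact this.2
    have hsub : ¬ (G.neighborSet b ⊆ {a₁, a₂}) := by
      intro hs
      have h1 : (G.neighborSet b).ncard ≤ ({a₁, a₂} : Set V).ncard :=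
        Set.ncard_le_ncard hs (Set.toFinite _)
      rw [Set.ncard_pair h12] at h1
      have := hδ b
      rw [mdeg] at this
      omega
    obtain ⟨a₃, ha₃N, ha₃np⟩ := Set.not_subset.1 hsub
    have ha₃adj : G.Adj b a₃ := ha₃N
    have ha₃A : a₃ ∈ A := hbip.symm.adj_right hbB ha₃adj
    have ha₃nX : a₃ ∉ X := by
      intro hmm
      rcases hbip.mem_or a₃ with hA | hBm
      · have : a₃ ∈ X ∩ A := ⟨hmm, hA⟩
        rw [haeq] at this
        exact ha₃np this
      · exact hbip.not_both ha₃A hBm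
    obtain ⟨M, hM, heM⟩ := hcov s(b, a₃) ((SimpleGraph.mem_edgeSet G).2 ha₃adj)
    set m := pmFun M hM with hmdef
    have hmb : m b = a₃ := (pm_eq hM (SimpleGraph.Subgraph.mem_edgeSet.1 heM)).symm
    have hE1 : s(b, a₃) ∈ M.edgeSet ∩ cutEdges G X :=
      ⟨heM, (SimpleGraph.mem_edgeSet G).2 ha₃adj, b, a₃, rfl, hbX, ha₃nX⟩
    have hma₁B : m a₁ ∈ B := hbip.adj_right ha₁A (pm_gadj hM a₁)
    have hma₁b : m a₁ ≠ b := by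
      intro h
      have h2 : m (m a₁) = m b := congrArg m h
      have hinva : m (m a₁) = a₁ := pm_invol hM a₁
      rw [hinva, hmb] at h2
      exact ha₃nX (h2 ▸ ha₁X)
    have hma₁nX : m a₁ ∉ X := by
      intro hmm
      have : m a₁ ∈ X ∩ B := ⟨hmm, hma₁B⟩
      rw [hbeq] at this
      exact hma₁b this
    have hE2 : s(a₁, m a₁) ∈ M.edgeSet ∩ cutEdges G X :=
      ⟨pm_edge_mem hM a₁, (SimpleGraph.mem_edgeSet G).2 (pm_gadj hM a₁), a₁, m a₁, rfl, ha₁X, hma₁nX⟩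
    have hne : s(b, a₃) ≠ s(a₁, m a₁) := by
      intro hEq
      rw [Sym2.eq_iff] at hEq
      rcases hEq with ⟨h, -⟩ | ⟨-, h⟩
      · exact hbip.not_both ha₁A (h ▸ hbB)
      · exact ha₃nX (h ▸ ha₁X)
    exact ncard_ne_one_of_two hE1 hE2 hne (ht M hM)

lemma tight3_false [Fintype V] (hbip : IsBipartition G A B) (hMC : IsMatchingCovered G)
    (hδ : ∀ v, 3 ≤ mdeg G v) {X : Set V} (h3 : X.ncard = 3) (ht : IsTightCut G X) : False := by
  have hsplit := hbip.ncard_split X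
  rcases le_or_gt ((X ∩ B).ncard) 1 with h | h
  · exact tight3_aux hbip hMC hδ h3 h ht
  · have h' : (X ∩ A).ncard ≤ 1 := by omega
    exact tight3_aux hbip.symm hMC hδ h3 h' ht

lemma no_nontrivial_tight [Fintype V] (hbip : IsBipartition G A B)
    (hMC : IsMatchingCovered G) (hcard : Fintype.card V ≤ 8)
    (hδ : Fintype.card V ≤ 4 ∨ ∀ v, 3 ≤ mdeg G v) :
    ∀ X : Set V, IsTightCut G X → IsTrivialShore X := by
  intro X ht
  obtain ⟨M, hM, -⟩ := hMC.2.2 hMC.2.1.choose hMC.2.1.choose_spec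
  have hodd := tight_odd ⟨M, hM⟩ ht
  have hoddc := tight_odd ⟨M, hM⟩ (tight_compl ht)
  have hsum : X.ncard + Xᶜ.ncard = Fintype.card V := by
    rw [Set.ncard_add_ncard_compl, Nat.card_eq_fintype_card]
  by_cases h1 : X.ncard = 1
  · exact Or.inl (Set.ncard_eq_one.1 h1)
  by_cases h1c : Xᶜ.ncard = 1
  · exact Or.inr (Set.ncard_eq_one.1 h1c)
  exfalso
  obtain ⟨j, hj⟩ := hodd
  obtain ⟨j', hj'⟩ := hoddc
  have hδ3 : ∀ v, 3 ≤ mdeg G v := by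
    rcases hδ with h | h
    · omega
    · exact h
  have h3 : X.ncard = 3 ∨ Xᶜ.ncard = 3 := by omega
  rcases h3 with h3 | h3
  · exact tight3_false hbip hMC hδ3 h3 ht
  · exact tight3_false hbip hMC hδ3 h3 (tight_compl ht)

end Master


section Hall
variable {V : Type*} {G : SimpleGraph V} {A B : Set V}

lemma exists_pm_through [Fintype V] {k : ℕ}
    (hbip : IsBipartition G A B) (hA : A.ncard = k) (hB : B.ncard = k)
    (hdeg : ∀ v, k + 2 ≤ 2 * mdeg G v) {a b : V} (ha : a ∈ A) (hb : b ∈ B)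
    (hab : G.Adj a b) :
    ∃ M : G.Subgraph, M.IsPerfectMatching ∧ s(a, b) ∈ M.edgeSet := by
  classical
  have hk1 : 1 ≤ k := by
    rw [← hA]
    exact (Set.ncard_pos (Set.toFinite _)).2 ⟨a, ha⟩
  set A' : Set V := A \ {a} with hA'def
  set B' : Set V := B \ {b} with hB'def
  have hA'card : A'.ncard = k - 1 := by
    rw [hA'def, Set.ncard_diff_singleton_of_mem ha, hA]
  have hB'card : B'.ncard = k - 1 := by
    rw [hB'def, Set.ncard_diff_singleton_of_mem hb, hB]
  have hNB' : ∀ x ∈ A, k ≤ 2 * (G.neighborSet x ∩ B').ncard := by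
    intro x hx
    have hsub : G.neighborSet x \ {b} ⊆ G.neighborSet x ∩ B' := by
      rintro v ⟨hvN, hvb⟩
      exact ⟨hvN, hbip.adj_right hx hvN, hvb⟩
    have h1 : (G.neighborSet x).ncard ≤ (G.neighborSet x \ {b}).ncard + 1 := by
      have hs : G.neighborSet x ⊆ (G.neighborSet x \ {b}) ∪ {b} := by
        intro v hv
        by_cases hvb : v = b
        · exact Or.inr hvb
        · exact Or.inl ⟨hv, hvb⟩
      calc (G.neighborSet x).ncard ≤ ((G.neighborSet x \ {b}) ∪ {b}).ncard :=
            Set.ncard_le_ncard hs (Set.toFinite _)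
        _ ≤ (G.neighborSet x \ {b}).ncard + ({b} : Set V).ncard := Set.ncard_union_le _ _
        _ = (G.neighborSet x \ {b}).ncard + 1 := by rw [Set.ncard_singleton]
    have h2 : (G.neighborSet x \ {b}).ncard ≤ (G.neighborSet x ∩ B').ncard :=
      Set.ncard_le_ncard hsub (Set.toFinite _)
    have h3 := hdeg x
    rw [mdeg] at h3
    omega
  have hNA' : ∀ y ∈ B, k ≤ 2 * (G.neighborSet y ∩ A').ncard := by
    intro y hy
    have hsub : G.neighborSet y \ {a} ⊆ G.neighborSet y ∩ A' := by
      rintro v ⟨hvN, hva⟩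
      exact ⟨hvN, hbip.symm.adj_right hy hvN, hva⟩
    have h1 : (G.neighborSet y).ncard ≤ (G.neighborSet y \ {a}).ncard + 1 := by
      have hs : G.neighborSet y ⊆ (G.neighborSet y \ {a}) ∪ {a} := by
        intro v hv
        by_cases hva : v = a
        · exact Or.inr hva
        · exact Or.inl ⟨hv, hva⟩
      calc (G.neighborSet y).ncard ≤ ((G.neighborSet y \ {a}) ∪ {a}).ncard :=
            Set.ncard_le_ncard hs (Set.toFinite _)
        _ ≤ (G.neighborSet y \ {a}).ncard + ({a} : Set V).ncard := Set.ncard_union_le _ _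
        _ = (G.neighborSet y \ {a}).ncard + 1 := by rw [Set.ncard_singleton]
    have h2 : (G.neighborSet y \ {a}).ncard ≤ (G.neighborSet y ∩ A').ncard :=
      Set.ncard_le_ncard hsub (Set.toFinite _)
    have h3 := hdeg y
    rw [mdeg] at h3
    omega
  set t : ↥A' → Finset V := fun x => (Set.toFinite (G.neighborSet ↑x ∩ B')).toFinset with htdef
  have htcard : ∀ x : ↥A', (t x).card = (G.neighborSet ↑x ∩ B').ncard := by
    intro x
    rw [htdef, Set.ncard_eq_toFinset_card]
  have hall : ∀ s : Finset ↥A', s.card ≤ (s.biUnion t).card := by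
    intro s
    rcases s.eq_empty_or_nonempty with rfl | ⟨x, hx⟩
    · simp
    by_cases hsmall : 2 * s.card ≤ k
    · have h1 := hNB' ↑x x.2.1
      have h2 : s.card ≤ (t x).card := by rw [htcard]; omega
      exact h2.trans (Finset.card_le_card (Finset.subset_biUnion_of_mem t hx))
    · push_neg at hsmall
      set Bf : Finset V := (Set.toFinite B').toFinset with hBfdef
      have hsubB : s.biUnion t ⊆ Bf := by
        intro y hy
        obtain ⟨x', -, hyt⟩ := Finset.mem_biUnion.1 hy
        have := (Set.Finite.mem_toFinset _).1 hyt
        exact (Set.Finite.mem_toFinset _).2 this.2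
      have hBsub : Bf ⊆ s.biUnion t := by
        intro y hyB
        have hyB' : y ∈ B' := (Set.Finite.mem_toFinset _).1 hyB
        by_contra hnot
        set sS : Set V := Subtype.val '' (↑s : Set ↥A') with hsSdef
        have hsScard : sS.ncard = s.card := by
          rw [hsSdef, Set.ncard_image_of_injective _ Subtype.val_injective,
            Set.ncard_coe_finset]
        have hsSsub : sS ⊆ A' := by
          rintro v ⟨x', -, rfl⟩
          exact x'.2
        have hNsub : G.neighborSet y ∩ A' ⊆ A' \ sS := by
          rintro v ⟨hvN, hvA'⟩
          refine ⟨hvA', ?_⟩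
          rintro ⟨x', hx's, rfl⟩
          apply hnot
          refine Finset.mem_biUnion.2 ⟨x', hx's, ?_⟩
          refine (Set.Finite.mem_toFinset _).2 ⟨?_, hyB'⟩
          exact (hvN : G.Adj y _).symm
        have h1 : (G.neighborSet y ∩ A').ncard ≤ (A' \ sS).ncard :=
          Set.ncard_le_ncard hNsub (Set.toFinite _)
        have h2 : (A' \ sS).ncard = A'.ncard - sS.ncard :=
          Set.ncard_diff hsSsub (Set.toFinite _)
        have h3 := hNA' y hyB'.1
        omega
      have hbieq : s.biUnion t = Bf := Finset.Subset.antisymm hsubB hBsub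
      have hBfcard : Bf.card = k - 1 := by
        rw [hBfdef, ← Set.ncard_eq_toFinset_card, hB'card]
      have hsle : s.card ≤ k - 1 := by
        have h1 : s.card ≤ Fintype.card ↥A' := Finset.card_le_univ s
        rwa [← Nat.card_eq_fintype_card, Nat.card_coe_set_eq, hA'card] at h1
      rw [hbieq, hBfcard]
      exact hsle
  obtain ⟨f, hfinj, hft⟩ := (Finset.all_card_le_biUnion_card_iff_exists_injective t).1 hall
  have hfmem : ∀ x : ↥A', f x ∈ G.neighborSet ↑x ∩ B' := fun x =>
    (Set.Finite.mem_toFinset _).1 (hft x)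
  have hrange : Set.range f = B' := by
    refine Set.eq_of_subset_of_ncard_le ?_ ?_ (Set.toFinite _)
    · rintro y ⟨x, rfl⟩
      exact (hfmem x).2
    · rw [← Set.image_univ, Set.ncard_image_of_injective _ hfinj, Set.ncard_univ,
        Nat.card_coe_set_eq, hA'card, hB'card]
  have hfB : ∀ x : ↥A', f x ∈ B := fun x => (hfmem x).2.1
  have hfnb : ∀ x : ↥A', f x ≠ b := fun x => (hfmem x).2.2
  have hfna : ∀ x : ↥A', f x ≠ a := fun x h => hbip.not_both ha (h ▸ hfB x)
  have hcA : ∀ x : ↥A', (x : V) ∈ A := fun x => x.2.1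
  have hcna : ∀ x : ↥A', (x : V) ≠ a := fun x => x.2.2
  have hcnb : ∀ x : ↥A', (x : V) ≠ b := fun x h => hbip.not_both (hcA x) (h ▸ hb)
  refine ⟨{ verts := Set.univ,
            Adj := fun u v => (u = a ∧ v = b) ∨ (u = b ∧ v = a) ∨
              (∃ x : ↥A', u = ↑x ∧ v = f x) ∨ (∃ x : ↥A', u = f x ∧ v = ↑x),
            adj_sub := ?_,
            edge_vert := fun _ => Set.mem_univ _,
            symm := ?_ }, ⟨?_, fun v => Set.mem_univ _⟩, ?_⟩
  · rintro u v (⟨rfl, rfl⟩ | ⟨rfl, rfl⟩ | ⟨x, rfl, rfl⟩ | ⟨x, rfl, rfl⟩)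
    · exact hab
    · exact hab.symm
    · exact (hfmem x).1
    · exact ((hfmem x).1 : G.Adj _ _).symm
  · refine ⟨?_⟩; rintro u v (⟨rfl, rfl⟩ | ⟨rfl, rfl⟩ | ⟨x, rfl, rfl⟩ | ⟨x, rfl, rfl⟩)
    · exact Or.inr (Or.inl ⟨rfl, rfl⟩)
    · exact Or.inl ⟨rfl, rfl⟩
    · exact Or.inr (Or.inr (Or.inr ⟨x, rfl, rfl⟩))
    · exact Or.inr (Or.inr (Or.inl ⟨x, rfl, rfl⟩))
  · -- IsMatching
    intro v _
    by_cases hva : v = a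
    · subst hva
      refine ⟨b, Or.inl ⟨rfl, rfl⟩, ?_⟩
      rintro w (⟨-, rfl⟩ | ⟨h, -⟩ | ⟨x, hx, -⟩ | ⟨x, hx, -⟩)
      · rfl
      · exact absurd h hab.ne
      · exact absurd hx.symm (hcna x)
      · exact absurd hx.symm (hfna x)
    by_cases hvb : v = b
    · subst hvb
      refine ⟨a, Or.inr (Or.inl ⟨rfl, rfl⟩), ?_⟩
      rintro w (⟨h, -⟩ | ⟨-, rfl⟩ | ⟨x, hx, -⟩ | ⟨x, hx, -⟩)
      · exact absurd h hab.ne'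
      · rfl
      · exact absurd hx.symm (hcnb x)
      · exact absurd hx.symm (hfnb x)
    rcases hbip.mem_or v with hvA | hvB
    · have hvA' : v ∈ A' := ⟨hvA, hva⟩
      refine ⟨f ⟨v, hvA'⟩, Or.inr (Or.inr (Or.inl ⟨⟨v, hvA'⟩, rfl, rfl⟩)), ?_⟩
      rintro w (⟨h, -⟩ | ⟨h, -⟩ | ⟨x, hx, rfl⟩ | ⟨x, hx, -⟩)
      · exact absurd h hva
      · exact absurd h hvb
      · have hxv : x = ⟨v, hvA'⟩ := Subtype.ext hx.symm
        rw [hxv]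
      · exact absurd hvA (fun hh => hbip.not_both hh (hx ▸ hfB x))
    · have hvB' : v ∈ B' := ⟨hvB, hvb⟩
      obtain ⟨x₀, hx₀⟩ : v ∈ Set.range f := hrange.symm ▸ hvB'
      refine ⟨↑x₀, Or.inr (Or.inr (Or.inr ⟨x₀, hx₀.symm, rfl⟩)), ?_⟩
      rintro w (⟨h, -⟩ | ⟨h, -⟩ | ⟨x, hx, -⟩ | ⟨x, hx, rfl⟩)
      · exact absurd (h ▸ hvB) (fun hh => hbip.not_both ha hh)
      · exact absurd h hvb
      · exact absurd (hx ▸ hvB) (fun hh => hbip.not_both (hcA x) hh)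
      · have hxx : x = x₀ := hfinj (by rw [← hx, hx₀])
        rw [hxx]
  · exact SimpleGraph.Subgraph.mem_edgeSet.2 (Or.inl ⟨rfl, rfl⟩)

end Hall


section Degrees
variable {V : Type*} {G : SimpleGraph V} {A B : Set V}

lemma reach_of_common (u v : V) (h : (G.neighborSet u ∩ G.neighborSet v).Nonempty) :
    G.Reachable u v := by
  obtain ⟨z, hzu, hzv⟩ := h
  exact ((hzu : G.Adj u z).reachable).trans ((hzv : G.Adj v z).symm.reachable)

lemma connected_of_bipartite_deg [Fintype V] {k : ℕ} (hbip : IsBipartition G A B)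
    (hA : A.ncard = k) (hB : B.ncard = k) (hk : 1 ≤ k)
    (hdeg : ∀ v, k + 1 ≤ 2 * mdeg G v) : G.Connected := by
  have hAne : A.Nonempty := by
    rw [← Set.ncard_pos (Set.toFinite _)] at *; omega
  haveI : Nonempty V := ⟨hAne.choose⟩
  have key : ∀ (A' B' : Set V), IsBipartition G A' B' → B'.ncard = k →
      ∀ u v, u ∈ A' → v ∈ A' → G.Reachable u v := by
    intro A' B' hb hB' u v hu hv
    apply reach_of_common
    rw [← Set.ncard_pos (Set.toFinite _)]
    have h1 : G.neighborSet u ⊆ B' := hb.nbr_subset hu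
    have h2 : G.neighborSet v ⊆ B' := hb.nbr_subset hv
    have hcup : (G.neighborSet u ∪ G.neighborSet v).ncard ≤ k := by
      rw [← hB']
      exact Set.ncard_le_ncard (Set.union_subset h1 h2) (Set.toFinite _)
    have hsum := Set.ncard_union_add_ncard_inter (G.neighborSet u) (G.neighborSet v)
      (Set.toFinite _) (Set.toFinite _)
    have hdu := hdeg u
    have hdv := hdeg v
    rw [mdeg] at hdu hdv
    omega
  have hnbr : ∀ v : V, ∃ w, G.Adj v w := by
    intro v
    have hd := hdeg v
    rw [mdeg] at hd
    have : (G.neighborSet v).Nonempty := by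
      rw [← Set.ncard_pos (Set.toFinite _)]; omega
    exact ⟨this.choose, this.choose_spec⟩
  constructor
  intro u v
  rcases hbip.mem_or u with huA | huB <;> rcases hbip.mem_or v with hvA | hvB
  · exact key A B hbip hB u v huA hvA
  · obtain ⟨w, hw⟩ := hnbr v
    have hwA : w ∈ A := hbip.symm.adj_right hvB hw
    exact (key A B hbip hB u w huA hwA).trans hw.symm.reachable
  · obtain ⟨w, hw⟩ := hnbr u
    have hwA : w ∈ A := hbip.symm.adj_right huB hw
    exact hw.reachable.trans (key A B hbip hB w v hwA hvA)
  · exact key B A hbip.symm hA u v huB hvB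

lemma mc_mindeg_two [Fintype V] (hMC : IsMatchingCovered G)
    (hcard : 3 ≤ Fintype.card V) : ∀ v, 2 ≤ mdeg G v := by
  intro v
  by_contra hlt
  push_neg at hlt
  obtain ⟨hconn, ⟨e₀, he₀⟩, hcov⟩ := hMC
  obtain ⟨M, hM, -⟩ := hcov e₀ he₀
  set u := pmFun M hM v with hudef
  have huN : u ∈ G.neighborSet v := pm_gadj hM v
  have hNv : G.neighborSet v = {u} := by
    apply Set.eq_singleton_iff_unique_mem.2
    refine ⟨huN, ?_⟩
    intro w hw
    exact (Set.ncard_le_one (Set.toFinite _)).1 (by rw [mdeg] at hlt; omega) w hw u huN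
  have hNu : G.neighborSet u ⊆ {v} := by
    intro w hw
    by_contra hwv
    rw [Set.mem_singleton_iff] at hwv
    obtain ⟨M', hM', heM'⟩ := hcov s(u, w) ((SimpleGraph.mem_edgeSet G).2 hw)
    have h1 : pmFun M' hM' u = w := (pm_eq hM' (SimpleGraph.Subgraph.mem_edgeSet.1 heM')).symm
    have h2 : pmFun M' hM' v ∈ G.neighborSet v := pm_gadj hM' v
    rw [hNv, Set.mem_singleton_iff] at h2
    have h3 : pmFun M' hM' u = v := by
      rw [← h2, pm_invol]
    rw [h1] at h3
    exact hwv h3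
  have key : ∀ (p q : V) (w : G.Walk p q), q = v → p = v ∨ p = u := by
    intro p q w
    induction w with
    | nil => intro h; exact Or.inl h
    | @cons px py pz hadj tail ih =>
      intro hr
      have hmem : px ∈ G.neighborSet py := hadj.symm
      rcases ih hr with h | h
      · rw [h, hNv, Set.mem_singleton_iff] at hmem
        exact Or.inr hmem
      · rw [h] at hmem
        have hmem2 := hNu hmem
        rw [Set.mem_singleton_iff] at hmem2
        exact Or.inl hmem2
  have hex : ∃ w : V, w ∉ ({u, v} : Set V) := by
    by_contra hnope
    push_neg at hnope
    have huniv : (Set.univ : Set V) ⊆ {u, v} := fun w _ => hnope w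
    have h1 : (Set.univ : Set V).ncard ≤ ({u, v} : Set V).ncard :=
      Set.ncard_le_ncard huniv (Set.toFinite _)
    have h2 : ({u, v} : Set V).ncard ≤ 2 := by
      apply (Set.ncard_insert_le _ _).trans
      rw [Set.ncard_singleton]
    rw [Set.ncard_univ, Nat.card_eq_fintype_card] at h1
    omega
  obtain ⟨w, hw⟩ := hex
  obtain ⟨wlk⟩ := hconn.preconnected w v
  rcases key w v wlk rfl with rfl | rfl
  · exact hw (Or.inr rfl)
  · exact hw (Or.inl rfl)

lemma brace_mindeg_three [Fintype V] (hbip : IsBipartition G A B)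
    (hMC : IsMatchingCovered G) (hno : ∀ X : Set V, IsTightCut G X → IsTrivialShore X)
    (hcard : 5 ≤ Fintype.card V) : ∀ v, 3 ≤ mdeg G v := by
  intro v
  by_contra hlt
  push_neg at hlt
  have h2 := mc_mindeg_two hMC (by omega) v
  have hdeg2 : mdeg G v = 2 := by omega
  rw [mdeg] at hdeg2
  obtain ⟨u, w, huw, hNv⟩ := Set.ncard_eq_two.1 hdeg2
  have hvu : G.Adj v u := by
    have : u ∈ G.neighborSet v := by rw [hNv]; exact Or.inl rfl
    exact this
  have hvw : G.Adj v w := by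
    have : w ∈ G.neighborSet v := by rw [hNv]; exact Or.inr rfl
    exact this
  have hnadj : ¬ G.Adj u w := by
    rcases hbip.mem_or v with hvA | hvB
    · exact hbip.symm.not_adj (hbip.adj_right hvA hvu) (hbip.adj_right hvA hvw)
    · exact hbip.not_adj (hbip.symm.adj_right hvB hvu) (hbip.symm.adj_right hvB hvw)
  have htight := tight_of_two_nbrs hNv huw hnadj
  have hX3 : ({v, u, w} : Set V).ncard = 3 := by
    rw [Set.ncard_insert_of_notMem, Set.ncard_pair huw]
    rintro (rfl | rfl)
    · exact hvu.ne rfl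
    · exact hvw.ne rfl
  rcases hno _ htight with ⟨x, hx⟩ | ⟨x, hx⟩
  · rw [hx, Set.ncard_singleton] at hX3
    omega
  · have hcompl : ({v, u, w} : Set V).ncard + ({v, u, w}ᶜ : Set V).ncard = Fintype.card V := by
      rw [Set.ncard_add_ncard_compl, Nat.card_eq_fintype_card]
    rw [hx, Set.ncard_singleton, hX3] at hcompl
    omega

lemma classes_ncard_eq [Fintype V] (hbip : IsBipartition G A B)
    (hPM : ∃ M : G.Subgraph, M.IsPerfectMatching) : A.ncard = B.ncard := by
  obtain ⟨M, hM⟩ := hPM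
  set m := pmFun M hM with hmdef
  have hminj : Function.Injective m := fun x y h => pm_inj hM h
  have hAB : m '' A ⊆ B := by
    rintro x ⟨a, ha, rfl⟩
    exact hbip.adj_right ha (pm_gadj hM a)
  have hBA : m '' B ⊆ A := by
    rintro x ⟨b, hb, rfl⟩
    exact hbip.symm.adj_right hb (pm_gadj hM b)
  have h1 : A.ncard ≤ B.ncard := by
    rw [← Set.ncard_image_of_injective A hminj]
    exact Set.ncard_le_ncard hAB (Set.toFinite _)
  have h2 : B.ncard ≤ A.ncard := by
    rw [← Set.ncard_image_of_injective B hminj]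
    exact Set.ncard_le_ncard hBA (Set.toFinite _)
  omega

lemma card_eq_classes [Fintype V] (hbip : IsBipartition G A B) :
    Fintype.card V = A.ncard + B.ncard := by
  rw [← Nat.card_eq_fintype_card, ← Set.ncard_univ, ← hbip.1,
    Set.ncard_union_eq (Set.disjoint_iff_inter_eq_empty.2 hbip.2.1)
      (Set.toFinite _) (Set.toFinite _)]

lemma isBrace_of [Fintype V] {k : ℕ} (hbip : IsBipartition G A B)
    (hA : A.ncard = k) (hB : B.ncard = k) (hk1 : 1 ≤ k) (hk4 : k ≤ 4)
    (hdeg : ∀ v, k + 2 ≤ 2 * mdeg G v) : IsBrace G := by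
  have hconn := connected_of_bipartite_deg hbip hA hB hk1 (fun v => by have := hdeg v; omega)
  have hAne : A.Nonempty := by
    rw [← Set.ncard_pos (Set.toFinite _)]; omega
  obtain ⟨a, ha⟩ := hAne
  have hNa : (G.neighborSet a).Nonempty := by
    rw [← Set.ncard_pos (Set.toFinite _)]
    have := hdeg a; rw [mdeg] at this; omega
  obtain ⟨b, hbN⟩ := hNa
  have hedge : G.edgeSet.Nonempty := ⟨s(a, b), (SimpleGraph.mem_edgeSet G).2 hbN⟩
  have hcov : ∀ e ∈ G.edgeSet, ∃ M : G.Subgraph, M.IsPerfectMatching ∧ e ∈ M.edgeSet := by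
    intro e
    induction e using Sym2.ind with
    | _ u v =>
      intro he
      have hadj : G.Adj u v := (SimpleGraph.mem_edgeSet G).1 he
      rcases hbip.2.2 u v hadj with ⟨huA, hvB⟩ | ⟨huB, hvA⟩
      · exact exists_pm_through hbip hA hB hdeg huA hvB hadj
      · obtain ⟨M, hM, hmem⟩ := exists_pm_through hbip hA hB hdeg hvA huB hadj.symm
        exact ⟨M, hM, by rw [Sym2.eq_swap]; exact hmem⟩
  have hMC : IsMatchingCovered G := ⟨hconn, hedge, hcov⟩
  have hcardV : Fintype.card V = 2 * k := by
    rw [card_eq_classes hbip, hA, hB]; omega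
  have hδcond : Fintype.card V ≤ 4 ∨ ∀ v, 3 ≤ mdeg G v := by
    rcases le_or_gt k 2 with hk | hk
    · left; omega
    · right; intro v; have := hdeg v; omega
  exact ⟨⟨A, B, hbip⟩, hMC, no_nontrivial_tight hbip hMC (by omega) hδcond⟩

end Degrees


section DelEdge
variable {V : Type*} {G : SimpleGraph V}

lemma deleteEdge_nbr_end {a b : V} (hab : a ≠ b) :
    (G.deleteEdges {s(a, b)}).neighborSet a = G.neighborSet a \ {b} := by
  ext w
  constructor
  · intro h
    obtain ⟨hadj, hne⟩ := SimpleGraph.deleteEdges_adj.1 h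
    refine ⟨hadj, fun hwb => hne ?_⟩
    rw [Set.mem_singleton_iff] at hwb
    rw [Set.mem_singleton_iff, hwb]
  · rintro ⟨hadj, hwb⟩
    refine SimpleGraph.deleteEdges_adj.2 ⟨hadj, fun hmem => ?_⟩
    rw [Set.mem_singleton_iff, Sym2.eq_iff] at hmem
    rcases hmem with ⟨-, h⟩ | ⟨h, -⟩
    exacts [hwb h, hab h]

lemma deleteEdge_nbr_other {a b v : V} (hva : v ≠ a) (hvb : v ≠ b) :
    (G.deleteEdges {s(a, b)}).neighborSet v = G.neighborSet v := by
  ext w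
  constructor
  · intro h; exact (SimpleGraph.deleteEdges_adj.1 h).1
  · intro hadj
    refine SimpleGraph.deleteEdges_adj.2 ⟨hadj, fun hmem => ?_⟩
    rw [Set.mem_singleton_iff, Sym2.eq_iff] at hmem
    rcases hmem with ⟨h, -⟩ | ⟨h, -⟩
    exacts [hva h, hvb h]

lemma deleteEdge_swap (a b : V) : G.deleteEdges {s(a, b)} = G.deleteEdges {s(b, a)} := by
  rw [Sym2.eq_swap]

lemma deleteEdges_bip {A B : Set V} (hbip : IsBipartition G A B) (s : Set (Sym2 V)) :
    IsBipartition (G.deleteEdges s) A B :=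
  ⟨hbip.1, hbip.2.1, fun u v huv => hbip.2.2 u v ((SimpleGraph.deleteEdges_adj.1 huv).1)⟩

/-- A graph with a pendant vertex whose support has another edge is not matching covered. -/
lemma not_mc_of_pendant {a u w : V} (hNa : G.neighborSet a = {u})
    (hadj : G.Adj u w) (hwa : w ≠ a) : ¬ IsMatchingCovered G := by
  rintro ⟨-, -, hcov⟩
  obtain ⟨M, hM, heM⟩ := hcov s(u, w) ((SimpleGraph.mem_edgeSet G).2 hadj)
  have h1 : pmFun M hM u = w := (pm_eq hM (SimpleGraph.Subgraph.mem_edgeSet.1 heM)).symm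
  have h2 : pmFun M hM a ∈ G.neighborSet a := pm_gadj hM a
  rw [hNa, Set.mem_singleton_iff] at h2
  have h3 : pmFun M hM u = a := by rw [← h2, pm_invol]
  rw [h1] at h3
  exact hwa h3

/-- Deleting an edge of a cubic bipartite graph on at least six vertices leaves a graph
that is not a brace (it has a nontrivial tight cut). -/
lemma not_brace_of_deg3_delete [Fintype V] {A B : Set V} (hbip : IsBipartition G A B)
    (hcard : 6 ≤ Fintype.card V) (hdeg : ∀ v, mdeg G v = 3) {a b : V} (hab : G.Adj a b) :
    ¬ IsBrace (G.deleteEdges {s(a, b)}) := by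
  set G' := G.deleteEdges {s(a, b)} with hG'def
  have hNa : G'.neighborSet a = G.neighborSet a \ {b} := deleteEdge_nbr_end hab.ne
  have hNcard : (G'.neighborSet a).ncard = 2 := by
    rw [hNa, Set.ncard_diff_singleton_of_mem (show b ∈ G.neighborSet a from hab)]
    have := hdeg a; rw [mdeg] at this; omega
  obtain ⟨u, w, huw, hNuw⟩ := Set.ncard_eq_two.1 hNcard
  have hau : G.Adj a u := by
    have h : u ∈ G'.neighborSet a := by rw [hNuw]; exact Or.inl rfl
    exact ((SimpleGraph.deleteEdges_adj.1 h).1)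
  have haw : G.Adj a w := by
    have h : w ∈ G'.neighborSet a := by rw [hNuw]; exact Or.inr rfl
    exact ((SimpleGraph.deleteEdges_adj.1 h).1)
  have hnadj : ¬ G'.Adj u w := by
    intro hadj'
    have hadjG : G.Adj u w := (SimpleGraph.deleteEdges_adj.1 hadj').1
    rcases hbip.mem_or a with haA | haB
    · exact hbip.symm.not_adj (hbip.adj_right haA hau) (hbip.adj_right haA haw) hadjG
    · exact hbip.not_adj (hbip.symm.adj_right haB hau) (hbip.symm.adj_right haB haw) hadjG
  have htight : IsTightCut G' {a, u, w} := tight_of_two_nbrs hNuw huw hnadj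
  rintro ⟨-, -, hno⟩
  have hX3 : ({a, u, w} : Set V).ncard = 3 := by
    rw [Set.ncard_insert_of_notMem, Set.ncard_pair huw]
    rintro (rfl | rfl)
    exacts [hau.ne rfl, haw.ne rfl]
  rcases hno _ htight with ⟨x, hx⟩ | ⟨x, hx⟩
  · rw [hx, Set.ncard_singleton] at hX3; omega
  · have hcompl : ({a, u, w} : Set V).ncard + ({a, u, w}ᶜ : Set V).ncard = Fintype.card V := by
      rw [Set.ncard_add_ncard_compl, Nat.card_eq_fintype_card]
    rw [hx, Set.ncard_singleton, hX3] at hcompl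
    omega

lemma mem_pair_of_card_two [Fintype V] (hcard : Fintype.card V = 2) {x y : V}
    (hxy : x ≠ y) (z : V) : z = x ∨ z = y := by
  by_contra h
  push_neg at h
  have h3 : ({z, x, y} : Set V).ncard = 3 := by
    rw [Set.ncard_insert_of_notMem, Set.ncard_pair hxy]
    rintro (rfl | rfl)
    exacts [h.1 rfl, h.2 rfl]
  have hle : ({z, x, y} : Set V).ncard ≤ (Set.univ : Set V).ncard :=
    Set.ncard_le_ncard (Set.subset_univ _) (Set.toFinite _)
  rw [Set.ncard_univ, Nat.card_eq_fintype_card, hcard, h3] at hle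
  omega

lemma two_elt_edge_eq [Fintype V] (hcard : Fintype.card V = 2) {x y x' y' : V}
    (hxy : x ≠ y) (hx'y' : x' ≠ y') : s(x, y) = s(x', y') := by
  rcases mem_pair_of_card_two hcard hxy x' with rfl | rfl
  · rcases mem_pair_of_card_two hcard hxy y' with rfl | rfl
    · exact absurd rfl hx'y'
    · rfl
  · rcases mem_pair_of_card_two hcard hxy y' with rfl | rfl
    · exact Sym2.eq_swap
    · exact absurd rfl hx'y'

end DelEdge

section IsoTools
variable {V W : Type*} {G : SimpleGraph V} {H : SimpleGraph W}

lemma nonempty_iso_of [Fintype V] [Fintype W] (f : V → W) (hinj : Function.Injective f)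
    (hcard : Fintype.card V = Fintype.card W)
    (hrel : ∀ u v, H.Adj (f u) (f v) ↔ G.Adj u v) : Nonempty (G ≃g H) := by
  have hbij : Function.Bijective f := (Fintype.bijective_iff_injective_and_card f).2 ⟨hinj, hcard⟩
  exact ⟨{ toEquiv := Equiv.ofBijective f hbij, map_rel_iff' := fun {u v} => hrel u v }⟩

lemma iso_mdeg (f : G ≃g H) (v : V) : mdeg G v = mdeg H (f v) := by
  have himg : ⇑f '' G.neighborSet v = H.neighborSet (f v) := by
    ext w
    constructor
    · rintro ⟨u, hu, rfl⟩
      exact f.map_rel_iff.2 (hu : G.Adj v u)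
    · intro hw
      refine ⟨f.symm w, ?_, f.apply_symm_apply w⟩
      have : H.Adj (f v) (f (f.symm w)) := by rwa [f.apply_symm_apply]
      exact f.map_rel_iff.1 this
  rw [mdeg, mdeg, ← himg, Set.ncard_image_of_injective _ f.injective]

lemma iso_image_class (f : G ≃g H) (S : Set W) :
    ⇑f '' {v | f v ∈ S} = S := by
  ext w
  constructor
  · rintro ⟨v, hv, rfl⟩; exact hv
  · intro hw
    exact ⟨f.symm w, by simp only [Set.mem_setOf_eq, f.apply_symm_apply]; exact hw,
      f.apply_symm_apply w⟩

lemma iso_class_ncard (f : G ≃g H) (S : Set W) : {v | f v ∈ S}.ncard = S.ncard := by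
  have h := Set.ncard_image_of_injective {v | f v ∈ S} f.injective
  rw [iso_image_class f S] at h
  exact h.symm

lemma iso_pullback_bip {AH BH : Set W} (hbipH : IsBipartition H AH BH) (f : G ≃g H) :
    IsBipartition G {v | f v ∈ AH} {v | f v ∈ BH} := by
  refine ⟨?_, ?_, ?_⟩
  · apply Set.eq_univ_iff_forall.2
    intro v
    rcases hbipH.mem_or (f v) with h | h
    exacts [Or.inl h, Or.inr h]
  · apply Set.eq_empty_iff_forall_notMem.2
    rintro v ⟨h1, h2⟩
    exact hbipH.not_both h1 h2
  · intro u v huv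
    exact hbipH.2.2 (f u) (f v) (f.map_rel_iff.2 huv)

end IsoTools


section Concrete

instance (n : ℕ) [NeZero n] : DecidablePred (Even : ZMod n → Prop) := fun a =>
  decidable_of_iff (∃ r : ZMod n, a = r + r) Iff.rfl

/-- The defining relation of `biwheel 3`, as a standalone definition. -/
def bwr : ZMod (2*3) ⊕ Fin 2 → ZMod (2*3) ⊕ Fin 2 → Prop := fun x y =>
  match x, y with
  | Sum.inl a, Sum.inl b => a - b = 1
  | Sum.inl a, Sum.inr k => (k = 0 ∧ Even a) ∨ (k = 1 ∧ ¬ Even a)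
  | Sum.inr _, _ => False

instance : ∀ x y, Decidable (bwr x y) := fun x y =>
  match x, y with
  | Sum.inl a, Sum.inl b => decidable_of_iff (a - b = 1) Iff.rfl
  | Sum.inl a, Sum.inr k => decidable_of_iff ((k = 0 ∧ Even a) ∨ (k = 1 ∧ ¬ Even a)) Iff.rfl
  | Sum.inr _, Sum.inl _ => decidable_of_iff False Iff.rfl
  | Sum.inr _, Sum.inr _ => decidable_of_iff False Iff.rfl

lemma biwheel3_adj (x y : ZMod (2*3) ⊕ Fin 2) :
    (biwheel 3).Adj x y ↔ x ≠ y ∧ (bwr x y ∨ bwr y x) := by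
  unfold biwheel
  rw [SimpleGraph.fromRel_adj]
  cases x <;> cases y <;> rfl

instance : DecidableRel (biwheel 3).Adj := fun x y =>
  decidable_of_iff _ (biwheel3_adj x y).symm

lemma cycleGraph4_adj (x y : ZMod 4) :
    (cycleGraph 4).Adj x y ↔ x ≠ y ∧ (x - y = 1 ∨ y - x = 1) := by
  unfold cycleGraph
  rw [SimpleGraph.fromRel_adj]

instance : DecidableRel (cycleGraph 4).Adj := fun x y =>
  decidable_of_iff _ (cycleGraph4_adj x y).symm

instance : DecidableRel K2graph.Adj := fun x y => decidable_of_iff (x ≠ y) Iff.rfl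

instance : DecidableRel K33graph.Adj := fun x y =>
  inferInstanceAs (Decidable ((x.isLeft ∧ y.isRight) ∨ (x.isRight ∧ y.isLeft)))

lemma mdeg_eq_toFinset_card {W : Type*} [Fintype W] (H : SimpleGraph W) [DecidableRel H.Adj]
    (v : W) : mdeg H v = (H.neighborSet v).toFinset.card :=
  Set.ncard_eq_toFinset_card' _

/-! Target vertex enumerations. -/

def tK2A : Fin 1 → Fin 2 := ![0]
def tK2B : Fin 1 → Fin 2 := ![1]
def tC4A : Fin 2 → ZMod 4 := ![0, 2]
def tC4B : Fin 2 → ZMod 4 := ![1, 3]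
def tK33A : Fin 3 → Fin 3 ⊕ Fin 3 := fun i => Sum.inl i
def tK33B : Fin 3 → Fin 3 ⊕ Fin 3 := fun i => Sum.inr i
def tBWA : Fin 4 → ZMod (2*3) ⊕ Fin 2 := ![Sum.inl 0, Sum.inl 2, Sum.inl 4, Sum.inr 1]
def tBWB : Fin 4 → ZMod (2*3) ⊕ Fin 2 := ![Sum.inl 3, Sum.inl 5, Sum.inl 1, Sum.inr 0]

lemma K2_facts :
    Function.Injective tK2A ∧ Function.Injective tK2B ∧ (∀ i j, tK2A i ≠ tK2B j) ∧
    (∀ i j, K2graph.Adj (tK2A i) (tK2B j)) ∧ (∀ i j, ¬ K2graph.Adj (tK2A i) (tK2A j)) ∧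
    (∀ i j, ¬ K2graph.Adj (tK2B i) (tK2B j)) ∧ Fintype.card (Fin 2) = 2 * 1 := by
  refine ⟨?_, ?_, ?_, ?_, ?_, ?_, ?_⟩ <;> decide

lemma C4_facts :
    Function.Injective tC4A ∧ Function.Injective tC4B ∧ (∀ i j, tC4A i ≠ tC4B j) ∧
    (∀ i j, (cycleGraph 4).Adj (tC4A i) (tC4B j)) ∧
    (∀ i j, ¬ (cycleGraph 4).Adj (tC4A i) (tC4A j)) ∧
    (∀ i j, ¬ (cycleGraph 4).Adj (tC4B i) (tC4B j)) ∧ Fintype.card (ZMod 4) = 2 * 2 := by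
  refine ⟨?_, ?_, ?_, ?_, ?_, ?_, ?_⟩ <;> decide

lemma K33_facts :
    Function.Injective tK33A ∧ Function.Injective tK33B ∧ (∀ i j, tK33A i ≠ tK33B j) ∧
    (∀ i j, K33graph.Adj (tK33A i) (tK33B j)) ∧
    (∀ i j, ¬ K33graph.Adj (tK33A i) (tK33A j)) ∧
    (∀ i j, ¬ K33graph.Adj (tK33B i) (tK33B j)) ∧
    Fintype.card (Fin 3 ⊕ Fin 3) = 2 * 3 := by
  refine ⟨?_, ?_, ?_, ?_, ?_, ?_, ?_⟩ <;> decide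

lemma BW_facts :
    Function.Injective tBWA ∧ Function.Injective tBWB ∧ (∀ i j, tBWA i ≠ tBWB j) ∧
    (∀ i j, ¬ (biwheel 3).Adj (tBWA i) (tBWA j)) ∧
    (∀ i j, ¬ (biwheel 3).Adj (tBWB i) (tBWB j)) ∧
    Fintype.card (ZMod (2*3) ⊕ Fin 2) = 2 * 4 := by
  refine ⟨?_, ?_, ?_, ?_, ?_, ?_⟩ <;> decide

lemma BW_adj_iff : ∀ i j, (biwheel 3).Adj (tBWA i) (tBWB j) ↔ i ≠ j := by decide

/-! Color classes of the concrete graphs. -/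

def AK2 : Set (Fin 2) := {v | v = 0}
def BK2 : Set (Fin 2) := {v | v = 1}
def AC4 : Set (ZMod 4) := {v | v = 0 ∨ v = 2}
def BC4 : Set (ZMod 4) := {v | v = 1 ∨ v = 3}
def AK33 : Set (Fin 3 ⊕ Fin 3) := {v | v.isLeft}
def BK33 : Set (Fin 3 ⊕ Fin 3) := {v | v.isRight}
def ABW : Set (ZMod (2*3) ⊕ Fin 2) :=
  {v | v = Sum.inl 0 ∨ v = Sum.inl 2 ∨ v = Sum.inl 4 ∨ v = Sum.inr 1}
def BBW : Set (ZMod (2*3) ⊕ Fin 2) :=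
  {v | v = Sum.inl 1 ∨ v = Sum.inl 3 ∨ v = Sum.inl 5 ∨ v = Sum.inr 0}

instance : DecidablePred (· ∈ AK2) := fun v => decidable_of_iff (v = 0) Iff.rfl
instance : DecidablePred (· ∈ BK2) := fun v => decidable_of_iff (v = 1) Iff.rfl
instance : DecidablePred (· ∈ AC4) := fun v => decidable_of_iff (v = 0 ∨ v = 2) Iff.rfl
instance : DecidablePred (· ∈ BC4) := fun v => decidable_of_iff (v = 1 ∨ v = 3) Iff.rfl
instance : DecidablePred (· ∈ AK33) := fun v => decidable_of_iff (v.isLeft = true) Iff.rfl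
instance : DecidablePred (· ∈ BK33) := fun v => decidable_of_iff (v.isRight = true) Iff.rfl
instance : DecidablePred (· ∈ ABW) := fun v =>
  decidable_of_iff (v = Sum.inl 0 ∨ v = Sum.inl 2 ∨ v = Sum.inl 4 ∨ v = Sum.inr 1) Iff.rfl
instance : DecidablePred (· ∈ BBW) := fun v =>
  decidable_of_iff (v = Sum.inl 1 ∨ v = Sum.inl 3 ∨ v = Sum.inl 5 ∨ v = Sum.inr 0) Iff.rfl

lemma K2_bip : IsBipartition K2graph AK2 BK2 ∧ AK2.ncard = 1 ∧ BK2.ncard = 1 ∧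
    (∀ v, mdeg K2graph v = 1) := by
  refine ⟨⟨Set.eq_univ_iff_forall.2 ?_, Set.eq_empty_iff_forall_notMem.2 ?_, ?_⟩, ?_, ?_, ?_⟩
  · decide
  · decide
  · decide
  · rw [Set.ncard_eq_toFinset_card']; decide
  · rw [Set.ncard_eq_toFinset_card']; decide
  · intro v; rw [mdeg_eq_toFinset_card]; revert v; decide

lemma C4_bip : IsBipartition (cycleGraph 4) AC4 BC4 ∧ AC4.ncard = 2 ∧ BC4.ncard = 2 ∧
    (∀ v, mdeg (cycleGraph 4) v = 2) := by
  refine ⟨⟨Set.eq_univ_iff_forall.2 ?_, Set.eq_empty_iff_forall_notMem.2 ?_, ?_⟩, ?_, ?_, ?_⟩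
  · decide
  · decide
  · decide
  · rw [Set.ncard_eq_toFinset_card']; decide
  · rw [Set.ncard_eq_toFinset_card']; decide
  · intro v; rw [mdeg_eq_toFinset_card]; revert v; decide

lemma K33_bip : IsBipartition K33graph AK33 BK33 ∧ AK33.ncard = 3 ∧ BK33.ncard = 3 ∧
    (∀ v, mdeg K33graph v = 3) := by
  refine ⟨⟨Set.eq_univ_iff_forall.2 ?_, Set.eq_empty_iff_forall_notMem.2 ?_, ?_⟩, ?_, ?_, ?_⟩
  · decide
  · decide
  · decide
  · rw [Set.ncard_eq_toFinset_card']; decide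
  · rw [Set.ncard_eq_toFinset_card']; decide
  · intro v; rw [mdeg_eq_toFinset_card]; revert v; decide

lemma BW_bip : IsBipartition (biwheel 3) ABW BBW ∧ ABW.ncard = 4 ∧ BBW.ncard = 4 ∧
    (∀ v, mdeg (biwheel 3) v = 3) := by
  refine ⟨⟨Set.eq_univ_iff_forall.2 ?_, Set.eq_empty_iff_forall_notMem.2 ?_, ?_⟩, ?_, ?_, ?_⟩
  · decide
  · decide
  · decide
  · rw [Set.ncard_eq_toFinset_card']; decide
  · rw [Set.ncard_eq_toFinset_card']; decide
  · intro v; rw [mdeg_eq_toFinset_card]; revert v; decide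

end Concrete


section IsoBuild
variable {V : Type*} {W : Type*} {G : SimpleGraph V} {H : SimpleGraph W} {A B : Set V}

lemma iso_complete_bip [Fintype V] [Fintype W] {k : ℕ}
    (hbip : IsBipartition G A B) (hA : A.ncard = k) (hB : B.ncard = k)
    (tA tB : Fin k → W)
    (hinjA : Function.Injective tA) (hinjB : Function.Injective tB)
    (hABdisj : ∀ i j, tA i ≠ tB j) (hcardW : Fintype.card W = 2 * k)
    (hadjAB : ∀ i j, H.Adj (tA i) (tB j))
    (hnAA : ∀ i j, ¬ H.Adj (tA i) (tA j)) (hnBB : ∀ i j, ¬ H.Adj (tB i) (tB j))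
    (hcompl : ∀ a ∈ A, ∀ b ∈ B, G.Adj a b) : Nonempty (G ≃g H) := by
  classical
  haveI : Fintype ↥A := (Set.toFinite A).fintype
  haveI : Fintype ↥B := (Set.toFinite B).fintype
  have hcA : Fintype.card ↥A = k := by
    rw [← Nat.card_eq_fintype_card, Nat.card_coe_set_eq, hA]
  have hcB : Fintype.card ↥B = k := by
    rw [← Nat.card_eq_fintype_card, Nat.card_coe_set_eq, hB]
  set eA : ↥A ≃ Fin k := Fintype.equivFinOfCardEq hcA with heA
  set eB : ↥B ≃ Fin k := Fintype.equivFinOfCardEq hcB with heB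
  set f : V → W := fun v =>
    if h : v ∈ A then tA (eA ⟨v, h⟩) else tB (eB ⟨v, (hbip.mem_or v).resolve_left h⟩) with hfdef
  have hfA : ∀ (v : V) (h : v ∈ A), f v = tA (eA ⟨v, h⟩) := fun v h => dif_pos h
  have hfB : ∀ (v : V) (h : v ∈ B), f v = tB (eB ⟨v, h⟩) := by
    intro v h
    have hnA : v ∉ A := fun hA' => hbip.not_both hA' h
    rw [hfdef]
    simp only [dif_neg hnA]
  have hinj : Function.Injective f := by
    intro u v huv
    rcases hbip.mem_or u with hu | hu <;> rcases hbip.mem_or v with hv | hv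
    · rw [hfA u hu, hfA v hv] at huv
      have := eA.injective (hinjA huv)
      exact Subtype.ext_iff.1 this
    · rw [hfA u hu, hfB v hv] at huv
      exact absurd huv (hABdisj _ _)
    · rw [hfB u hu, hfA v hv] at huv
      exact absurd huv.symm (hABdisj _ _)
    · rw [hfB u hu, hfB v hv] at huv
      have := eB.injective (hinjB huv)
      exact Subtype.ext_iff.1 this
  have hcardV : Fintype.card V = Fintype.card W := by
    rw [card_eq_classes hbip, hA, hB, hcardW]; omega
  refine nonempty_iso_of f hinj hcardV ?_
  intro u v
  rcases hbip.mem_or u with hu | hu <;> rcases hbip.mem_or v with hv | hv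
  · rw [hfA u hu, hfA v hv]
    exact iff_of_false (hnAA _ _) (hbip.not_adj hu hv)
  · rw [hfA u hu, hfB v hv]
    exact iff_of_true (hadjAB _ _) (hcompl u hu v hv)
  · rw [hfB u hu, hfA v hv]
    exact iff_of_true (hadjAB _ _).symm (hcompl v hv u hu).symm
  · rw [hfB u hu, hfB v hv]
    exact iff_of_false (hnBB _ _) (hbip.symm.not_adj hu hv)

lemma iso_cubic_biwheel [Fintype V] (hbip : IsBipartition G A B)
    (hA : A.ncard = 4) (hB : B.ncard = 4) (hdeg : ∀ v, mdeg G v = 3) :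
    Nonempty (G ≃g biwheel 3) := by
  classical
  obtain ⟨hiA, hiB, hdisj, hnAA, hnBB, hcardW⟩ := BW_facts
  have hmiss : ∀ x : ↥A, ∃ b, B \ G.neighborSet ↑x = {b} := by
    intro x
    apply Set.ncard_eq_one.1
    rw [Set.ncard_diff (hbip.nbr_subset x.2) (Set.toFinite _), hB]
    have := hdeg ↑x; rw [mdeg] at this; omega
  set mA : ↥A → V := fun x => (hmiss x).choose with hmAdef
  have hmAspec : ∀ x : ↥A, B \ G.neighborSet ↑x = {mA x} := fun x => (hmiss x).choose_spec
  have hmAB : ∀ x : ↥A, mA x ∈ B := by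
    intro x
    have : mA x ∈ B \ G.neighborSet ↑x := by rw [hmAspec x]; rfl
    exact this.1
  have hmAnadj : ∀ x : ↥A, ¬ G.Adj ↑x (mA x) := by
    intro x hadj
    have : mA x ∈ B \ G.neighborSet ↑x := by rw [hmAspec x]; rfl
    exact this.2 hadj
  have hchar : ∀ (x : ↥A) (b : V), b ∈ B → (G.Adj ↑x b ↔ b ≠ mA x) := by
    intro x b hbB
    constructor
    · intro hadj heq
      exact hmAnadj x (heq ▸ hadj)
    · intro hne
      by_contra hnadj
      have : b ∈ B \ G.neighborSet ↑x := ⟨hbB, hnadj⟩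
      rw [hmAspec x] at this
      exact hne this
  have hmAinj : Function.Injective mA := by
    intro x y hxy
    by_contra hne
    have hxyne : (↑x : V) ≠ ↑y := fun h => hne (Subtype.ext h)
    have hNsub : G.neighborSet (mA x) ⊆ A \ {↑x, ↑y} := by
      intro z hz
      have hzA : z ∈ A := hbip.symm.adj_right (hmAB x) hz
      refine ⟨hzA, ?_⟩
      rintro (rfl | rfl)
      · exact hmAnadj x (hz : G.Adj (mA x) ↑x).symm
      · rw [hxy] at *
        exact hmAnadj y ((hz : G.Adj (mA y) ↑y).symm)
    have h1 : (G.neighborSet (mA x)).ncard ≤ (A \ {↑x, ↑y}).ncard :=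
      Set.ncard_le_ncard hNsub (Set.toFinite _)
    have h2 : (A \ {↑x, ↑y}).ncard = A.ncard - ({↑x, ↑y} : Set V).ncard :=
      Set.ncard_diff (by rintro z (rfl | rfl); exacts [x.2, y.2]) (Set.toFinite _)
    rw [Set.ncard_pair hxyne, hA] at h2
    have h3 := hdeg (mA x)
    rw [mdeg] at h3
    omega
  haveI : Fintype ↥A := (Set.toFinite A).fintype
  haveI : Fintype ↥B := (Set.toFinite B).fintype
  have hcA : Fintype.card ↥A = 4 := by
    rw [← Nat.card_eq_fintype_card, Nat.card_coe_set_eq, hA]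
  have hcB : Fintype.card ↥B = 4 := by
    rw [← Nat.card_eq_fintype_card, Nat.card_coe_set_eq, hB]
  have hmABbij : Function.Bijective (fun x : ↥A => (⟨mA x, hmAB x⟩ : ↥B)) := by
    apply (Fintype.bijective_iff_injective_and_card _).2
    refine ⟨fun x y h => hmAinj (Subtype.ext_iff.1 h), by rw [hcA, hcB]⟩
  set mE : ↥A ≃ ↥B := Equiv.ofBijective _ hmABbij with hmEdef
  set eA : ↥A ≃ Fin 4 := Fintype.equivFinOfCardEq hcA with heA
  set eB : ↥B ≃ Fin 4 := mE.symm.trans eA with heB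
  have heBmA : ∀ x : ↥A, eB ⟨mA x, hmAB x⟩ = eA x := by
    intro x
    rw [heB]
    simp only [Equiv.trans_apply]
    congr 1
    have : (⟨mA x, hmAB x⟩ : ↥B) = mE x := rfl
    rw [this, Equiv.symm_apply_apply]
  set f : V → (ZMod (2*3) ⊕ Fin 2) := fun v =>
    if h : v ∈ A then tBWA (eA ⟨v, h⟩) else tBWB (eB ⟨v, (hbip.mem_or v).resolve_left h⟩)
    with hfdef
  have hfA : ∀ (v : V) (h : v ∈ A), f v = tBWA (eA ⟨v, h⟩) := fun v h => dif_pos h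
  have hfB : ∀ (v : V) (h : v ∈ B), f v = tBWB (eB ⟨v, h⟩) := by
    intro v h
    have hnA : v ∉ A := fun hA' => hbip.not_both hA' h
    rw [hfdef]
    simp only [dif_neg hnA]
  have hinj : Function.Injective f := by
    intro u v huv
    rcases hbip.mem_or u with hu | hu <;> rcases hbip.mem_or v with hv | hv
    · rw [hfA u hu, hfA v hv] at huv
      exact Subtype.ext_iff.1 (eA.injective (hiA huv))
    · rw [hfA u hu, hfB v hv] at huv
      exact absurd huv (hdisj _ _)
    · rw [hfB u hu, hfA v hv] at huv
      exact absurd huv.symm (hdisj _ _)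
    · rw [hfB u hu, hfB v hv] at huv
      exact Subtype.ext_iff.1 (eB.injective (hiB huv))
  have hcardV : Fintype.card V = Fintype.card (ZMod (2*3) ⊕ Fin 2) := by
    rw [card_eq_classes hbip, hA, hB, hcardW]
  refine nonempty_iso_of f hinj hcardV ?_
  have key : ∀ u v, u ∈ A → v ∈ B → ((biwheel 3).Adj (f u) (f v) ↔ G.Adj u v) := by
    intro u v hu hv
    rw [hfA u hu, hfB v hv, BW_adj_iff]
    rw [hchar ⟨u, hu⟩ v hv]
    constructor
    · intro hne heq
      apply hne
      rw [show (⟨v, hv⟩ : ↥B) = ⟨mA ⟨u, hu⟩, hmAB _⟩ from Subtype.ext heq] at *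
      rw [heBmA]
    · intro hne heq
      apply hne
      have h2 : eB ⟨v, hv⟩ = eB ⟨mA ⟨u, hu⟩, hmAB _⟩ := by rw [heBmA]; exact heq.symm
      have := eB.injective h2
      exact Subtype.ext_iff.1 this
  intro u v
  rcases hbip.mem_or u with hu | hu <;> rcases hbip.mem_or v with hv | hv
  · rw [hfA u hu, hfA v hv]
    exact iff_of_false (hnAA _ _) (hbip.not_adj hu hv)
  · exact key u v hu hv
  · rw [(biwheel 3).adj_comm, G.adj_comm]
    exact key v u hv hu
  · rw [hfB u hu, hfB v hv]
    exact iff_of_false (hnBB _ _) (hbip.symm.not_adj hu hv)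

end IsoBuild


section Forward
variable {V : Type*} {G : SimpleGraph V} {A B : Set V}

lemma complete_of_deg [Fintype V] {k : ℕ} (hbip : IsBipartition G A B)
    (hB : B.ncard = k) (hδ : ∀ v, k ≤ mdeg G v) :
    ∀ a ∈ A, ∀ b ∈ B, G.Adj a b := by
  intro a ha b hb
  have hNa : G.neighborSet a = B := by
    apply Set.eq_of_subset_of_ncard_le (hbip.nbr_subset ha) ?_ (Set.toFinite _)
    rw [hB]
    exact hδ a
  rw [← hNa] at hb
  exact hb

lemma sum_deg_eq [Fintype V] (hbip : IsBipartition G A B) :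
    ∑ a ∈ (Set.toFinite A).toFinset, mdeg G a = ∑ b ∈ (Set.toFinite B).toFinset, mdeg G b := by
  classical
  set Af := (Set.toFinite A).toFinset with hAf
  set Bf := (Set.toFinite B).toFinset with hBf
  set P : Finset (V × V) := Finset.univ.filter (fun p => p.1 ∈ A ∧ G.Adj p.1 p.2) with hP
  have hmemP : ∀ p : V × V, p ∈ P ↔ p.1 ∈ A ∧ G.Adj p.1 p.2 := by
    intro p
    rw [hP, Finset.mem_filter]
    simp only [Finset.mem_univ, true_and]
  have h1 : P.card = ∑ a ∈ Af, mdeg G a := by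
    rw [Finset.card_eq_sum_card_fiberwise (f := Prod.fst) (t := Af)
      (fun p hp => (Set.Finite.mem_toFinset _).2 ((hmemP p).1 hp).1)]
    apply Finset.sum_congr rfl
    intro a haf
    have haA : a ∈ A := (Set.Finite.mem_toFinset _).1 haf
    rw [mdeg, Set.ncard_eq_toFinset_card _ (Set.toFinite _)]
    apply Finset.card_bij (fun p _ => p.2)
    · intro p hp
      rw [Finset.mem_filter] at hp
      obtain ⟨hpP, hp1⟩ := hp
      obtain ⟨-, hadj⟩ := (hmemP p).1 hpP
      rw [Set.Finite.mem_toFinset]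
      rw [← hp1] at *
      exact hadj
    · intro p hp q hq hpq
      rw [Finset.mem_filter] at hp hq
      exact Prod.ext (hp.2.trans hq.2.symm) hpq
    · intro w hw
      rw [Set.Finite.mem_toFinset] at hw
      refine ⟨(a, w), ?_, rfl⟩
      rw [Finset.mem_filter]
      exact ⟨(hmemP _).2 ⟨haA, hw⟩, rfl⟩
  have h2 : P.card = ∑ b ∈ Bf, mdeg G b := by
    rw [Finset.card_eq_sum_card_fiberwise (f := Prod.snd) (t := Bf)
      (fun p hp => (Set.Finite.mem_toFinset _).2
        (hbip.adj_right ((hmemP p).1 hp).1 ((hmemP p).1 hp).2))]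
    apply Finset.sum_congr rfl
    intro b hbf
    have hbB : b ∈ B := (Set.Finite.mem_toFinset _).1 hbf
    rw [mdeg, Set.ncard_eq_toFinset_card _ (Set.toFinite _)]
    apply Finset.card_bij (fun p _ => p.1)
    · intro p hp
      rw [Finset.mem_filter] at hp
      obtain ⟨hpP, hp2⟩ := hp
      obtain ⟨-, hadj⟩ := (hmemP p).1 hpP
      rw [Set.Finite.mem_toFinset]
      rw [← hp2]
      exact hadj.symm
    · intro p hp q hq hpq
      rw [Finset.mem_filter] at hp hq
      exact Prod.ext hpq (hp.2.trans hq.2.symm)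
    · intro z hz
      rw [Set.Finite.mem_toFinset] at hz
      have hadj : G.Adj b z := hz
      refine ⟨(z, b), ?_, rfl⟩
      rw [Finset.mem_filter]
      exact ⟨(hmemP _).2 ⟨hbip.symm.adj_right hbB hadj, hadj.symm⟩, rfl⟩
  omega

lemma deg4_not_minimal [Fintype V] (hbip : IsBipartition G A B)
    (hA : A.ncard = 4) (hB : B.ncard = 4) (hδ : ∀ v, 3 ≤ mdeg G v)
    {a₀ : V} (ha₀ : a₀ ∈ A) (hd4 : mdeg G a₀ = 4) :
    ∃ e ∈ G.edgeSet, IsBrace (G.deleteEdges {e}) := by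
  classical
  set Af := (Set.toFinite A).toFinset with hAf
  set Bf := (Set.toFinite B).toFinset with hBf
  have hAfcard : Af.card = 4 := by
    rw [hAf, ← Set.ncard_eq_toFinset_card, hA]
  have hBfcard : Bf.card = 4 := by
    rw [hBf, ← Set.ncard_eq_toFinset_card, hB]
  have hsum := sum_deg_eq hbip
  rw [← hAf, ← hBf] at hsum
  have ha₀f : a₀ ∈ Af := (Set.Finite.mem_toFinset _).2 ha₀
  have hlow : 13 ≤ ∑ a ∈ Af, mdeg G a := by
    have herase := Finset.add_sum_erase Af (mdeg G) ha₀f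
    have hcer : (Af.erase a₀).card = 3 := by
      rw [Finset.card_erase_of_mem ha₀f, hAfcard]
    have hbound : (Af.erase a₀).card • 3 ≤ ∑ a ∈ Af.erase a₀, mdeg G a :=
      Finset.card_nsmul_le_sum _ _ _ (fun x _ => hδ x)
    rw [hcer] at hbound
    simp only [smul_eq_mul] at hbound
    omega
  have hex : ∃ b₀ ∈ Bf, 4 ≤ mdeg G b₀ := by
    by_contra hnone
    push_neg at hnone
    have : ∑ b ∈ Bf, mdeg G b ≤ Bf.card • 3 :=
      Finset.sum_le_card_nsmul _ _ _ (fun x hx => by have := hnone x hx; omega)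
    rw [hBfcard] at this
    simp only [smul_eq_mul] at this
    omega
  obtain ⟨b₀, hb₀f, hb₀4⟩ := hex
  have hb₀ : b₀ ∈ B := (Set.Finite.mem_toFinset _).1 hb₀f
  have hNb : G.neighborSet b₀ = A := by
    apply Set.eq_of_subset_of_ncard_le (hbip.symm.nbr_subset hb₀) ?_ (Set.toFinite _)
    rw [hA]
    exact hb₀4
  have hNa : G.neighborSet a₀ = B := by
    apply Set.eq_of_subset_of_ncard_le (hbip.nbr_subset ha₀) ?_ (Set.toFinite _)
    rw [hB, ← hd4, mdeg]
  have hadj : G.Adj a₀ b₀ := by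
    have : a₀ ∈ G.neighborSet b₀ := by rw [hNb]; exact ha₀
    exact (this : G.Adj b₀ a₀).symm
  refine ⟨s(a₀, b₀), (SimpleGraph.mem_edgeSet G).2 hadj, ?_⟩
  set G' := G.deleteEdges {s(a₀, b₀)} with hG'
  have hbip' : IsBipartition G' A B := deleteEdges_bip hbip _
  have hdeg' : ∀ v, 4 + 2 ≤ 2 * mdeg G' v := by
    intro v
    by_cases hva : v = a₀
    · subst hva
      have : G'.neighborSet v = G.neighborSet v \ {b₀} := deleteEdge_nbr_end hadj.ne
      rw [mdeg, this, Set.ncard_diff_singleton_of_mem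
        (show b₀ ∈ G.neighborSet v from hadj)]
      rw [mdeg] at hd4
      omega
    by_cases hvb : v = b₀
    · subst hvb
      have hswap : G' = G.deleteEdges {s(v, a₀)} := deleteEdge_swap a₀ v
      have : G'.neighborSet v = G.neighborSet v \ {a₀} := by
        rw [hswap]
        exact deleteEdge_nbr_end hadj.ne'
      rw [mdeg, this, Set.ncard_diff_singleton_of_mem
        (show a₀ ∈ G.neighborSet v from hadj.symm)]
      rw [mdeg] at hb₀4
      have hle : (G.neighborSet v).ncard ≤ 4 := by
        rw [← hA]
        exact Set.ncard_le_ncard (hbip.symm.nbr_subset hb₀) (Set.toFinite _)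
      omega
    · have : G'.neighborSet v = G.neighborSet v := deleteEdge_nbr_other hva hvb
      rw [mdeg, this]
      have := hδ v
      rw [mdeg] at this
      omega
  exact isBrace_of hbip' hA hB (by omega) (by omega) hdeg'

lemma forward_classification [Fintype V] (hmin : IsMinimalBrace G)
    (hcard : Fintype.card V ≤ 8) :
    Nonempty (G ≃g K2graph) ∨ Nonempty (G ≃g cycleGraph 4) ∨
      Nonempty (G ≃g K33graph) ∨ Nonempty (G ≃g biwheel 3) := by
  obtain ⟨⟨⟨A, B, hbip⟩, hMC, hno⟩, hminimal⟩ := hmin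
  obtain ⟨M, hM, -⟩ := hMC.2.2 hMC.2.1.choose hMC.2.1.choose_spec
  have hAB : A.ncard = B.ncard := classes_ncard_eq hbip ⟨M, hM⟩
  have hcardV : Fintype.card V = A.ncard + B.ncard := card_eq_classes hbip
  have hk1 : 1 ≤ A.ncard := by
    by_contra h
    push_neg at h
    haveI := hMC.1.nonempty
    have hv := Classical.arbitrary V
    have hcard1 : 1 ≤ Fintype.card V := Fintype.card_pos
    omega
  have hk4 : A.ncard ≤ 4 := by omega
  obtain ⟨e₀, he₀⟩ := hMC.2.1
  have hcases : A.ncard = 1 ∨ A.ncard = 2 ∨ A.ncard = 3 ∨ A.ncard = 4 := by omega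
  obtain ⟨hK2i, hK2i', hK2d, hK2adj, hK2nA, hK2nB, hK2c⟩ := K2_facts
  obtain ⟨hC4i, hC4i', hC4d, hC4adj, hC4nA, hC4nB, hC4c⟩ := C4_facts
  obtain ⟨hK33i, hK33i', hK33d, hK33adj, hK33nA, hK33nB, hK33c⟩ := K33_facts
  rcases hcases with hk | hk | hk | hk
  · -- card 2 : K₂
    left
    have hcompl : ∀ a ∈ A, ∀ b ∈ B, G.Adj a b := by
      obtain ⟨a, hAa⟩ := Set.ncard_eq_one.1 hk
      obtain ⟨b, hBb⟩ := Set.ncard_eq_one.1 (hAB ▸ hk)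
      have hadj : G.Adj a b := by
        induction e₀ using Sym2.ind with
        | _ u v =>
          have huv : G.Adj u v := (SimpleGraph.mem_edgeSet G).1 he₀
          rcases hbip.2.2 u v huv with ⟨hu, hv⟩ | ⟨hu, hv⟩
          · rw [hAa, Set.mem_singleton_iff] at hu
            rw [hBb, Set.mem_singleton_iff] at hv
            rw [← hu, ← hv]; exact huv
          · rw [hBb, Set.mem_singleton_iff] at hu
            rw [hAa, Set.mem_singleton_iff] at hv
            rw [← hu, ← hv]; exact huv.symm
      intro x hx y hy
      rw [hAa, Set.mem_singleton_iff] at hx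
      rw [hBb, Set.mem_singleton_iff] at hy
      rw [hx, hy]; exact hadj
    exact iso_complete_bip hbip hk (hAB ▸ hk) tK2A tK2B hK2i hK2i' hK2d hK2c
      hK2adj hK2nA hK2nB hcompl
  · -- card 4 : C₄
    right; left
    have hδ2 : ∀ v, 2 ≤ mdeg G v := mc_mindeg_two hMC (by omega)
    exact iso_complete_bip hbip hk (hAB ▸ hk) tC4A tC4B hC4i hC4i' hC4d hC4c
      hC4adj hC4nA hC4nB (complete_of_deg hbip (hAB ▸ hk) hδ2)
  · -- card 6 : K₃,₃
    right; right; left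
    have hδ3 : ∀ v, 3 ≤ mdeg G v := brace_mindeg_three hbip hMC hno (by omega)
    exact iso_complete_bip hbip hk (hAB ▸ hk) tK33A tK33B hK33i hK33i' hK33d hK33c
      hK33adj hK33nA hK33nB (complete_of_deg hbip (hAB ▸ hk) hδ3)
  · -- card 8 : cube
    right; right; right
    have hδ3 : ∀ v, 3 ≤ mdeg G v := brace_mindeg_three hbip hMC hno (by omega)
    have hall3 : ∀ v, mdeg G v = 3 := by
      intro v
      have hub : mdeg G v ≤ 4 := by
        rcases hbip.mem_or v with hv | hv
        · rw [mdeg]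
          calc (G.neighborSet v).ncard ≤ B.ncard :=
                Set.ncard_le_ncard (hbip.nbr_subset hv) (Set.toFinite _)
            _ = 4 := by omega
        · rw [mdeg]
          calc (G.neighborSet v).ncard ≤ A.ncard :=
                Set.ncard_le_ncard (hbip.symm.nbr_subset hv) (Set.toFinite _)
            _ = 4 := hk
      rcases Nat.lt_or_ge (mdeg G v) 4 with h4 | h4
      · have := hδ3 v; omega
      · exfalso
        have hd4 : mdeg G v = 4 := by omega
        rcases hbip.mem_or v with hv | hv
        · obtain ⟨e, he, hbr⟩ := deg4_not_minimal hbip hk (by omega) hδ3 hv hd4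
          exact hminimal e he hbr
        · obtain ⟨e, he, hbr⟩ := deg4_not_minimal hbip.symm (by omega) hk hδ3 hv hd4
          exact hminimal e he hbr
    exact iso_cubic_biwheel hbip hk (by omega) hall3

end Forward


section Backward
variable {V : Type*} {G : SimpleGraph V}

lemma pm_of_invol (σ : V → V) (hinv : ∀ v, σ (σ v) = v)
    (hadj : ∀ v, G.Adj v (σ v)) :
    ∃ M : G.Subgraph, M.IsPerfectMatching ∧ ∀ v, s(v, σ v) ∈ M.edgeSet := by
  refine ⟨{ verts := Set.univ,
            Adj := fun u v => G.Adj u v ∧ (v = σ u ∨ u = σ v),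
            adj_sub := fun h => h.1,
            edge_vert := fun _ => Set.mem_univ _,
            symm := ?_ }, ⟨?_, fun v => Set.mem_univ _⟩, ?_⟩
  · refine ⟨?_⟩; rintro u v ⟨h, h2 | h2⟩
    exacts [⟨h.symm, Or.inr h2⟩, ⟨h.symm, Or.inl h2⟩]
  · intro v _
    refine ⟨σ v, ⟨hadj v, Or.inl rfl⟩, ?_⟩
    rintro w ⟨hw, h2 | h2⟩
    · exact h2
    · have h3 : σ v = σ (σ w) := congrArg σ h2
      rw [hinv] at h3
      exact h3.symm
  · intro v
    exact SimpleGraph.Subgraph.mem_edgeSet.2 ⟨hadj v, Or.inl rfl⟩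

/-- Backward direction for the cubic targets `K₃,₃` and the cube. -/
lemma backward_deg3 [Fintype V] {W : Type*} [Fintype W] {H : SimpleGraph W}
    {AH BH : Set W} {k : ℕ} (hbipH : IsBipartition H AH BH)
    (hAH : AH.ncard = k) (hBH : BH.ncard = k) (hdegH : ∀ w, mdeg H w = 3)
    (hk : k = 3 ∨ k = 4) (f : G ≃g H) :
    IsMinimalBrace G ∧ Fintype.card V ≤ 8 := by
  have hbip := iso_pullback_bip hbipH f
  have hA : {v | f v ∈ AH}.ncard = k := (iso_class_ncard f AH).trans hAH
  have hB : {v | f v ∈ BH}.ncard = k := (iso_class_ncard f BH).trans hBH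
  have hdeg : ∀ v, mdeg G v = 3 := fun v => (iso_mdeg f v).trans (hdegH (f v))
  have hcardV : Fintype.card V = 2 * k := by
    rw [card_eq_classes hbip, hA, hB]; omega
  have hbrace : IsBrace G :=
    isBrace_of hbip hA hB (by omega) (by omega) (fun v => by rw [hdeg v]; omega)
  refine ⟨⟨hbrace, ?_⟩, by omega⟩
  intro e he
  induction e using Sym2.ind with
  | _ a b =>
    have hadj : G.Adj a b := (SimpleGraph.mem_edgeSet G).1 he
    exact not_brace_of_deg3_delete hbip (by omega) hdeg hadj

lemma backward_C4 [Fintype V] (f : G ≃g cycleGraph 4) :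
    IsMinimalBrace G ∧ Fintype.card V ≤ 8 := by
  obtain ⟨hbipH, hAH, hBH, hdegH⟩ := C4_bip
  have hbip := iso_pullback_bip hbipH f
  have hA : {v | f v ∈ AC4}.ncard = 2 := (iso_class_ncard f AC4).trans hAH
  have hB : {v | f v ∈ BC4}.ncard = 2 := (iso_class_ncard f BC4).trans hBH
  have hdeg : ∀ v, mdeg G v = 2 := fun v => (iso_mdeg f v).trans (hdegH (f v))
  have hcardV : Fintype.card V = 4 := by
    rw [card_eq_classes hbip, hA, hB]
  have hbrace : IsBrace G :=
    isBrace_of hbip hA hB (by omega) (by omega) (fun v => by rw [hdeg v])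
  refine ⟨⟨hbrace, ?_⟩, by omega⟩
  intro e he
  induction e using Sym2.ind with
  | _ a b =>
    have hadj : G.Adj a b := (SimpleGraph.mem_edgeSet G).1 he
    set G' := G.deleteEdges {s(a, b)} with hG'
    have hNa' : G'.neighborSet a = G.neighborSet a \ {b} := deleteEdge_nbr_end hadj.ne
    have hNcard : (G'.neighborSet a).ncard = 1 := by
      rw [hNa', Set.ncard_diff_singleton_of_mem (show b ∈ G.neighborSet a from hadj)]
      have := hdeg a; rw [mdeg] at this; omega
    obtain ⟨u, hu⟩ := Set.ncard_eq_one.1 hNcard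
    have huN : u ∈ G.neighborSet a \ {b} := by
      rw [← hNa', hu]; rfl
    have hub : u ≠ b := huN.2
    have hau : G.Adj a u := huN.1
    have hua : u ≠ a := hau.ne'
    have hNu : G'.neighborSet u = G.neighborSet u := deleteEdge_nbr_other hua hub
    have hNucard : (G.neighborSet u).ncard = 2 := by
      have := hdeg u; rw [mdeg] at this; exact this
    obtain ⟨w₁, w₂, hw12, hNueq⟩ := Set.ncard_eq_two.1 hNucard
    have haNu : a ∈ G.neighborSet u := hau.symm
    rw [hNueq] at haNu
    have hexw : ∃ w, w ∈ G.neighborSet u ∧ w ≠ a := by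
      rcases haNu with rfl | rfl
      · exact ⟨w₂, by rw [hNueq]; exact Or.inr rfl, fun h => hw12 h.symm⟩
      · exact ⟨w₁, by rw [hNueq]; exact Or.inl rfl, fun h => hw12 h⟩
    obtain ⟨w, hwN, hwa⟩ := hexw
    have hG'uw : G'.Adj u w := by
      rw [hG']
      refine SimpleGraph.deleteEdges_adj.2 ⟨hwN, fun hmem => ?_⟩
      rw [Set.mem_singleton_iff, Sym2.eq_iff] at hmem
      rcases hmem with ⟨h1, -⟩ | ⟨h1, -⟩
      exacts [hua h1, hub h1]
    intro hbr
    exact not_mc_of_pendant hu hG'uw hwa hbr.2.1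

lemma backward_K2 [Fintype V] (f : G ≃g K2graph) :
    IsMinimalBrace G ∧ Fintype.card V ≤ 8 := by
  classical
  obtain ⟨hbipH, hAH, hBH, hdegH⟩ := K2_bip
  have hbip := iso_pullback_bip hbipH f
  have hcardV : Fintype.card V = 2 := by
    rw [Fintype.card_congr f.toEquiv]; rfl
  set a : V := f.symm 0 with hadef
  set b : V := f.symm 1 with hbdef
  have hab : G.Adj a b := by
    apply f.map_rel_iff.1
    rw [hadef, hbdef]
    have h0 : f (f.symm (0 : Fin 2)) = 0 := f.apply_symm_apply 0
    have h1 : f (f.symm (1 : Fin 2)) = 1 := f.apply_symm_apply 1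
    rw [h0, h1]
    decide
  have hmem : ∀ v : V, v = a ∨ v = b := by
    intro v
    have hfin : ∀ x : Fin 2, x = 0 ∨ x = 1 := by decide
    rcases hfin (f v) with h | h
    · left; rw [hadef, ← h, f.symm_apply_apply]
    · right; rw [hbdef, ← h, f.symm_apply_apply]
  set σ : V → V := fun v => if v = a then b else a with hσ
  have hσa : σ a = b := if_pos rfl
  have hσb : σ b = a := if_neg hab.ne'
  have hσv : ∀ v, σ v = a ∨ σ v = b := by
    intro v
    rcases hmem v with rfl | rfl
    exacts [Or.inr hσa, Or.inl hσb]
  have hinv : ∀ v, σ (σ v) = v := by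
    intro v
    rcases hmem v with rfl | rfl
    · rw [hσa, hσb]
    · rw [hσb, hσa]
  have hadjσ : ∀ v, G.Adj v (σ v) := by
    intro v
    rcases hmem v with rfl | rfl
    · rw [hσa]; exact hab
    · rw [hσb]; exact hab.symm
  obtain ⟨M, hM, hMmem⟩ := pm_of_invol σ hinv hadjσ
  haveI : Nonempty V := ⟨a⟩
  have hconn : G.Connected := by
    constructor
    intro u v
    rcases hmem u with rfl | rfl <;> rcases hmem v with rfl | rfl
    · exact SimpleGraph.Reachable.refl _
    · exact hab.reachable
    · exact hab.symm.reachable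
    · exact SimpleGraph.Reachable.refl _
  have hedges : G.edgeSet.Nonempty := ⟨s(a, b), (SimpleGraph.mem_edgeSet G).2 hab⟩
  have hcov : ∀ e ∈ G.edgeSet, ∃ M : G.Subgraph, M.IsPerfectMatching ∧ e ∈ M.edgeSet := by
    intro e
    induction e using Sym2.ind with
    | _ u v =>
      intro he
      have huv : G.Adj u v := (SimpleGraph.mem_edgeSet G).1 he
      refine ⟨M, hM, ?_⟩
      rw [two_elt_edge_eq hcardV huv.ne hab.ne]
      have := hMmem a
      rw [hσa] at this
      exact this
  have hMC : IsMatchingCovered G := ⟨hconn, hedges, hcov⟩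
  have htrivial : ∀ X : Set V, IsTightCut G X → IsTrivialShore X := by
    intro X ht
    have hodd := tight_odd ⟨M, hM⟩ ht
    have hle : X.ncard ≤ 2 := by
      have h := Set.ncard_le_ncard (Set.subset_univ X) (Set.toFinite _)
      rwa [Set.ncard_univ, Nat.card_eq_fintype_card, hcardV] at h
    obtain ⟨j, hj⟩ := hodd
    have h1 : X.ncard = 1 := by omega
    exact Or.inl (Set.ncard_eq_one.1 h1)
  have hbrace : IsBrace G := ⟨⟨_, _, hbip⟩, hMC, htrivial⟩
  refine ⟨⟨hbrace, ?_⟩, by omega⟩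
  intro e he hbr
  obtain ⟨e', he'⟩ := hbr.2.1.2.1
  rw [SimpleGraph.edgeSet_deleteEdges] at he'
  obtain ⟨he'G, he'ne⟩ := he'
  apply he'ne
  rw [Set.mem_singleton_iff]
  revert he'G he
  induction e using Sym2.ind with
  | _ u v =>
    induction e' using Sym2.ind with
    | _ u' v' =>
      intro he he'G
      exact two_elt_edge_eq hcardV ((SimpleGraph.mem_edgeSet G).1 he'G).ne
        ((SimpleGraph.mem_edgeSet G).1 he).ne

end Backward


/-- The only minimal braces of order at most eight are `K₂`, `C₄`,
`K_{3,3}` and the cube `B₈` (the biwheel of order eight). -/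
theorem statement8 {V : Type*} [Fintype V] (G : SimpleGraph V) :
    (IsMinimalBrace G ∧ Fintype.card V ≤ 8) ↔
      (Nonempty (G ≃g K2graph) ∨ Nonempty (G ≃g cycleGraph 4) ∨
       Nonempty (G ≃g K33graph) ∨ Nonempty (G ≃g biwheel 3)) := by
  constructor
  · rintro ⟨hmin, hcard⟩
    exact forward_classification hmin hcard
  · rintro (h | h | h | h)
    · obtain ⟨f⟩ := h
      exact backward_K2 f
    · obtain ⟨f⟩ := h
      exact backward_C4 f
    · obtain ⟨f⟩ := h
      obtain ⟨hbipH, hAH, hBH, hdegH⟩ := K33_bip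
      exact backward_deg3 hbipH hAH hBH hdegH (Or.inl rfl) f
    · obtain ⟨f⟩ := h
      obtain ⟨hbipH, hAH, hBH, hdegH⟩ := BW_bip
      exact backward_deg3 hbipH hAH hBH hdegH (Or.inr rfl) f

end MinimalBraces
end

section
/- The only simple cubic bipartite graphs of order ten are the Möbius ladder M₁₀ and the graph Q₁₀. Equivalently: a simple 3-regular bipartite graph G of order ten is isomorphic to Q₁₀ if its bipartite complement is disconnected, and isomorphic to M₁₀ if its bipartite complement is connected. -/
namespace MinimalBraces

open SimpleGraph

/-! ### Auxiliary material for the proof of Statement 9 -/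

instance qdec : DecidableRel (Qgraph 5).Adj := fun x y =>
  match x, y with
  | Sum.inl _, Sum.inl _ => decidable_of_iff' _ (SimpleGraph.fromRel_adj _ _ _)
  | Sum.inl _, Sum.inr _ => decidable_of_iff' _ (SimpleGraph.fromRel_adj _ _ _)
  | Sum.inr _, Sum.inl _ => decidable_of_iff' _ (SimpleGraph.fromRel_adj _ _ _)
  | Sum.inr _, Sum.inr _ => decidable_of_iff' _ (SimpleGraph.fromRel_adj _ _ _)

instance mdec : DecidableRel (mobiusLadder 5).Adj := fun x y =>
  decidable_of_iff' _ (SimpleGraph.fromRel_adj _ x y)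

def qmapM : Fin 5 ⊕ Fin 5 → ZMod (2*5) :=
  Sum.elim (fun i => ((4*(i:ℕ) : ℕ) : ZMod (2*5))) (fun j => ((4*(j:ℕ)+3 : ℕ) : ZMod (2*5)))

lemma qmapM_inj : Function.Injective qmapM := by decide
lemma other_elt {α : Type*} {s : Set α} (h : s.ncard = 2) {z : α} (hz : z ∈ s) :
    ∃ w, z ≠ w ∧ s = {z, w} := by
  obtain ⟨x, y, hxy, rfl⟩ := Set.ncard_eq_two.mp h
  simp only [Set.mem_insert_iff, Set.mem_singleton_iff] at hz
  rcases hz with rfl | rfl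
  · exact ⟨y, hxy, rfl⟩
  · exact ⟨x, hxy.symm, Set.pair_comm x z⟩

lemma eq_pair' {α : Type*} [Finite α] {s : Set α} (h : s.ncard = 2) {x y : α}
    (hx : x ∈ s) (hy : y ∈ s) (hxy : x ≠ y) : s = {x, y} :=
  (Set.eq_of_subset_of_ncard_le
    (by intro z hz
        simp only [Set.mem_insert_iff, Set.mem_singleton_iff] at hz
        rcases hz with rfl | rfl <;> assumption)
    (by rw [h, Set.ncard_pair hxy]) (Set.toFinite s)).symm

lemma one_elt {α : Type*} {s : Set α} (h : s.ncard = 1) {x y : α}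
    (hx : x ∈ s) (hy : y ∈ s) : x = y := by
  obtain ⟨w, rfl⟩ := Set.ncard_eq_one.mp h
  rw [Set.mem_singleton_iff] at hx hy
  rw [hx, hy]

lemma ncard4 {α : Type*} [Finite α] {x0 x1 x2 x3 : α} (h01 : x0 ≠ x1) (h02 : x0 ≠ x2)
    (h03 : x0 ≠ x3) (h12 : x1 ≠ x2) (h13 : x1 ≠ x3) (h23 : x2 ≠ x3) :
    ({x0, x1, x2, x3} : Set α).ncard = 4 := by
  rw [Set.ncard_insert_of_notMem (by simp [h01, h02, h03]),
    Set.ncard_insert_of_notMem (by simp [h12, h13]), Set.ncard_pair h23]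

lemma ncard5 {α : Type*} [Finite α] {x0 x1 x2 x3 x4 : α} (h01 : x0 ≠ x1) (h02 : x0 ≠ x2)
    (h03 : x0 ≠ x3) (h04 : x0 ≠ x4) (h12 : x1 ≠ x2) (h13 : x1 ≠ x3) (h14 : x1 ≠ x4)
    (h23 : x2 ≠ x3) (h24 : x2 ≠ x4) (h34 : x3 ≠ x4) :
    ({x0, x1, x2, x3, x4} : Set α).ncard = 5 := by
  rw [Set.ncard_insert_of_notMem (by simp [h01, h02, h03, h04]),
    Set.ncard_insert_of_notMem (by simp [h12, h13, h14]),
    Set.ncard_insert_of_notMem (by simp [h23, h24]), Set.ncard_pair h34]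

lemma ncard3 {α : Type*} [Finite α] {x0 x1 x2 : α} (h01 : x0 ≠ x1) (h02 : x0 ≠ x2)
    (h12 : x1 ≠ x2) : ({x0, x1, x2} : Set α).ncard = 3 := by
  rw [Set.ncard_insert_of_notMem (by simp [h01, h02]), Set.ncard_pair h12]

lemma classes_card {V : Type*} [Fintype V] (G : SimpleGraph V) (A B : Set V)
    (hun : A ∪ B = Set.univ) (hdis : A ∩ B = ∅)
    (hcross : ∀ u v : V, G.Adj u v → (u ∈ A ∧ v ∈ B) ∨ (u ∈ B ∧ v ∈ A))
    (hcard : Fintype.card V = 10) (hcubic : ∀ v, mdeg G v = 3) :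
    A.ncard = 5 ∧ B.ncard = 5 := by
  classical
  have hAB : A.ncard + B.ncard = 10 := by
    rw [← Set.ncard_union_eq (Set.disjoint_iff_inter_eq_empty.mpr hdis) A.toFinite B.toFinite,
      hun, Set.ncard_univ, Nat.card_eq_fintype_card, hcard]
  have hnotboth : ∀ v, v ∈ A → v ∈ B → False := fun v h1 h2 => by
    have : v ∈ A ∩ B := ⟨h1, h2⟩
    simp [hdis] at this
  have hdeg : ∀ v, (G.neighborFinset v).card = 3 := fun v => by
    have := hcubic v
    rw [G.neighborFinset_def, ← Set.ncard_eq_toFinset_card']; exact this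
  set P : Finset (V × V) := Finset.univ.filter (fun p : V × V => p.1 ∈ A ∧ G.Adj p.1 p.2) with hP
  have h1 : P.card = 3 * A.ncard := by
    rw [Finset.card_eq_sum_card_fiberwise (f := Prod.fst) (t := A.toFinset)
      (fun p hp => by simp only [hP, Finset.mem_coe, Finset.mem_filter] at hp; simp [hp.2.1])]
    have hfib : ∀ a ∈ A.toFinset, (P.filter (fun p => p.1 = a)).card = 3 := by
      intro a ha
      have haA : a ∈ A := by simpa using ha
      rw [← hdeg a]
      apply Finset.card_bij (fun p _ => p.2)
      · rintro ⟨x, y⟩ hp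
        simp only [hP, Finset.mem_filter, Finset.mem_univ, true_and] at hp
        obtain ⟨⟨_, hadj⟩, rfl⟩ := hp
        simpa using hadj
      · rintro ⟨x1, y1⟩ h1 ⟨x2, y2⟩ h2 h
        simp only [hP, Finset.mem_filter] at h1 h2
        simp_all
      · intro b hb
        simp only [mem_neighborFinset] at hb
        exact ⟨(a, b), by simp [hP, haA, hb], rfl⟩
    rw [Finset.sum_congr rfl hfib, Finset.sum_const, smul_eq_mul,
      Set.ncard_eq_toFinset_card' A, Nat.mul_comm]
  have h2 : P.card = 3 * B.ncard := by
    rw [Finset.card_eq_sum_card_fiberwise (f := Prod.snd) (t := B.toFinset)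
      (fun p hp => by
        simp only [hP, Finset.mem_coe, Finset.mem_filter] at hp
        rcases hcross _ _ hp.2.2 with ⟨_, h⟩ | ⟨h, _⟩
        · simp [h]
        · exact absurd hp.2.1 (fun hA => hnotboth _ hA h))]
    have hfib : ∀ b ∈ B.toFinset, (P.filter (fun p => p.2 = b)).card = 3 := by
      intro b hb
      have hbB : b ∈ B := by simpa using hb
      rw [← hdeg b]
      apply Finset.card_bij (fun p _ => p.1)
      · rintro ⟨x, y⟩ hp
        simp only [hP, Finset.mem_filter, Finset.mem_univ, true_and] at hp
        obtain ⟨⟨_, hadj⟩, rfl⟩ := hp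
        simpa using hadj.symm
      · rintro ⟨x1, y1⟩ h1 ⟨x2, y2⟩ h2 h
        simp only [hP, Finset.mem_filter] at h1 h2
        simp_all
      · intro a hadj
        simp only [mem_neighborFinset] at hadj
        have haA : a ∈ A := by
          rcases hcross _ _ hadj with ⟨h, _⟩ | ⟨_, h⟩
          · exact absurd hbB (fun _ => hnotboth _ h hbB)
          · exact h
        exact ⟨(a, b), by simp [hP, haA, hadj.symm], rfl⟩
    rw [Finset.sum_congr rfl hfib, Finset.sum_const, smul_eq_mul,
      Set.ncard_eq_toFinset_card' B, Nat.mul_comm]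
  omega


set_option maxHeartbeats 1000000 in
lemma Qcase {V : Type*} [Fintype V] (G : SimpleGraph V) (A B : Set V)
    (hdis : A ∩ B = ∅)
    (hcross : ∀ u v : V, G.Adj u v → (u ∈ A ∧ v ∈ B) ∨ (u ∈ B ∧ v ∈ A))
    (hcard : Fintype.card V = 10)
    (a0 a1 a2 a3 a4 b0 b1 b2 b3 b4 : V)
    (hAeq : A = {a0, a1, a2, a3, a4}) (hBeq : B = {b0, b1, b2, b3, b4})
    (ha01 : a0 ≠ a1)
    (ha02 : a0 ≠ a2)
    (ha03 : a0 ≠ a3)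
    (ha04 : a0 ≠ a4)
    (ha12 : a1 ≠ a2)
    (ha13 : a1 ≠ a3)
    (ha14 : a1 ≠ a4)
    (ha23 : a2 ≠ a3)
    (ha24 : a2 ≠ a4)
    (ha34 : a3 ≠ a4)
    (hb01 : b0 ≠ b1)
    (hb02 : b0 ≠ b2)
    (hb03 : b0 ≠ b3)
    (hb04 : b0 ≠ b4)
    (hb12 : b1 ≠ b2)
    (hb13 : b1 ≠ b3)
    (hb14 : b1 ≠ b4)
    (hb23 : b2 ≠ b3)
    (hb24 : b2 ≠ b4)
    (hb34 : b3 ≠ b4)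
    (hN0 : ∀ b ∈ B, (¬ G.Adj a0 b ↔ (b = b0 ∨ b = b1)))
    (hN1 : ∀ b ∈ B, (¬ G.Adj a1 b ↔ (b = b0 ∨ b = b1)))
    (hN2 : ∀ b ∈ B, (¬ G.Adj a2 b ↔ (b = b2 ∨ b = b3)))
    (hN3 : ∀ b ∈ B, (¬ G.Adj a3 b ↔ (b = b3 ∨ b = b4)))
    (hN4 : ∀ b ∈ B, (¬ G.Adj a4 b ↔ (b = b2 ∨ b = b4))) :
    (¬ (bipComplement G A B).Connected → Nonempty (G ≃g Qgraph 5)) ∧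
    ((bipComplement G A B).Connected → Nonempty (G ≃g mobiusLadder 5)) := by
  classical
  have hnotboth : ∀ v, v ∈ A → v ∈ B → False := fun v h1 h2 => by
    have : v ∈ A ∩ B := ⟨h1, h2⟩
    simp [hdis] at this
  have ha0A : a0 ∈ A := by simp [hAeq]
  have ha1A : a1 ∈ A := by simp [hAeq]
  have ha2A : a2 ∈ A := by simp [hAeq]
  have ha3A : a3 ∈ A := by simp [hAeq]
  have ha4A : a4 ∈ A := by simp [hAeq]
  have hb0B : b0 ∈ B := by simp [hBeq]
  have hb1B : b1 ∈ B := by simp [hBeq]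
  have hb2B : b2 ∈ B := by simp [hBeq]
  have hb3B : b3 ∈ B := by simp [hBeq]
  have hb4B : b4 ∈ B := by simp [hBeq]
  have hnAA : ∀ u v, u ∈ A → v ∈ A → ¬ G.Adj u v := by
    intro u v hu hv h
    rcases hcross u v h with ⟨_, h2⟩ | ⟨h2, _⟩
    · exact hnotboth v hv h2
    · exact hnotboth u hu h2
  have hnBB : ∀ u v, u ∈ B → v ∈ B → ¬ G.Adj u v := by
    intro u v hu hv h
    rcases hcross u v h with ⟨h2, _⟩ | ⟨_, h2⟩
    · exact hnotboth u h2 hu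
    · exact hnotboth v h2 hv

  have hA00 : ¬ G.Adj a0 b0 := (hN0 b0 hb0B).mpr (Or.inl rfl)
  have hA01 : ¬ G.Adj a0 b1 := (hN0 b1 hb1B).mpr (Or.inr rfl)
  have hA02 : G.Adj a0 b2 := by
    by_contra h
    rcases (hN0 b2 hb2B).mp h with h | h
    · exact hb02 h.symm
    · exact hb12 h.symm
  have hA03 : G.Adj a0 b3 := by
    by_contra h
    rcases (hN0 b3 hb3B).mp h with h | h
    · exact hb03 h.symm
    · exact hb13 h.symm
  have hA04 : G.Adj a0 b4 := by
    by_contra h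
    rcases (hN0 b4 hb4B).mp h with h | h
    · exact hb04 h.symm
    · exact hb14 h.symm
  have hA10 : ¬ G.Adj a1 b0 := (hN1 b0 hb0B).mpr (Or.inl rfl)
  have hA11 : ¬ G.Adj a1 b1 := (hN1 b1 hb1B).mpr (Or.inr rfl)
  have hA12 : G.Adj a1 b2 := by
    by_contra h
    rcases (hN1 b2 hb2B).mp h with h | h
    · exact hb02 h.symm
    · exact hb12 h.symm
  have hA13 : G.Adj a1 b3 := by
    by_contra h
    rcases (hN1 b3 hb3B).mp h with h | h
    · exact hb03 h.symm
    · exact hb13 h.symm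
  have hA14 : G.Adj a1 b4 := by
    by_contra h
    rcases (hN1 b4 hb4B).mp h with h | h
    · exact hb04 h.symm
    · exact hb14 h.symm
  have hA20 : G.Adj a2 b0 := by
    by_contra h
    rcases (hN2 b0 hb0B).mp h with h | h
    · exact hb02 h
    · exact hb03 h
  have hA21 : G.Adj a2 b1 := by
    by_contra h
    rcases (hN2 b1 hb1B).mp h with h | h
    · exact hb12 h
    · exact hb13 h
  have hA22 : ¬ G.Adj a2 b2 := (hN2 b2 hb2B).mpr (Or.inl rfl)
  have hA23 : ¬ G.Adj a2 b3 := (hN2 b3 hb3B).mpr (Or.inr rfl)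
  have hA24 : G.Adj a2 b4 := by
    by_contra h
    rcases (hN2 b4 hb4B).mp h with h | h
    · exact hb24 h.symm
    · exact hb34 h.symm
  have hA30 : G.Adj a3 b0 := by
    by_contra h
    rcases (hN3 b0 hb0B).mp h with h | h
    · exact hb03 h
    · exact hb04 h
  have hA31 : G.Adj a3 b1 := by
    by_contra h
    rcases (hN3 b1 hb1B).mp h with h | h
    · exact hb13 h
    · exact hb14 h
  have hA32 : G.Adj a3 b2 := by
    by_contra h
    rcases (hN3 b2 hb2B).mp h with h | h
    · exact hb23 h
    · exact hb24 h
  have hA33 : ¬ G.Adj a3 b3 := (hN3 b3 hb3B).mpr (Or.inl rfl)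
  have hA34 : ¬ G.Adj a3 b4 := (hN3 b4 hb4B).mpr (Or.inr rfl)
  have hA40 : G.Adj a4 b0 := by
    by_contra h
    rcases (hN4 b0 hb0B).mp h with h | h
    · exact hb02 h
    · exact hb04 h
  have hA41 : G.Adj a4 b1 := by
    by_contra h
    rcases (hN4 b1 hb1B).mp h with h | h
    · exact hb12 h
    · exact hb14 h
  have hA42 : ¬ G.Adj a4 b2 := (hN4 b2 hb2B).mpr (Or.inl rfl)
  have hA43 : G.Adj a4 b3 := by
    by_contra h
    rcases (hN4 b3 hb3B).mp h with h | h
    · exact hb23 h.symm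
    · exact hb34 h
  have hA44 : ¬ G.Adj a4 b4 := (hN4 b4 hb4B).mpr (Or.inr rfl)
  have hM0 : ∀ a ∈ A, (¬ G.Adj a b0 ↔ (a = a0 ∨ a = a1)) := by
    intro a ha
    rw [hAeq] at ha
    simp only [Set.mem_insert_iff, Set.mem_singleton_iff] at ha
    rcases ha with rfl | rfl | rfl | rfl | rfl
    · exact iff_of_true hA00 (Or.inl rfl)
    · exact iff_of_true hA10 (Or.inr rfl)
    · refine iff_of_false (not_not_intro hA20) ?_
      rintro (h | h)
      · exact ha02 h.symm
      · exact ha12 h.symm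
    · refine iff_of_false (not_not_intro hA30) ?_
      rintro (h | h)
      · exact ha03 h.symm
      · exact ha13 h.symm
    · refine iff_of_false (not_not_intro hA40) ?_
      rintro (h | h)
      · exact ha04 h.symm
      · exact ha14 h.symm
  have hM1 : ∀ a ∈ A, (¬ G.Adj a b1 ↔ (a = a0 ∨ a = a1)) := by
    intro a ha
    rw [hAeq] at ha
    simp only [Set.mem_insert_iff, Set.mem_singleton_iff] at ha
    rcases ha with rfl | rfl | rfl | rfl | rfl
    · exact iff_of_true hA01 (Or.inl rfl)
    · exact iff_of_true hA11 (Or.inr rfl)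
    · refine iff_of_false (not_not_intro hA21) ?_
      rintro (h | h)
      · exact ha02 h.symm
      · exact ha12 h.symm
    · refine iff_of_false (not_not_intro hA31) ?_
      rintro (h | h)
      · exact ha03 h.symm
      · exact ha13 h.symm
    · refine iff_of_false (not_not_intro hA41) ?_
      rintro (h | h)
      · exact ha04 h.symm
      · exact ha14 h.symm
  have hM2 : ∀ a ∈ A, (¬ G.Adj a b2 ↔ (a = a2 ∨ a = a4)) := by
    intro a ha
    rw [hAeq] at ha
    simp only [Set.mem_insert_iff, Set.mem_singleton_iff] at ha
    rcases ha with rfl | rfl | rfl | rfl | rfl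
    · refine iff_of_false (not_not_intro hA02) ?_
      rintro (h | h)
      · exact ha02 h
      · exact ha04 h
    · refine iff_of_false (not_not_intro hA12) ?_
      rintro (h | h)
      · exact ha12 h
      · exact ha14 h
    · exact iff_of_true hA22 (Or.inl rfl)
    · refine iff_of_false (not_not_intro hA32) ?_
      rintro (h | h)
      · exact ha23 h.symm
      · exact ha34 h
    · exact iff_of_true hA42 (Or.inr rfl)
  have hM3 : ∀ a ∈ A, (¬ G.Adj a b3 ↔ (a = a2 ∨ a = a3)) := by
    intro a ha
    rw [hAeq] at ha
    simp only [Set.mem_insert_iff, Set.mem_singleton_iff] at ha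
    rcases ha with rfl | rfl | rfl | rfl | rfl
    · refine iff_of_false (not_not_intro hA03) ?_
      rintro (h | h)
      · exact ha02 h
      · exact ha03 h
    · refine iff_of_false (not_not_intro hA13) ?_
      rintro (h | h)
      · exact ha12 h
      · exact ha13 h
    · exact iff_of_true hA23 (Or.inl rfl)
    · exact iff_of_true hA33 (Or.inr rfl)
    · refine iff_of_false (not_not_intro hA43) ?_
      rintro (h | h)
      · exact ha24 h.symm
      · exact ha34 h.symm
  have hM4 : ∀ a ∈ A, (¬ G.Adj a b4 ↔ (a = a3 ∨ a = a4)) := by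
    intro a ha
    rw [hAeq] at ha
    simp only [Set.mem_insert_iff, Set.mem_singleton_iff] at ha
    rcases ha with rfl | rfl | rfl | rfl | rfl
    · refine iff_of_false (not_not_intro hA04) ?_
      rintro (h | h)
      · exact ha03 h
      · exact ha04 h
    · refine iff_of_false (not_not_intro hA14) ?_
      rintro (h | h)
      · exact ha13 h
      · exact ha14 h
    · refine iff_of_false (not_not_intro hA24) ?_
      rintro (h | h)
      · exact ha23 h
      · exact ha24 h
    · exact iff_of_true hA34 (Or.inl rfl)
    · exact iff_of_true hA44 (Or.inr rfl)
  set av : Fin 5 → V := ![a0, a1, a2, a3, a4] with hav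
  set bv : Fin 5 → V := ![b0, b1, b4, b2, b3] with hbv
  have hmemav : ∀ i, av i ∈ A := by
    intro i
    fin_cases i
    · exact ha0A
    · exact ha1A
    · exact ha2A
    · exact ha3A
    · exact ha4A
  have hmembv : ∀ i, bv i ∈ B := by
    intro i
    fin_cases i
    · exact hb0B
    · exact hb1B
    · exact hb4B
    · exact hb2B
    · exact hb3B
  have hinjA : ∀ i j : Fin 5, av i = av j → i = j := by
    intro i j h
    fin_cases i <;> fin_cases j <;>
      first | rfl | exact absurd h ha01 | exact absurd h ha02 | exact absurd h ha03 | exact absurd h ha04 | exact absurd h ha12 | exact absurd h ha13 | exact absurd h ha14 | exact absurd h ha23 | exact absurd h ha24 | exact absurd h ha34 | exact absurd h.symm ha01 | exact absurd h.symm ha02 | exact absurd h.symm ha03 | exact absurd h.symm ha04 | exact absurd h.symm ha12 | exact absurd h.symm ha13 | exact absurd h.symm ha14 | exact absurd h.symm ha23 | exact absurd h.symm ha24 | exact absurd h.symm ha34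
  have hinjB : ∀ i j : Fin 5, bv i = bv j → i = j := by
    intro i j h
    fin_cases i <;> fin_cases j <;>
      first | rfl | exact absurd h hb01 | exact absurd h hb02 | exact absurd h hb03 | exact absurd h hb04 | exact absurd h hb12 | exact absurd h hb13 | exact absurd h hb14 | exact absurd h hb23 | exact absurd h hb24 | exact absurd h hb34 | exact absurd h.symm hb01 | exact absurd h.symm hb02 | exact absurd h.symm hb03 | exact absurd h.symm hb04 | exact absurd h.symm hb12 | exact absurd h.symm hb13 | exact absurd h.symm hb14 | exact absurd h.symm hb23 | exact absurd h.symm hb24 | exact absurd h.symm hb34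
  have hABne : ∀ i j, av i ≠ bv j := fun i j h =>
    hnotboth (av i) (hmemav i) (h ▸ hmembv j)
  set f : Fin 5 ⊕ Fin 5 → V := Sum.elim av bv with hf
  have hfinj : Function.Injective f := by
    rintro (i | i) (j | j) h <;> simp only [hf, Sum.elim_inl, Sum.elim_inr] at h
    · exact congrArg Sum.inl (hinjA i j h)
    · exact absurd h (hABne i j)
    · exact absurd h.symm (hABne j i)
    · exact congrArg Sum.inr (hinjB i j h)
  have hfbij : Function.Bijective f :=
    (Fintype.bijective_iff_injective_and_card f).2 ⟨hfinj, by simp [hcard]⟩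
  set e : (Fin 5 ⊕ Fin 5) ≃ V := Equiv.ofBijective f hfbij with he

  have key0 : ∀ i j : Fin 5, G.Adj (av i) (bv j) ↔ (Qgraph 5).Adj (Sum.inl i) (Sum.inr j) := by
    intro i j
    fin_cases i <;> fin_cases j <;>
      first
        | exact iff_of_true (by assumption) (by decide)
        | exact iff_of_false (by assumption) (by decide)
  have key : ∀ p q : Fin 5 ⊕ Fin 5, G.Adj (f p) (f q) ↔ (Qgraph 5).Adj p q := by
    rintro (i | i) (j | j) <;> simp only [hf, Sum.elim_inl, Sum.elim_inr]
    · exact iff_of_false (hnAA _ _ (hmemav i) (hmemav j))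
        ((by decide : ∀ i j : Fin 5, ¬ (Qgraph 5).Adj (Sum.inl i) (Sum.inl j)) i j)
    · exact key0 i j
    · rw [G.adj_comm, (Qgraph 5).adj_comm]
      exact key0 j i
    · exact iff_of_false (hnBB _ _ (hmembv i) (hmembv j))
        ((by decide : ∀ i j : Fin 5, ¬ (Qgraph 5).Adj (Sum.inr i) (Sum.inr j)) i j)
  have hQiso : Nonempty (G ≃g Qgraph 5) := by
    refine ⟨⟨e.symm, ?_⟩⟩
    intro x y
    obtain ⟨p, rfl⟩ := e.surjective x
    obtain ⟨q, rfl⟩ := e.surjective y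
    simp only [Equiv.symm_apply_apply]
    exact ((key p q).symm : _)
  have hHadj : ∀ u v, (bipComplement G A B).Adj u v ↔
      u ≠ v ∧ ((u ∈ A ∧ v ∈ B ∧ ¬ G.Adj u v) ∨ (v ∈ A ∧ u ∈ B ∧ ¬ G.Adj v u)) :=
    fun u v => SimpleGraph.fromRel_adj _ u v
  have hclosed : ∀ u v : V, u ∈ ({a0, a1, b0, b1} : Set V) →
      (bipComplement G A B).Adj u v → v ∈ ({a0, a1, b0, b1} : Set V) := by
    intro u v hu hadj
    rw [hHadj] at hadj
    obtain ⟨hne, hor⟩ := hadj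
    simp only [Set.mem_insert_iff, Set.mem_singleton_iff] at hu ⊢
    rcases hu with rfl | rfl | rfl | rfl
    · rcases hor with ⟨_, hvB, hnadj⟩ | ⟨_, huB, _⟩
      · rcases (hN0 v hvB).mp hnadj with rfl | rfl <;> simp
      · exact absurd huB (fun h => hnotboth _ ha0A h)
    · rcases hor with ⟨_, hvB, hnadj⟩ | ⟨_, huB, _⟩
      · rcases (hN1 v hvB).mp hnadj with rfl | rfl <;> simp
      · exact absurd huB (fun h => hnotboth _ ha1A h)
    · rcases hor with ⟨huA, _, _⟩ | ⟨hvA, _, hnadj⟩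
      · exact absurd huA (fun h => hnotboth _ h hb0B)
      · rcases (hM0 v hvA).mp hnadj with rfl | rfl <;> simp
    · rcases hor with ⟨huA, _, _⟩ | ⟨hvA, _, hnadj⟩
      · exact absurd huA (fun h => hnotboth _ h hb1B)
      · rcases (hM1 v hvA).mp hnadj with rfl | rfl <;> simp
  have hwalk : ∀ {x y : V}, (bipComplement G A B).Walk x y →
      x ∈ ({a0, a1, b0, b1} : Set V) → y ∈ ({a0, a1, b0, b1} : Set V) := by
    intro x y w
    induction w with
    | nil => exact id
    | cons hadj p ih => exact fun hx => ih (hclosed _ _ hx hadj)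
  have hnc : ¬ (bipComplement G A B).Connected := by
    intro hconn
    obtain ⟨w⟩ := hconn.preconnected a0 a2
    have := hwalk w (by simp)
    simp only [Set.mem_insert_iff, Set.mem_singleton_iff] at this
    rcases this with h | h | h | h
    · exact ha02 h.symm
    · exact ha12 h.symm
    · exact hnotboth a2 ha2A (h ▸ hb0B)
    · exact hnotboth a2 ha2A (h ▸ hb1B)
  exact ⟨fun _ => hQiso, fun h => absurd h hnc⟩

set_option maxHeartbeats 1000000 in
lemma Mcase {V : Type*} [Fintype V] (G : SimpleGraph V) (A B : Set V)
    (hun : A ∪ B = Set.univ) (hdis : A ∩ B = ∅)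
    (hcross : ∀ u v : V, G.Adj u v → (u ∈ A ∧ v ∈ B) ∨ (u ∈ B ∧ v ∈ A))
    (hcard : Fintype.card V = 10)
    (a0 a1 a2 a3 a4 b0 b1 b2 b3 b4 : V)
    (hAeq : A = {a0, a1, a2, a3, a4}) (hBeq : B = {b0, b1, b2, b3, b4})
    (ha01 : a0 ≠ a1)
    (ha02 : a0 ≠ a2)
    (ha03 : a0 ≠ a3)
    (ha04 : a0 ≠ a4)
    (ha12 : a1 ≠ a2)
    (ha13 : a1 ≠ a3)
    (ha14 : a1 ≠ a4)
    (ha23 : a2 ≠ a3)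
    (ha24 : a2 ≠ a4)
    (ha34 : a3 ≠ a4)
    (hb01 : b0 ≠ b1)
    (hb02 : b0 ≠ b2)
    (hb03 : b0 ≠ b3)
    (hb04 : b0 ≠ b4)
    (hb12 : b1 ≠ b2)
    (hb13 : b1 ≠ b3)
    (hb14 : b1 ≠ b4)
    (hb23 : b2 ≠ b3)
    (hb24 : b2 ≠ b4)
    (hb34 : b3 ≠ b4)
    (hN0 : ∀ b ∈ B, (¬ G.Adj a0 b ↔ (b = b0 ∨ b = b1)))
    (hN1 : ∀ b ∈ B, (¬ G.Adj a1 b ↔ (b = b1 ∨ b = b2)))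
    (hN2 : ∀ b ∈ B, (¬ G.Adj a2 b ↔ (b = b2 ∨ b = b3)))
    (hN3 : ∀ b ∈ B, (¬ G.Adj a3 b ↔ (b = b3 ∨ b = b4)))
    (hN4 : ∀ b ∈ B, (¬ G.Adj a4 b ↔ (b = b0 ∨ b = b4))) :
    (¬ (bipComplement G A B).Connected → Nonempty (G ≃g Qgraph 5)) ∧
    ((bipComplement G A B).Connected → Nonempty (G ≃g mobiusLadder 5)) := by
  classical
  have hnotboth : ∀ v, v ∈ A → v ∈ B → False := fun v h1 h2 => by
    have : v ∈ A ∩ B := ⟨h1, h2⟩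
    simp [hdis] at this
  have ha0A : a0 ∈ A := by simp [hAeq]
  have ha1A : a1 ∈ A := by simp [hAeq]
  have ha2A : a2 ∈ A := by simp [hAeq]
  have ha3A : a3 ∈ A := by simp [hAeq]
  have ha4A : a4 ∈ A := by simp [hAeq]
  have hb0B : b0 ∈ B := by simp [hBeq]
  have hb1B : b1 ∈ B := by simp [hBeq]
  have hb2B : b2 ∈ B := by simp [hBeq]
  have hb3B : b3 ∈ B := by simp [hBeq]
  have hb4B : b4 ∈ B := by simp [hBeq]
  have hnAA : ∀ u v, u ∈ A → v ∈ A → ¬ G.Adj u v := by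
    intro u v hu hv h
    rcases hcross u v h with ⟨_, h2⟩ | ⟨h2, _⟩
    · exact hnotboth v hv h2
    · exact hnotboth u hu h2
  have hnBB : ∀ u v, u ∈ B → v ∈ B → ¬ G.Adj u v := by
    intro u v hu hv h
    rcases hcross u v h with ⟨h2, _⟩ | ⟨_, h2⟩
    · exact hnotboth u h2 hu
    · exact hnotboth v h2 hv

  have hA00 : ¬ G.Adj a0 b0 := (hN0 b0 hb0B).mpr (Or.inl rfl)
  have hA01 : ¬ G.Adj a0 b1 := (hN0 b1 hb1B).mpr (Or.inr rfl)
  have hA02 : G.Adj a0 b2 := by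
    by_contra h
    rcases (hN0 b2 hb2B).mp h with h | h
    · exact hb02 h.symm
    · exact hb12 h.symm
  have hA03 : G.Adj a0 b3 := by
    by_contra h
    rcases (hN0 b3 hb3B).mp h with h | h
    · exact hb03 h.symm
    · exact hb13 h.symm
  have hA04 : G.Adj a0 b4 := by
    by_contra h
    rcases (hN0 b4 hb4B).mp h with h | h
    · exact hb04 h.symm
    · exact hb14 h.symm
  have hA10 : G.Adj a1 b0 := by
    by_contra h
    rcases (hN1 b0 hb0B).mp h with h | h
    · exact hb01 h
    · exact hb02 h
  have hA11 : ¬ G.Adj a1 b1 := (hN1 b1 hb1B).mpr (Or.inl rfl)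
  have hA12 : ¬ G.Adj a1 b2 := (hN1 b2 hb2B).mpr (Or.inr rfl)
  have hA13 : G.Adj a1 b3 := by
    by_contra h
    rcases (hN1 b3 hb3B).mp h with h | h
    · exact hb13 h.symm
    · exact hb23 h.symm
  have hA14 : G.Adj a1 b4 := by
    by_contra h
    rcases (hN1 b4 hb4B).mp h with h | h
    · exact hb14 h.symm
    · exact hb24 h.symm
  have hA20 : G.Adj a2 b0 := by
    by_contra h
    rcases (hN2 b0 hb0B).mp h with h | h
    · exact hb02 h
    · exact hb03 h
  have hA21 : G.Adj a2 b1 := by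
    by_contra h
    rcases (hN2 b1 hb1B).mp h with h | h
    · exact hb12 h
    · exact hb13 h
  have hA22 : ¬ G.Adj a2 b2 := (hN2 b2 hb2B).mpr (Or.inl rfl)
  have hA23 : ¬ G.Adj a2 b3 := (hN2 b3 hb3B).mpr (Or.inr rfl)
  have hA24 : G.Adj a2 b4 := by
    by_contra h
    rcases (hN2 b4 hb4B).mp h with h | h
    · exact hb24 h.symm
    · exact hb34 h.symm
  have hA30 : G.Adj a3 b0 := by
    by_contra h
    rcases (hN3 b0 hb0B).mp h with h | h
    · exact hb03 h
    · exact hb04 h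
  have hA31 : G.Adj a3 b1 := by
    by_contra h
    rcases (hN3 b1 hb1B).mp h with h | h
    · exact hb13 h
    · exact hb14 h
  have hA32 : G.Adj a3 b2 := by
    by_contra h
    rcases (hN3 b2 hb2B).mp h with h | h
    · exact hb23 h
    · exact hb24 h
  have hA33 : ¬ G.Adj a3 b3 := (hN3 b3 hb3B).mpr (Or.inl rfl)
  have hA34 : ¬ G.Adj a3 b4 := (hN3 b4 hb4B).mpr (Or.inr rfl)
  have hA40 : ¬ G.Adj a4 b0 := (hN4 b0 hb0B).mpr (Or.inl rfl)
  have hA41 : G.Adj a4 b1 := by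
    by_contra h
    rcases (hN4 b1 hb1B).mp h with h | h
    · exact hb01 h.symm
    · exact hb14 h
  have hA42 : G.Adj a4 b2 := by
    by_contra h
    rcases (hN4 b2 hb2B).mp h with h | h
    · exact hb02 h.symm
    · exact hb24 h
  have hA43 : G.Adj a4 b3 := by
    by_contra h
    rcases (hN4 b3 hb3B).mp h with h | h
    · exact hb03 h.symm
    · exact hb34 h
  have hA44 : ¬ G.Adj a4 b4 := (hN4 b4 hb4B).mpr (Or.inr rfl)
  set av : Fin 5 → V := ![a0, a1, a2, a3, a4] with hav
  set bv : Fin 5 → V := ![b0, b1, b2, b3, b4] with hbv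
  have hmemav : ∀ i, av i ∈ A := by
    intro i
    fin_cases i
    · exact ha0A
    · exact ha1A
    · exact ha2A
    · exact ha3A
    · exact ha4A
  have hmembv : ∀ i, bv i ∈ B := by
    intro i
    fin_cases i
    · exact hb0B
    · exact hb1B
    · exact hb2B
    · exact hb3B
    · exact hb4B
  have hinjA : ∀ i j : Fin 5, av i = av j → i = j := by
    intro i j h
    fin_cases i <;> fin_cases j <;>
      first | rfl | exact absurd h ha01 | exact absurd h ha02 | exact absurd h ha03 | exact absurd h ha04 | exact absurd h ha12 | exact absurd h ha13 | exact absurd h ha14 | exact absurd h ha23 | exact absurd h ha24 | exact absurd h ha34 | exact absurd h.symm ha01 | exact absurd h.symm ha02 | exact absurd h.symm ha03 | exact absurd h.symm ha04 | exact absurd h.symm ha12 | exact absurd h.symm ha13 | exact absurd h.symm ha14 | exact absurd h.symm ha23 | exact absurd h.symm ha24 | exact absurd h.symm ha34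
  have hinjB : ∀ i j : Fin 5, bv i = bv j → i = j := by
    intro i j h
    fin_cases i <;> fin_cases j <;>
      first | rfl | exact absurd h hb01 | exact absurd h hb02 | exact absurd h hb03 | exact absurd h hb04 | exact absurd h hb12 | exact absurd h hb13 | exact absurd h hb14 | exact absurd h hb23 | exact absurd h hb24 | exact absurd h hb34 | exact absurd h.symm hb01 | exact absurd h.symm hb02 | exact absurd h.symm hb03 | exact absurd h.symm hb04 | exact absurd h.symm hb12 | exact absurd h.symm hb13 | exact absurd h.symm hb14 | exact absurd h.symm hb23 | exact absurd h.symm hb24 | exact absurd h.symm hb34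
  have hABne : ∀ i j, av i ≠ bv j := fun i j h =>
    hnotboth (av i) (hmemav i) (h ▸ hmembv j)
  set f : Fin 5 ⊕ Fin 5 → V := Sum.elim av bv with hf
  have hfinj : Function.Injective f := by
    rintro (i | i) (j | j) h <;> simp only [hf, Sum.elim_inl, Sum.elim_inr] at h
    · exact congrArg Sum.inl (hinjA i j h)
    · exact absurd h (hABne i j)
    · exact absurd h.symm (hABne j i)
    · exact congrArg Sum.inr (hinjB i j h)
  have hfbij : Function.Bijective f :=
    (Fintype.bijective_iff_injective_and_card f).2 ⟨hfinj, by simp [hcard]⟩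
  set e : (Fin 5 ⊕ Fin 5) ≃ V := Equiv.ofBijective f hfbij with he

  have key0 : ∀ i j : Fin 5, (mobiusLadder 5).Adj (qmapM (Sum.inl i)) (qmapM (Sum.inr j)) ↔ G.Adj (av i) (bv j) := by
    intro i j
    fin_cases i <;> fin_cases j <;>
      first
        | exact iff_of_true (by decide) (by assumption)
        | exact iff_of_false (by decide) (by assumption)
  have key : ∀ p q : Fin 5 ⊕ Fin 5, (mobiusLadder 5).Adj (qmapM p) (qmapM q) ↔ G.Adj (f p) (f q) := by
    rintro (i | i) (j | j) <;> simp only [hf, Sum.elim_inl, Sum.elim_inr]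
    · exact iff_of_false
        ((by decide : ∀ i j : Fin 5, ¬ (mobiusLadder 5).Adj (qmapM (Sum.inl i)) (qmapM (Sum.inl j))) i j)
        (hnAA _ _ (hmemav i) (hmemav j))
    · exact key0 i j
    · exact ((mobiusLadder 5).adj_comm _ _).trans ((key0 j i).trans (G.adj_comm _ _))
    · exact iff_of_false
        ((by decide : ∀ i j : Fin 5, ¬ (mobiusLadder 5).Adj (qmapM (Sum.inr i)) (qmapM (Sum.inr j))) i j)
        (hnBB _ _ (hmembv i) (hmembv j))
  have hqbij : Function.Bijective qmapM :=
    (Fintype.bijective_iff_injective_and_card qmapM).2 ⟨qmapM_inj, by decide⟩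
  have hMiso : Nonempty (G ≃g mobiusLadder 5) := by
    refine ⟨⟨e.symm.trans (Equiv.ofBijective qmapM hqbij), ?_⟩⟩
    intro x y
    obtain ⟨p, rfl⟩ := e.surjective x
    obtain ⟨q, rfl⟩ := e.surjective y
    simp only [Equiv.trans_apply, Equiv.symm_apply_apply, Equiv.ofBijective_apply]
    exact key p q
  have hHadj : ∀ u v, (bipComplement G A B).Adj u v ↔
      u ≠ v ∧ ((u ∈ A ∧ v ∈ B ∧ ¬ G.Adj u v) ∨ (v ∈ A ∧ u ∈ B ∧ ¬ G.Adj v u)) :=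
    fun u v => SimpleGraph.fromRel_adj _ u v
  have hE00 : (bipComplement G A B).Adj a0 b0 :=
    (hHadj _ _).mpr ⟨fun h => hnotboth _ ha0A (h ▸ hb0B), Or.inl ⟨ha0A, hb0B, hA00⟩⟩
  have hE01 : (bipComplement G A B).Adj a0 b1 :=
    (hHadj _ _).mpr ⟨fun h => hnotboth _ ha0A (h ▸ hb1B), Or.inl ⟨ha0A, hb1B, hA01⟩⟩
  have hE11 : (bipComplement G A B).Adj a1 b1 :=
    (hHadj _ _).mpr ⟨fun h => hnotboth _ ha1A (h ▸ hb1B), Or.inl ⟨ha1A, hb1B, hA11⟩⟩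
  have hE12 : (bipComplement G A B).Adj a1 b2 :=
    (hHadj _ _).mpr ⟨fun h => hnotboth _ ha1A (h ▸ hb2B), Or.inl ⟨ha1A, hb2B, hA12⟩⟩
  have hE22 : (bipComplement G A B).Adj a2 b2 :=
    (hHadj _ _).mpr ⟨fun h => hnotboth _ ha2A (h ▸ hb2B), Or.inl ⟨ha2A, hb2B, hA22⟩⟩
  have hE23 : (bipComplement G A B).Adj a2 b3 :=
    (hHadj _ _).mpr ⟨fun h => hnotboth _ ha2A (h ▸ hb3B), Or.inl ⟨ha2A, hb3B, hA23⟩⟩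
  have hE33 : (bipComplement G A B).Adj a3 b3 :=
    (hHadj _ _).mpr ⟨fun h => hnotboth _ ha3A (h ▸ hb3B), Or.inl ⟨ha3A, hb3B, hA33⟩⟩
  have hE34 : (bipComplement G A B).Adj a3 b4 :=
    (hHadj _ _).mpr ⟨fun h => hnotboth _ ha3A (h ▸ hb4B), Or.inl ⟨ha3A, hb4B, hA34⟩⟩
  have hE40 : (bipComplement G A B).Adj a4 b0 :=
    (hHadj _ _).mpr ⟨fun h => hnotboth _ ha4A (h ▸ hb0B), Or.inl ⟨ha4A, hb0B, hA40⟩⟩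
  have hE44 : (bipComplement G A B).Adj a4 b4 :=
    (hHadj _ _).mpr ⟨fun h => hnotboth _ ha4A (h ▸ hb4B), Or.inl ⟨ha4A, hb4B, hA44⟩⟩
  have r0 : (bipComplement G A B).Reachable b0 a0 := (hE00.symm).reachable
  have r1 : (bipComplement G A B).Reachable b1 a0 := (hE01.symm).reachable
  have s1 : (bipComplement G A B).Reachable a1 a0 := (hE11.reachable).trans r1
  have r2 : (bipComplement G A B).Reachable b2 a0 := (hE12.symm.reachable).trans s1
  have s2 : (bipComplement G A B).Reachable a2 a0 := (hE22.reachable).trans r2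
  have r3 : (bipComplement G A B).Reachable b3 a0 := (hE23.symm.reachable).trans s2
  have s3 : (bipComplement G A B).Reachable a3 a0 := (hE33.reachable).trans r3
  have r4 : (bipComplement G A B).Reachable b4 a0 := (hE34.symm.reachable).trans s3
  have s4 : (bipComplement G A B).Reachable a4 a0 := (hE44.reachable).trans r4
  have ru : ∀ u : V, (bipComplement G A B).Reachable u a0 := by
    intro u
    have hu : u ∈ A ∪ B := by rw [hun]; trivial
    rcases hu with hu | hu
    · rw [hAeq] at hu
      simp only [Set.mem_insert_iff, Set.mem_singleton_iff] at hu
      rcases hu with rfl | rfl | rfl | rfl | rfl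
      · exact SimpleGraph.Reachable.refl _
      · exact s1
      · exact s2
      · exact s3
      · exact s4
    · rw [hBeq] at hu
      simp only [Set.mem_insert_iff, Set.mem_singleton_iff] at hu
      rcases hu with rfl | rfl | rfl | rfl | rfl
      · exact r0
      · exact r1
      · exact r2
      · exact r3
      · exact r4
  have hconn : (bipComplement G A B).Connected :=
    (SimpleGraph.connected_iff _).mpr ⟨fun u v => (ru u).trans (ru v).symm, ⟨a0⟩⟩
  exact ⟨fun h => absurd hconn h, fun _ => hMiso⟩


set_option maxHeartbeats 1600000

/-- The only simple cubic bipartite graphs of order ten are `M₁₀` and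
`Q₁₀`: such a graph is isomorphic to `Q₁₀` if its bipartite complement is disconnected,
and isomorphic to `M₁₀` if its bipartite complement is connected. -/
theorem statement9 {V : Type*} [Fintype V] (G : SimpleGraph V) (A B : Set V)
    (hbip : IsBipartition G A B) (hcard : Fintype.card V = 10)
    (hcubic : ∀ v : V, mdeg G v = 3) :
    (¬ (bipComplement G A B).Connected → Nonempty (G ≃g Qgraph 5)) ∧
    ((bipComplement G A B).Connected → Nonempty (G ≃g mobiusLadder 5)) := by
  classical
  obtain ⟨hun, hdis, hcross⟩ := hbip
  obtain ⟨hA5, hB5⟩ := classes_card G A B hun hdis hcross hcard hcubic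
  have hnotboth : ∀ v, v ∈ A → v ∈ B → False := fun v h1 h2 => by
    have : v ∈ A ∩ B := ⟨h1, h2⟩
    simp [hdis] at this
  set NB : V → Set V := fun a => B \ G.neighborSet a with hNBdef
  set NA : V → Set V := fun b => A \ G.neighborSet b with hNAdef
  have hsubB : ∀ a ∈ A, G.neighborSet a ⊆ B := by
    intro a ha x hx
    rcases hcross a x hx with ⟨_, h⟩ | ⟨h, _⟩
    · exact h
    · exact (hnotboth a ha h).elim
  have hsubA : ∀ b ∈ B, G.neighborSet b ⊆ A := by
    intro b hb x hx
    rcases hcross b x hx with ⟨h, _⟩ | ⟨_, h⟩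
    · exact (hnotboth b h hb).elim
    · exact h
  have hNBcard : ∀ a ∈ A, (NB a).ncard = 2 := by
    intro a ha
    have h3 : (G.neighborSet a).ncard = 3 := hcubic a
    have := Set.ncard_diff (hsubB a ha)
    rw [hB5, h3] at this
    simpa [hNBdef] using this
  have hNAcard : ∀ b ∈ B, (NA b).ncard = 2 := by
    intro b hb
    have h3 : (G.neighborSet b).ncard = 3 := hcubic b
    have := Set.ncard_diff (hsubA b hb)
    rw [hA5, h3] at this
    simpa [hNAdef] using this
  have hNBmem : ∀ a b, b ∈ NB a ↔ (b ∈ B ∧ ¬ G.Adj a b) := by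
    intro a b
    simp [hNBdef, Set.mem_diff]
  have hNAmem : ∀ b a, a ∈ NA b ↔ (a ∈ A ∧ ¬ G.Adj a b) := by
    intro b a
    simp only [hNAdef, Set.mem_diff, SimpleGraph.mem_neighborSet]
    rw [G.adj_comm]
  have hswapAB : ∀ a b, a ∈ A → b ∈ NB a → a ∈ NA b := fun a b ha hb =>
    (hNAmem b a).mpr ⟨ha, ((hNBmem a b).mp hb).2⟩
  have hswapBA : ∀ a b, b ∈ B → a ∈ NA b → b ∈ NB a := fun a b hb ha =>
    (hNBmem a b).mpr ⟨hb, ((hNAmem b a).mp ha).2⟩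
  have hNiff : ∀ a b, b ∈ B → (¬ G.Adj a b ↔ b ∈ NB a) := fun a b hb =>
    ⟨fun h => (hNBmem a b).mpr ⟨hb, h⟩, fun h => ((hNBmem a b).mp h).2⟩
  -- start the trace
  obtain ⟨a0, ha0A⟩ : A.Nonempty := Set.nonempty_of_ncard_ne_zero (by rw [hA5]; norm_num)
  obtain ⟨b0, b1, hb01, hNB0⟩ := Set.ncard_eq_two.mp (hNBcard a0 ha0A)
  have hb0NB0 : b0 ∈ NB a0 := by rw [hNB0]; exact Set.mem_insert _ _
  have hb1NB0 : b1 ∈ NB a0 := by rw [hNB0]; exact Set.mem_insert_of_mem _ rfl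
  have hb0B : b0 ∈ B := ((hNBmem _ _).mp hb0NB0).1
  have hb1B : b1 ∈ B := ((hNBmem _ _).mp hb1NB0).1
  obtain ⟨a1, ha01, hNA1⟩ := other_elt (hNAcard b1 hb1B) (hswapAB _ _ ha0A hb1NB0)
  have ha1NA1 : a1 ∈ NA b1 := by rw [hNA1]; exact Set.mem_insert_of_mem _ rfl
  have ha1A : a1 ∈ A := ((hNAmem _ _).mp ha1NA1).1
  obtain ⟨b2, hb12, hNB1⟩ := other_elt (hNBcard a1 ha1A) (hswapBA _ _ hb1B ha1NA1)
  have hb2NB1 : b2 ∈ NB a1 := by rw [hNB1]; exact Set.mem_insert_of_mem _ rfl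
  have hb2B : b2 ∈ B := ((hNBmem _ _).mp hb2NB1).1
  have hnotNB : ∀ x b p q, x ∈ A → NA b = {p, q} → x ≠ p → x ≠ q → b ∉ NB x := by
    intro x b p q hx hNAb hp hq hmem
    have := hswapAB _ _ hx hmem
    rw [hNAb] at this
    simp only [Set.mem_insert_iff, Set.mem_singleton_iff] at this
    tauto
  have hnotNA : ∀ b x p q, b ∈ B → NB x = {p, q} → b ≠ p → b ≠ q → x ∉ NA b := by
    intro b x p q hb hNBx hp hq hmem
    have := hswapBA _ _ hb hmem
    rw [hNBx] at this
    simp only [Set.mem_insert_iff, Set.mem_singleton_iff] at this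
    tauto
  by_cases hc0 : b2 = b0
  · -- the 4-cycle {a0, b0, a1, b1} closes in the bipartite complement
    subst b2
    have hNA0 : NA b0 = {a0, a1} :=
      eq_pair' (hNAcard b0 hb0B) (hswapAB _ _ ha0A hb0NB0) (hswapAB _ _ ha1A hb2NB1) ha01
    have hsub2 : ({a0, a1} : Set V) ⊆ A := by
      intro z hz
      simp only [Set.mem_insert_iff, Set.mem_singleton_iff] at hz
      rcases hz with rfl | rfl <;> assumption
    have hA2card : (A \ {a0, a1}).ncard = 3 := by
      rw [Set.ncard_diff hsub2, hA5, Set.ncard_pair ha01]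
    obtain ⟨a2, ha2mem⟩ : (A \ {a0, a1}).Nonempty :=
      Set.nonempty_of_ncard_ne_zero (by rw [hA2card]; norm_num)
    have ha2A : a2 ∈ A := ha2mem.1
    have ha2n : a2 ≠ a0 ∧ a2 ≠ a1 := by
      have := ha2mem.2
      simp only [Set.mem_insert_iff, Set.mem_singleton_iff] at this
      tauto
    obtain ⟨b2, b3, hb23, hNB2⟩ := Set.ncard_eq_two.mp (hNBcard a2 ha2A)
    have hb2NB2 : b2 ∈ NB a2 := by rw [hNB2]; exact Set.mem_insert _ _
    have hb3NB2 : b3 ∈ NB a2 := by rw [hNB2]; exact Set.mem_insert_of_mem _ rfl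
    have hb2B : b2 ∈ B := ((hNBmem _ _).mp hb2NB2).1
    have hb3B : b3 ∈ B := ((hNBmem _ _).mp hb3NB2).1
    have hb2n0 : b2 ≠ b0 := fun h =>
      hnotNB a2 b0 a0 a1 ha2A hNA0 ha2n.1 ha2n.2 (h ▸ hb2NB2)
    have hb2n1 : b2 ≠ b1 := fun h =>
      hnotNB a2 b1 a0 a1 ha2A hNA1 ha2n.1 ha2n.2 (h ▸ hb2NB2)
    have hb3n0 : b3 ≠ b0 := fun h =>
      hnotNB a2 b0 a0 a1 ha2A hNA0 ha2n.1 ha2n.2 (h ▸ hb3NB2)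
    have hb3n1 : b3 ≠ b1 := fun h =>
      hnotNB a2 b1 a0 a1 ha2A hNA1 ha2n.1 ha2n.2 (h ▸ hb3NB2)
    obtain ⟨a3, ha23, hNA3⟩ := other_elt (hNAcard b3 hb3B) (hswapAB _ _ ha2A hb3NB2)
    have ha3NA3 : a3 ∈ NA b3 := by rw [hNA3]; exact Set.mem_insert_of_mem _ rfl
    have ha3A : a3 ∈ A := ((hNAmem _ _).mp ha3NA3).1
    have ha3n0 : a3 ≠ a0 := fun h =>
      hnotNA b3 a0 b0 b1 hb3B hNB0 hb3n0 hb3n1 (h ▸ ha3NA3)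
    have ha3n1 : a3 ≠ a1 := fun h =>
      hnotNA b3 a1 b1 b0 hb3B hNB1 hb3n1 hb3n0 (h ▸ ha3NA3)
    obtain ⟨b4, hb34, hNB3⟩ := other_elt (hNBcard a3 ha3A) (hswapBA _ _ hb3B ha3NA3)
    have hb4NB3 : b4 ∈ NB a3 := by rw [hNB3]; exact Set.mem_insert_of_mem _ rfl
    have hb4B : b4 ∈ B := ((hNBmem _ _).mp hb4NB3).1
    have hb4n0 : b4 ≠ b0 := fun h =>
      hnotNB a3 b0 a0 a1 ha3A hNA0 ha3n0 ha3n1 (h ▸ hb4NB3)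
    have hb4n1 : b4 ≠ b1 := fun h =>
      hnotNB a3 b1 a0 a1 ha3A hNA1 ha3n0 ha3n1 (h ▸ hb4NB3)
    have hsub4 : ({a0, a1, a2, a3} : Set V) ⊆ A := by
      intro z hz
      simp only [Set.mem_insert_iff, Set.mem_singleton_iff] at hz
      rcases hz with rfl | rfl | rfl | rfl <;> assumption
    have hA4card : (A \ {a0, a1, a2, a3}).ncard = 1 := by
      rw [Set.ncard_diff hsub4, hA5,
        ncard4 ha01 ha2n.1.symm ha3n0.symm ha2n.2.symm ha3n1.symm ha23]
    by_cases hd2 : b4 = b2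
    · -- impossible: would leave a single vertex of degree two
      exfalso
      subst b4
      have hNA2 : NA b2 = {a2, a3} :=
        eq_pair' (hNAcard b2 hb2B) (hswapAB _ _ ha2A hb2NB2) (hswapAB _ _ ha3A hb4NB3) ha23
      obtain ⟨a4, ha4mem⟩ : (A \ {a0, a1, a2, a3}).Nonempty :=
        Set.nonempty_of_ncard_ne_zero (by rw [hA4card]; norm_num)
      have ha4A : a4 ∈ A := ha4mem.1
      have ha4n : a4 ≠ a0 ∧ a4 ≠ a1 ∧ a4 ≠ a2 ∧ a4 ≠ a3 := by
        have := ha4mem.2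
        simp only [Set.mem_insert_iff, Set.mem_singleton_iff] at this
        tauto
      have hsubBB : ({b0, b1, b2, b3} : Set V) ⊆ B := by
        intro z hz
        simp only [Set.mem_insert_iff, Set.mem_singleton_iff] at hz
        rcases hz with rfl | rfl | rfl | rfl <;> assumption
      have hsubB4 : NB a4 ⊆ B \ {b0, b1, b2, b3} := by
        intro x hx
        refine ⟨((hNBmem _ _).mp hx).1, ?_⟩
        simp only [Set.mem_insert_iff, Set.mem_singleton_iff]
        rintro (rfl | rfl | rfl | rfl)
        · exact hnotNB a4 x a0 a1 ha4A hNA0 ha4n.1 ha4n.2.1 hx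
        · exact hnotNB a4 x a0 a1 ha4A hNA1 ha4n.1 ha4n.2.1 hx
        · exact hnotNB a4 x a2 a3 ha4A hNA2 ha4n.2.2.1 ha4n.2.2.2 hx
        · exact hnotNB a4 x a2 a3 ha4A hNA3 ha4n.2.2.1 ha4n.2.2.2 hx
      have hcontr := Set.ncard_le_ncard hsubB4 (Set.toFinite _)
      rw [hNBcard a4 ha4A, Set.ncard_diff hsubBB, hB5,
        ncard4 hb01 hb2n0.symm hb3n0.symm hb2n1.symm hb3n1.symm hb23] at hcontr
      norm_num at hcontr
    · -- Q₁₀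
      obtain ⟨a4, ha24, hNA2⟩ := other_elt (hNAcard b2 hb2B) (hswapAB _ _ ha2A hb2NB2)
      have ha4NA2 : a4 ∈ NA b2 := by rw [hNA2]; exact Set.mem_insert_of_mem _ rfl
      have ha4A : a4 ∈ A := ((hNAmem _ _).mp ha4NA2).1
      have ha4n0 : a4 ≠ a0 := fun h =>
        hnotNA b2 a0 b0 b1 hb2B hNB0 hb2n0 hb2n1 (h ▸ ha4NA2)
      have ha4n1 : a4 ≠ a1 := fun h =>
        hnotNA b2 a1 b1 b0 hb2B hNB1 hb2n1 hb2n0 (h ▸ ha4NA2)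
      have hb24 : b2 ≠ b4 := fun h => hd2 h.symm
      have ha4n3 : a4 ≠ a3 := fun h =>
        hnotNA b2 a3 b3 b4 hb2B hNB3 hb23 hb24 (h ▸ ha4NA2)
      obtain ⟨z, ha3z, hNA4⟩ := other_elt (hNAcard b4 hb4B) (hswapAB _ _ ha3A hb4NB3)
      have hzNA4 : z ∈ NA b4 := by rw [hNA4]; exact Set.mem_insert_of_mem _ rfl
      have hzA : z ∈ A := ((hNAmem _ _).mp hzNA4).1
      have hzn0 : z ≠ a0 := fun h =>
        hnotNA b4 a0 b0 b1 hb4B hNB0 hb4n0 hb4n1 (h ▸ hzNA4)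
      have hzn1 : z ≠ a1 := fun h =>
        hnotNA b4 a1 b1 b0 hb4B hNB1 hb4n1 hb4n0 (h ▸ hzNA4)
      have hzn2 : z ≠ a2 := fun h =>
        hnotNA b4 a2 b2 b3 hb4B hNB2 hb24.symm hb34.symm (h ▸ hzNA4)
      have hz4 : z = a4 :=
        one_elt hA4card ⟨hzA, by simp [hzn0, hzn1, hzn2, ha3z.symm]⟩
          ⟨ha4A, by simp [ha4n0, ha4n1, ha24.symm, ha4n3]⟩
      subst z
      have hNB4 : NB a4 = {b2, b4} :=
        eq_pair' (hNBcard a4 hzA) (hswapBA _ _ hb2B ha4NA2) (hswapBA _ _ hb4B hzNA4) hb24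
      have hsubA5 : ({a0, a1, a2, a3, a4} : Set V) ⊆ A := by
        intro w hw
        simp only [Set.mem_insert_iff, Set.mem_singleton_iff] at hw
        rcases hw with rfl | rfl | rfl | rfl | rfl <;> assumption
      have hAeq : A = {a0, a1, a2, a3, a4} :=
        (Set.eq_of_subset_of_ncard_le hsubA5 (by
          rw [hA5, ncard5 ha01 ha2n.1.symm ha3n0.symm ha4n0.symm ha2n.2.symm ha3n1.symm
            ha4n1.symm ha23 ha24 ha4n3.symm])).symm
      have hsubB5 : ({b0, b1, b2, b3, b4} : Set V) ⊆ B := by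
        intro w hw
        simp only [Set.mem_insert_iff, Set.mem_singleton_iff] at hw
        rcases hw with rfl | rfl | rfl | rfl | rfl <;> assumption
      have hBeq : B = {b0, b1, b2, b3, b4} :=
        (Set.eq_of_subset_of_ncard_le hsubB5 (by
          rw [hB5, ncard5 hb01 hb2n0.symm hb3n0.symm hb4n0.symm hb2n1.symm hb3n1.symm
            hb4n1.symm hb23 hb24 hb34])).symm
      have hQ0 : ∀ b ∈ B, (¬ G.Adj a0 b ↔ (b = b0 ∨ b = b1)) := by
        intro b hb
        rw [hNiff a0 b hb, hNB0]
        simp only [Set.mem_insert_iff, Set.mem_singleton_iff]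
      have hQ1 : ∀ b ∈ B, (¬ G.Adj a1 b ↔ (b = b0 ∨ b = b1)) := by
        intro b hb
        rw [hNiff a1 b hb, hNB1]
        simp only [Set.mem_insert_iff, Set.mem_singleton_iff]
        tauto
      have hQ2 : ∀ b ∈ B, (¬ G.Adj a2 b ↔ (b = b2 ∨ b = b3)) := by
        intro b hb
        rw [hNiff a2 b hb, hNB2]
        simp only [Set.mem_insert_iff, Set.mem_singleton_iff]
      have hQ3 : ∀ b ∈ B, (¬ G.Adj a3 b ↔ (b = b3 ∨ b = b4)) := by
        intro b hb
        rw [hNiff a3 b hb, hNB3]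
        simp only [Set.mem_insert_iff, Set.mem_singleton_iff]
      have hQ4 : ∀ b ∈ B, (¬ G.Adj a4 b ↔ (b = b2 ∨ b = b4)) := by
        intro b hb
        rw [hNiff a4 b hb, hNB4]
        simp only [Set.mem_insert_iff, Set.mem_singleton_iff]
      exact Qcase G A B hdis hcross hcard a0 a1 a2 a3 a4 b0 b1 b2 b3 b4 hAeq hBeq
        ha01 ha2n.1.symm ha3n0.symm ha4n0.symm ha2n.2.symm ha3n1.symm ha4n1.symm
        ha23 ha24 ha4n3.symm
        hb01 hb2n0.symm hb3n0.symm hb4n0.symm hb2n1.symm hb3n1.symm hb4n1.symm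
        hb23 hb24 hb34
        hQ0 hQ1 hQ2 hQ3 hQ4
  · -- b2 ≠ b0 : the cycle through a0 continues
    have hb2n0 : b2 ≠ b0 := hc0
    obtain ⟨a2, ha12', hNA2⟩ := other_elt (hNAcard b2 hb2B) (hswapAB _ _ ha1A hb2NB1)
    have ha2NA2 : a2 ∈ NA b2 := by rw [hNA2]; exact Set.mem_insert_of_mem _ rfl
    have ha2A : a2 ∈ A := ((hNAmem _ _).mp ha2NA2).1
    have ha2n0 : a2 ≠ a0 := fun h =>
      hnotNA b2 a0 b0 b1 hb2B hNB0 hb2n0 hb12.symm (h ▸ ha2NA2)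
    obtain ⟨b3, hb23, hNB2⟩ := other_elt (hNBcard a2 ha2A) (hswapBA _ _ hb2B ha2NA2)
    have hb3NB2 : b3 ∈ NB a2 := by rw [hNB2]; exact Set.mem_insert_of_mem _ rfl
    have hb3B : b3 ∈ B := ((hNBmem _ _).mp hb3NB2).1
    have hb3n1 : b3 ≠ b1 := fun h =>
      hnotNB a2 b1 a0 a1 ha2A hNA1 ha2n0 ha12'.symm (h ▸ hb3NB2)
    by_cases he : b3 = b0
    · -- the 6-cycle a0 b1 a1 b2 a2 b0 closes; the remaining four vertices form a 4-cycle
      subst b3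
      have hNA0 : NA b0 = {a0, a2} :=
        eq_pair' (hNAcard b0 hb0B) (hswapAB _ _ ha0A hb0NB0) (hswapAB _ _ ha2A hb3NB2)
          ha2n0.symm
      have hb02 : b0 ≠ b2 := hb2n0.symm
      have hsubB3 : ({b0, b1, b2} : Set V) ⊆ B := by
        intro w hw
        simp only [Set.mem_insert_iff, Set.mem_singleton_iff] at hw
        rcases hw with rfl | rfl | rfl <;> assumption
      have hB3card : (B \ {b0, b1, b2}).ncard = 2 := by
        rw [Set.ncard_diff hsubB3, hB5, ncard3 hb01 hb02 hb12]
      obtain ⟨b3, b4, hb34, hB3eq⟩ := Set.ncard_eq_two.mp hB3card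
      have hb3mem : b3 ∈ B \ ({b0, b1, b2} : Set V) := by
        rw [hB3eq]; exact Set.mem_insert _ _
      have hb4mem : b4 ∈ B \ ({b0, b1, b2} : Set V) := by
        rw [hB3eq]; exact Set.mem_insert_of_mem _ rfl
      have hb3B' : b3 ∈ B := hb3mem.1
      have hb4B : b4 ∈ B := hb4mem.1
      have hb3n : b3 ≠ b0 ∧ b3 ≠ b1 ∧ b3 ≠ b2 := by
        have := hb3mem.2
        simp only [Set.mem_insert_iff, Set.mem_singleton_iff] at this
        tauto
      have hb4n : b4 ≠ b0 ∧ b4 ≠ b1 ∧ b4 ≠ b2 := by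
        have := hb4mem.2
        simp only [Set.mem_insert_iff, Set.mem_singleton_iff] at this
        tauto
      have hsubA3 : ({a0, a1, a2} : Set V) ⊆ A := by
        intro w hw
        simp only [Set.mem_insert_iff, Set.mem_singleton_iff] at hw
        rcases hw with rfl | rfl | rfl <;> assumption
      have hA3card : (A \ {a0, a1, a2}).ncard = 2 := by
        rw [Set.ncard_diff hsubA3, hA5, ncard3 ha01 ha2n0.symm ha12']
      obtain ⟨a3, a4, ha34, hA3eq⟩ := Set.ncard_eq_two.mp hA3card
      have ha3mem : a3 ∈ A \ ({a0, a1, a2} : Set V) := by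
        rw [hA3eq]; exact Set.mem_insert _ _
      have ha4mem : a4 ∈ A \ ({a0, a1, a2} : Set V) := by
        rw [hA3eq]; exact Set.mem_insert_of_mem _ rfl
      have ha3A : a3 ∈ A := ha3mem.1
      have ha4A : a4 ∈ A := ha4mem.1
      have ha3n : a3 ≠ a0 ∧ a3 ≠ a1 ∧ a3 ≠ a2 := by
        have := ha3mem.2
        simp only [Set.mem_insert_iff, Set.mem_singleton_iff] at this
        tauto
      have ha4n : a4 ≠ a0 ∧ a4 ≠ a1 ∧ a4 ≠ a2 := by
        have := ha4mem.2
        simp only [Set.mem_insert_iff, Set.mem_singleton_iff] at this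
        tauto
      have hsubNB3 : NB a3 ⊆ B \ {b0, b1, b2} := by
        intro x hx
        refine ⟨((hNBmem _ _).mp hx).1, ?_⟩
        simp only [Set.mem_insert_iff, Set.mem_singleton_iff]
        rintro (rfl | rfl | rfl)
        · exact hnotNB a3 x a0 a2 ha3A hNA0 ha3n.1 ha3n.2.2 hx
        · exact hnotNB a3 x a0 a1 ha3A hNA1 ha3n.1 ha3n.2.1 hx
        · exact hnotNB a3 x a1 a2 ha3A hNA2 ha3n.2.1 ha3n.2.2 hx
      have hNB3 : NB a3 = {b3, b4} :=
        (Set.eq_of_subset_of_ncard_le hsubNB3 (by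
          rw [hB3card, hNBcard a3 ha3A])).trans hB3eq
      have hsubNB4 : NB a4 ⊆ B \ {b0, b1, b2} := by
        intro x hx
        refine ⟨((hNBmem _ _).mp hx).1, ?_⟩
        simp only [Set.mem_insert_iff, Set.mem_singleton_iff]
        rintro (rfl | rfl | rfl)
        · exact hnotNB a4 x a0 a2 ha4A hNA0 ha4n.1 ha4n.2.2 hx
        · exact hnotNB a4 x a0 a1 ha4A hNA1 ha4n.1 ha4n.2.1 hx
        · exact hnotNB a4 x a1 a2 ha4A hNA2 ha4n.2.1 ha4n.2.2 hx
      have hNB4 : NB a4 = {b3, b4} :=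
        (Set.eq_of_subset_of_ncard_le hsubNB4 (by
          rw [hB3card, hNBcard a4 ha4A])).trans hB3eq
      have hsubA5 : ({a3, a4, a0, a1, a2} : Set V) ⊆ A := by
        intro w hw
        simp only [Set.mem_insert_iff, Set.mem_singleton_iff] at hw
        rcases hw with rfl | rfl | rfl | rfl | rfl <;> assumption
      have hAeq : A = {a3, a4, a0, a1, a2} :=
        (Set.eq_of_subset_of_ncard_le hsubA5 (by
          rw [hA5, ncard5 ha34 ha3n.1 ha3n.2.1 ha3n.2.2 ha4n.1 ha4n.2.1 ha4n.2.2
            ha01 ha2n0.symm ha12'])).symm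
      have hsubB5 : ({b3, b4, b0, b1, b2} : Set V) ⊆ B := by
        intro w hw
        simp only [Set.mem_insert_iff, Set.mem_singleton_iff] at hw
        rcases hw with rfl | rfl | rfl | rfl | rfl <;> assumption
      have hBeq : B = {b3, b4, b0, b1, b2} :=
        (Set.eq_of_subset_of_ncard_le hsubB5 (by
          rw [hB5, ncard5 hb34 hb3n.1 hb3n.2.1 hb3n.2.2 hb4n.1 hb4n.2.1 hb4n.2.2
            hb01 hb02 hb12])).symm
      have hQ0 : ∀ b ∈ B, (¬ G.Adj a3 b ↔ (b = b3 ∨ b = b4)) := by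
        intro b hb
        rw [hNiff a3 b hb, hNB3]
        simp only [Set.mem_insert_iff, Set.mem_singleton_iff]
      have hQ1 : ∀ b ∈ B, (¬ G.Adj a4 b ↔ (b = b3 ∨ b = b4)) := by
        intro b hb
        rw [hNiff a4 b hb, hNB4]
        simp only [Set.mem_insert_iff, Set.mem_singleton_iff]
      have hQ2 : ∀ b ∈ B, (¬ G.Adj a0 b ↔ (b = b0 ∨ b = b1)) := by
        intro b hb
        rw [hNiff a0 b hb, hNB0]
        simp only [Set.mem_insert_iff, Set.mem_singleton_iff]
      have hQ3 : ∀ b ∈ B, (¬ G.Adj a1 b ↔ (b = b1 ∨ b = b2)) := by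
        intro b hb
        rw [hNiff a1 b hb, hNB1]
        simp only [Set.mem_insert_iff, Set.mem_singleton_iff]
      have hQ4 : ∀ b ∈ B, (¬ G.Adj a2 b ↔ (b = b0 ∨ b = b2)) := by
        intro b hb
        rw [hNiff a2 b hb, hNB2]
        simp only [Set.mem_insert_iff, Set.mem_singleton_iff]
        tauto
      exact Qcase G A B hdis hcross hcard a3 a4 a0 a1 a2 b3 b4 b0 b1 b2 hAeq hBeq
        ha34 ha3n.1 ha3n.2.1 ha3n.2.2 ha4n.1 ha4n.2.1 ha4n.2.2 ha01 ha2n0.symm ha12'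
        hb34 hb3n.1 hb3n.2.1 hb3n.2.2 hb4n.1 hb4n.2.1 hb4n.2.2 hb01 hb02 hb12
        hQ0 hQ1 hQ2 hQ3 hQ4
    · -- b3 is a new vertex
      have hb3n0 : b3 ≠ b0 := he
      obtain ⟨a3, ha23', hNA3⟩ := other_elt (hNAcard b3 hb3B) (hswapAB _ _ ha2A hb3NB2)
      have ha3NA3 : a3 ∈ NA b3 := by rw [hNA3]; exact Set.mem_insert_of_mem _ rfl
      have ha3A : a3 ∈ A := ((hNAmem _ _).mp ha3NA3).1
      have ha3n0 : a3 ≠ a0 := fun h =>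
        hnotNA b3 a0 b0 b1 hb3B hNB0 hb3n0 hb3n1 (h ▸ ha3NA3)
      have ha3n1 : a3 ≠ a1 := fun h =>
        hnotNA b3 a1 b1 b2 hb3B hNB1 hb3n1 hb23.symm (h ▸ ha3NA3)
      obtain ⟨b4, hb34, hNB3⟩ := other_elt (hNBcard a3 ha3A) (hswapBA _ _ hb3B ha3NA3)
      have hb4NB3 : b4 ∈ NB a3 := by rw [hNB3]; exact Set.mem_insert_of_mem _ rfl
      have hb4B : b4 ∈ B := ((hNBmem _ _).mp hb4NB3).1
      have hb4n1 : b4 ≠ b1 := fun h =>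
        hnotNB a3 b1 a0 a1 ha3A hNA1 ha3n0 ha3n1 (h ▸ hb4NB3)
      have hb4n2 : b4 ≠ b2 := fun h =>
        hnotNB a3 b2 a1 a2 ha3A hNA2 ha3n1 ha23'.symm (h ▸ hb4NB3)
      have hsub4 : ({a0, a1, a2, a3} : Set V) ⊆ A := by
        intro w hw
        simp only [Set.mem_insert_iff, Set.mem_singleton_iff] at hw
        rcases hw with rfl | rfl | rfl | rfl <;> assumption
      have hA4card : (A \ {a0, a1, a2, a3}).ncard = 1 := by
        rw [Set.ncard_diff hsub4, hA5,
          ncard4 ha01 ha2n0.symm ha3n0.symm ha12' ha3n1.symm ha23']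
      by_cases hg : b4 = b0
      · -- impossible: the 8-cycle would close leaving a single vertex of degree two
        exfalso
        subst b4
        have hNA0 : NA b0 = {a0, a3} :=
          eq_pair' (hNAcard b0 hb0B) (hswapAB _ _ ha0A hb0NB0) (hswapAB _ _ ha3A hb4NB3)
            ha3n0.symm
        obtain ⟨a4, ha4mem⟩ : (A \ {a0, a1, a2, a3}).Nonempty :=
          Set.nonempty_of_ncard_ne_zero (by rw [hA4card]; norm_num)
        have ha4A : a4 ∈ A := ha4mem.1
        have ha4n : a4 ≠ a0 ∧ a4 ≠ a1 ∧ a4 ≠ a2 ∧ a4 ≠ a3 := by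
          have := ha4mem.2
          simp only [Set.mem_insert_iff, Set.mem_singleton_iff] at this
          tauto
        have hsubBB : ({b0, b1, b2, b3} : Set V) ⊆ B := by
          intro w hw
          simp only [Set.mem_insert_iff, Set.mem_singleton_iff] at hw
          rcases hw with rfl | rfl | rfl | rfl <;> assumption
        have hsubB4 : NB a4 ⊆ B \ {b0, b1, b2, b3} := by
          intro x hx
          refine ⟨((hNBmem _ _).mp hx).1, ?_⟩
          simp only [Set.mem_insert_iff, Set.mem_singleton_iff]
          rintro (rfl | rfl | rfl | rfl)
          · exact hnotNB a4 x a0 a3 ha4A hNA0 ha4n.1 ha4n.2.2.2 hx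
          · exact hnotNB a4 x a0 a1 ha4A hNA1 ha4n.1 ha4n.2.1 hx
          · exact hnotNB a4 x a1 a2 ha4A hNA2 ha4n.2.1 ha4n.2.2.1 hx
          · exact hnotNB a4 x a2 a3 ha4A hNA3 ha4n.2.2.1 ha4n.2.2.2 hx
        have hcontr := Set.ncard_le_ncard hsubB4 (Set.toFinite _)
        rw [hNBcard a4 ha4A, Set.ncard_diff hsubBB, hB5,
          ncard4 hb01 hb2n0.symm hb3n0.symm hb12 hb3n1.symm hb23] at hcontr
        norm_num at hcontr
      · -- the 10-cycle: Möbius ladder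
        have hb4n0 : b4 ≠ b0 := hg
        obtain ⟨a4, ha04', hNA0⟩ := other_elt (hNAcard b0 hb0B) (hswapAB _ _ ha0A hb0NB0)
        have ha4NA0 : a4 ∈ NA b0 := by rw [hNA0]; exact Set.mem_insert_of_mem _ rfl
        have ha4A : a4 ∈ A := ((hNAmem _ _).mp ha4NA0).1
        have ha4n1 : a4 ≠ a1 := fun h =>
          hnotNA b0 a1 b1 b2 hb0B hNB1 hb01 hb2n0.symm (h ▸ ha4NA0)
        have ha4n2 : a4 ≠ a2 := fun h =>
          hnotNA b0 a2 b2 b3 hb0B hNB2 hb2n0.symm hb3n0.symm (h ▸ ha4NA0)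
        have ha4n3 : a4 ≠ a3 := fun h =>
          hnotNA b0 a3 b3 b4 hb0B hNB3 hb3n0.symm hb4n0.symm (h ▸ ha4NA0)
        obtain ⟨z, ha3z, hNA4⟩ := other_elt (hNAcard b4 hb4B) (hswapAB _ _ ha3A hb4NB3)
        have hzNA4 : z ∈ NA b4 := by rw [hNA4]; exact Set.mem_insert_of_mem _ rfl
        have hzA : z ∈ A := ((hNAmem _ _).mp hzNA4).1
        have hzn0 : z ≠ a0 := fun h =>
          hnotNA b4 a0 b0 b1 hb4B hNB0 hb4n0 hb4n1 (h ▸ hzNA4)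
        have hzn1 : z ≠ a1 := fun h =>
          hnotNA b4 a1 b1 b2 hb4B hNB1 hb4n1 hb4n2 (h ▸ hzNA4)
        have hzn2 : z ≠ a2 := fun h =>
          hnotNA b4 a2 b2 b3 hb4B hNB2 hb4n2 hb34.symm (h ▸ hzNA4)
        have hz4 : z = a4 :=
          one_elt hA4card ⟨hzA, by simp [hzn0, hzn1, hzn2, ha3z.symm]⟩
            ⟨ha4A, by simp [ha04'.symm, ha4n1, ha4n2, ha4n3]⟩
        subst z
        have hNB4 : NB a4 = {b0, b4} :=
          eq_pair' (hNBcard a4 ha4A) (hswapBA _ _ hb0B ha4NA0) (hswapBA _ _ hb4B hzNA4)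
            hb4n0.symm
        have hsubA5 : ({a0, a1, a2, a3, a4} : Set V) ⊆ A := by
          intro w hw
          simp only [Set.mem_insert_iff, Set.mem_singleton_iff] at hw
          rcases hw with rfl | rfl | rfl | rfl | rfl <;> assumption
        have hAeq : A = {a0, a1, a2, a3, a4} :=
          (Set.eq_of_subset_of_ncard_le hsubA5 (by
            rw [hA5, ncard5 ha01 ha2n0.symm ha3n0.symm ha04' ha12' ha3n1.symm ha4n1.symm
              ha23' ha4n2.symm ha4n3.symm])).symm
        have hsubB5 : ({b0, b1, b2, b3, b4} : Set V) ⊆ B := by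
          intro w hw
          simp only [Set.mem_insert_iff, Set.mem_singleton_iff] at hw
          rcases hw with rfl | rfl | rfl | rfl | rfl <;> assumption
        have hBeq : B = {b0, b1, b2, b3, b4} :=
          (Set.eq_of_subset_of_ncard_le hsubB5 (by
            rw [hB5, ncard5 hb01 hb2n0.symm hb3n0.symm hb4n0.symm hb12 hb3n1.symm
              hb4n1.symm hb23 hb4n2.symm hb34])).symm
        have hQ0 : ∀ b ∈ B, (¬ G.Adj a0 b ↔ (b = b0 ∨ b = b1)) := by
          intro b hb
          rw [hNiff a0 b hb, hNB0]
          simp only [Set.mem_insert_iff, Set.mem_singleton_iff]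
        have hQ1 : ∀ b ∈ B, (¬ G.Adj a1 b ↔ (b = b1 ∨ b = b2)) := by
          intro b hb
          rw [hNiff a1 b hb, hNB1]
          simp only [Set.mem_insert_iff, Set.mem_singleton_iff]
        have hQ2 : ∀ b ∈ B, (¬ G.Adj a2 b ↔ (b = b2 ∨ b = b3)) := by
          intro b hb
          rw [hNiff a2 b hb, hNB2]
          simp only [Set.mem_insert_iff, Set.mem_singleton_iff]
        have hQ3 : ∀ b ∈ B, (¬ G.Adj a3 b ↔ (b = b3 ∨ b = b4)) := by
          intro b hb
          rw [hNiff a3 b hb, hNB3]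
          simp only [Set.mem_insert_iff, Set.mem_singleton_iff]
        have hQ4 : ∀ b ∈ B, (¬ G.Adj a4 b ↔ (b = b0 ∨ b = b4)) := by
          intro b hb
          rw [hNiff a4 b hb, hNB4]
          simp only [Set.mem_insert_iff, Set.mem_singleton_iff]
        exact Mcase G A B hun hdis hcross hcard a0 a1 a2 a3 a4 b0 b1 b2 b3 b4 hAeq hBeq
          ha01 ha2n0.symm ha3n0.symm ha04' ha12' ha3n1.symm ha4n1.symm
          ha23' ha4n2.symm ha4n3.symm
          hb01 hb2n0.symm hb3n0.symm hb4n0.symm hb12 hb3n1.symm hb4n1.symm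
          hb23 hb4n2.symm hb34
          hQ0 hQ1 hQ2 hQ3 hQ4


end MinimalBraces
end
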